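/- arXiv:1209.4559 — 6 statements merged into one kernel-verified Lean document; each statement's English description precedes it below -/
import Mathlib

section
/- Let Γ be an ordered abelian group of finite rank r, regarded as a subgroup of the lexicographic product ℝ^r, so that every monomial is t^α = t_1^{α_1}⋯t_r^{α_r} with α = (α_1,…,α_r), and suppose the coefficient field k contains all the real exponents α_i (e.g. k = ℝ). Then for ANY choice of values d(t_1)/t_1, …, d(t_r)/t_r in k((Γ)), the formulas d(t^α) = t^α(α_1 d(t_1)/t_1 + ⋯ + α_r d(t_r)/t_r) and d(Σ_α a_α t^α) = Σ_α a_α d(t^α) give a well-defined series derivation on k((Γ)): explicitly d(a) = Σ_{i=1}^r (d(t_i)/t_i)·Σ_α (a_α α_i) t^α, and each inner sum is a well-defined element of k((Γ)). -/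
/- Common setting: a generalized series field `k((Γ))`, where the totally ordered abelian
group `Γ` is regarded, via Hahn's embedding theorem, as a subgroup of the Hahn group
`Σ_{φ ∈ Φ} ℝ = HahnSeries Φ ℝ`, and the coefficient field `k` contains the real exponents
(via a ring homomorphism `ι : ℝ →+* k`). -/

open HahnSeries

noncomputable section

/-- Archimedean equivalence on an ordered abelian group. -/
def ArchEquiv {Γ : Type*} [AddCommGroup Γ] [LinearOrder Γ] [IsOrderedAddMonoid Γ] (x y : Γ) : Prop :=
  ∃ n : ℕ, |x| ≤ n • |y| ∧ |y| ≤ n • |x|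

/-- Lexicographic positivity of a (generalized) Hahn series: the leading coefficient is
positive. -/
def LexPos {Φ : Type*} [LinearOrder Φ] {R : Type*} [Zero R] [PartialOrder R]
    (x : HahnSeries Φ R) : Prop :=
  ∃ φ, 0 < x.coeff φ ∧ ∀ ψ, ψ < φ → x.coeff ψ = 0

/-- Lexicographic order relation. -/
def LexLe {Φ : Type*} [LinearOrder Φ] {R : Type*} [AddCommGroup R] [PartialOrder R]
    (x y : HahnSeries Φ R) : Prop :=
  x = y ∨ LexPos (y - x)

/-- The data of Hahn's embedding theorem: `Γ` is (identified with) a subgroup of the Hahn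
group `Σ_{φ ∈ Φ} ℝ` ordered lexicographically, containing the characteristic functions
`1_φ = single φ 1`.  The natural valuation of `γ ∈ Γ` is `(e γ).orderTop`. -/
structure HahnEmbeddingData (Φ : Type*) [LinearOrder Φ]
    (Γ : Type*) [AddCommGroup Γ] [LinearOrder Γ] [IsOrderedAddMonoid Γ] where
  e : Γ →+ HahnSeries Φ ℝ
  inj : Function.Injective e
  ord : ∀ γ : Γ, 0 < γ ↔ LexPos (e γ)
  b : Φ → Γ
  hb : ∀ φ, e (b φ) = HahnSeries.single φ 1

variable {Φ : Type*} [LinearOrder Φ] {Γ : Type*} [AddCommGroup Γ] [LinearOrder Γ] [IsOrderedAddMonoid Γ]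
  {k : Type*} [Field k]

/-- The fundamental monomial `t_φ = t^{1_φ}` in `k((Γ))`. -/
def tmon (H : HahnEmbeddingData Φ Γ) (k : Type*) [Field k] (φ : Φ) : HahnSeries Γ k :=
  HahnSeries.single (H.b φ) 1

/-- The logarithmic derivative `d(t_φ)/t_φ` of the fundamental monomial `t_φ`. -/
def logDer (H : HahnEmbeddingData Φ Γ) (D : HahnSeries Γ k → HahnSeries Γ k) (φ : Φ) :
    HahnSeries Γ k :=
  D (tmon H k φ) * (tmon H k φ)⁻¹

/-- A series derivation on `k((Γ))`: a derivation which is strongly linear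
(`d(Σ a_α t^α) = Σ a_α d(t^α)`, the family being summable) and satisfies the strong
Leibniz rule (`d(t^α) = t^α Σ_φ α_φ d(t_φ)/t_φ`, the family being summable). -/
structure IsSeriesDerivation (H : HahnEmbeddingData Φ Γ) (ι : ℝ →+* k)
    (D : HahnSeries Γ k → HahnSeries Γ k) : Prop where
  map_add : ∀ x y, D (x + y) = D x + D y
  leibniz : ∀ x y, D (x * y) = D x * y + x * D y
  strong_linear : ∀ x : HahnSeries Γ k, ∃ s : SummableFamily Γ k Γ,
    (∀ γ, s γ = x.coeff γ • D (HahnSeries.single γ 1)) ∧ D x = s.hsum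
  strong_leibniz : ∀ γ : Γ, ∃ s : SummableFamily Γ k Φ,
    (∀ φ, s φ = ι ((H.e γ).coeff φ) • (HahnSeries.single γ 1 * logDer H D φ)) ∧
    D (HahnSeries.single γ 1) = s.hsum

/-- (HD1): the valuation ring is `ker d + m_v`. -/
def HDone (D : HahnSeries Γ k → HahnSeries Γ k) : Prop :=
  {x : HahnSeries Γ k | 0 ≤ x.orderTop} =
    {x : HahnSeries Γ k | ∃ c m, D c = 0 ∧ 0 < HahnSeries.orderTop m ∧ x = c + m}

/-- (HD2): l'Hospital's rule. -/
def HDtwo (D : HahnSeries Γ k → HahnSeries Γ k) : Prop :=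
  ∀ a b : HahnSeries Γ k, a ≠ 0 → b ≠ 0 → a.order ≠ 0 → b.order ≠ 0 →
    (a.orderTop ≤ b.orderTop ↔ (D a).orderTop ≤ (D b).orderTop)

/-- (HD3): compatibility of the logarithmic derivative with the valuation. -/
def HDthree (D : HahnSeries Γ k → HahnSeries Γ k) : Prop :=
  ∀ a b : HahnSeries Γ k, a ≠ 0 → b ≠ 0 → |b.order| < |a.order| → 0 < |b.order| →
    (D a * a⁻¹).orderTop ≤ (D b * b⁻¹).orderTop ∧
      ((D a * a⁻¹).orderTop = (D b * b⁻¹).orderTop ↔ ArchEquiv a.order b.order)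

/-- A series derivation of Hardy type on `k((Γ))`. -/
def IsHardySeriesDerivation (H : HahnEmbeddingData Φ Γ) (ι : ℝ →+* k)
    (D : HahnSeries Γ k → HahnSeries Γ k) : Prop :=
  IsSeriesDerivation H ι D ∧ HDone D ∧ HDtwo D ∧ HDthree D

end

noncomputable section MyAux

variable {Γ : Type*} [AddCommGroup Γ] [LinearOrder Γ] [IsOrderedAddMonoid Γ] {k : Type*} [Field k]

/-- Multiply the coefficients of a Hahn series by an additive character. -/
def mulChar (c : Γ →+ k) (a : HahnSeries Γ k) : HahnSeries Γ k where
  coeff γ := a.coeff γ * c γ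
  isPWO_support' := a.isPWO_support.mono (fun γ h => by
    simp only [Function.mem_support] at h ⊢
    exact fun h0 => h (by rw [h0, zero_mul]))

@[simp] lemma mulChar_coeff (c : Γ →+ k) (a : HahnSeries Γ k) (γ : Γ) :
    (mulChar c a).coeff γ = a.coeff γ * c γ := rfl

lemma mulChar_add (c : Γ →+ k) (a b : HahnSeries Γ k) :
    mulChar c (a + b) = mulChar c a + mulChar c b := by
  ext γ; simp [add_mul]

lemma mulChar_single (c : Γ →+ k) (γ : Γ) (r : k) :
    mulChar c (single γ r) = single γ (r * c γ) := by
  ext g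
  by_cases h : g = γ
  · subst h; simp
  · simp [coeff_single, h]

lemma smul_single_one (r : k) (γ : Γ) :
    r • (single γ 1 : HahnSeries Γ k) = single γ r := by
  ext g
  by_cases h : g = γ
  · subst h; simp
  · simp [coeff_single, h]


lemma smul_single' (r s : k) (γ : Γ) :
    r • (single γ s : HahnSeries Γ k) = single γ (r * s) := by
  ext g
  by_cases h : g = γ
  · subst h; simp
  · simp [coeff_single, h]

lemma hsmulMul (r : k) (x y : HahnSeries Γ k) : r • (x * y) = x * (r • y) := by
  rw [← single_zero_mul_eq_smul, ← single_zero_mul_eq_smul, mul_left_comm]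

lemma mulChar_mul (c : Γ →+ k) (x y : HahnSeries Γ k) :
    mulChar c (x * y) = mulChar c x * y + x * mulChar c y := by
  ext γ
  have hx : (mulChar c x).support ⊆ x.support := fun g h => by
    simp only [HahnSeries.mem_support, mulChar_coeff, ne_eq] at h ⊢
    exact fun h0 => h (by rw [h0, zero_mul])
  have hy : (mulChar c y).support ⊆ y.support := fun g h => by
    simp only [HahnSeries.mem_support, mulChar_coeff, ne_eq] at h ⊢
    exact fun h0 => h (by rw [h0, zero_mul])
  rw [coeff_add, coeff_mul_left' x.isPWO_support hx, coeff_mul_right' y.isPWO_support hy,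
    mulChar_coeff, coeff_mul, Finset.sum_mul, ← Finset.sum_add_distrib]
  refine Finset.sum_congr rfl fun ij hij => ?_
  rw [Finset.mem_addAntidiagonal] at hij
  rw [mulChar_coeff, mulChar_coeff, ← hij.2.2, map_add, mul_add]
  ring

/-- The family of single monomials of a Hahn series, a summable family. -/
def singleFam (x : HahnSeries Γ k) : SummableFamily Γ k Γ where
  toFun γ := single γ (x.coeff γ)
  isPWO_iUnion_support' := x.isPWO_support.mono (by
    intro g hg
    simp only [Set.mem_iUnion] at hg
    obtain ⟨γ, hγ⟩ := hg
    simp only [HahnSeries.mem_support, Function.mem_support, ne_eq] at hγ ⊢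
    by_cases h : g = γ
    · subst h; simpa using hγ
    · simp [coeff_single, h] at hγ)
  finite_co_support' g := (Set.finite_singleton g).subset (by
    intro γ hγ
    simp only [Function.mem_support, ne_eq, Set.mem_setOf_eq] at hγ
    by_cases h : g = γ
    · simp [h]
    · simp [coeff_single, h] at hγ)

@[simp] lemma singleFam_apply (x : HahnSeries Γ k) (γ : Γ) :
    singleFam x γ = single γ (x.coeff γ) := rfl

lemma hsum_singleFam (x : HahnSeries Γ k) : (singleFam x).hsum = x := by
  ext g
  rw [SummableFamily.coeff_hsum]
  rw [finsum_eq_single _ g (fun γ hγ => by simp [coeff_single, (Ne.symm hγ)])]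
  simp

end MyAux

/-- in the finite rank case (`Φ = Fin r`), for ANY choice of the logarithmic
derivatives `u i = d(t_i)/t_i` in `k((Γ))`, the strong Leibniz rule and strong linearity
give a well-defined series derivation, explicitly
`d(a) = Σ_{i<r} (d(t_i)/t_i) · Σ_α (a_α α_i) t^α`, each inner sum being a well-defined
element of `k((Γ))` (a summable family). -/
theorem finite_rank_series_derivation {r : ℕ} {Γ : Type*} [AddCommGroup Γ] [LinearOrder Γ] [IsOrderedAddMonoid Γ]
    {k : Type*} [Field k] (H : HahnEmbeddingData (Fin r) Γ) (ι : ℝ →+* k)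
    (u : Fin r → HahnSeries Γ k) :
    ∃ D : HahnSeries Γ k → HahnSeries Γ k,
      IsSeriesDerivation H ι D ∧
      (∀ i : Fin r, D (tmon H k i) = tmon H k i * u i) ∧
      (∀ a : HahnSeries Γ k, ∃ s : Fin r → HahnSeries.SummableFamily Γ k Γ,
        (∀ i γ, s i γ = (a.coeff γ * ι ((H.e γ).coeff i)) • HahnSeries.single γ 1) ∧
        D a = ∑ i : Fin r, u i * (s i).hsum) := by
  classical
  -- the additive characters γ ↦ ι ((H.e γ).coeff i)
  set c : Fin r → (Γ →+ k) := fun i => AddMonoidHom.mk' (fun γ => ι ((H.e γ).coeff i))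
    (fun a b => by show ι ((H.e (a + b)).coeff i) = _; rw [map_add, coeff_add, map_add]) with hc
  -- the derivation
  set D : HahnSeries Γ k → HahnSeries Γ k := fun a => ∑ i, u i * mulChar (c i) a with hD
  have hci : ∀ i γ, c i γ = ι ((H.e γ).coeff i) := fun _ _ => rfl
  have hctmon : ∀ i j : Fin r, c j (H.b i) = if j = i then 1 else 0 := by
    intro i j
    rw [hci, H.hb, coeff_single]
    split_ifs with h
    · exact map_one ι
    · exact map_zero ι
  -- D on single monomials
  have hDsingle : ∀ (γ : Γ) (t : k), D (single γ t) = ∑ i, u i * single γ (t * c i γ) := by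
    intro γ t
    rw [hD]
    exact Finset.sum_congr rfl fun i _ => by rw [mulChar_single]
  have htmon : ∀ i : Fin r, D (tmon H k i) = tmon H k i * u i := by
    intro i
    rw [tmon, hDsingle]
    rw [Fintype.sum_eq_single i (fun j hj => by
      rw [hctmon, if_neg hj, mul_zero, single_eq_zero, mul_zero])]
    rw [hctmon, if_pos rfl, one_mul, mul_comm]
  -- logarithmic derivatives are the u i
  have hlog : ∀ i : Fin r, logDer H D i = u i := by
    intro i
    have h0 : (tmon H k i) ≠ 0 := single_ne_zero one_ne_zero
    rw [logDer, htmon, mul_right_comm, mul_inv_cancel₀ h0, one_mul]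
  refine ⟨D, ⟨?_, ?_, ?_, ?_⟩, htmon, ?_⟩
  · -- map_add
    intro x y
    rw [hD]
    simp only [mulChar_add, mul_add]
    exact Finset.sum_add_distrib
  · -- leibniz
    intro x y
    rw [hD]
    simp only [mulChar_mul, mul_add]
    rw [Finset.sum_add_distrib]
    congr 1
    · rw [Finset.sum_mul]
      exact Finset.sum_congr rfl fun i _ => (mul_assoc _ _ _).symm
    · rw [Finset.mul_sum]
      exact Finset.sum_congr rfl fun i _ => mul_left_comm _ _ _
  · -- strong linearity
    intro x
    refine ⟨∑ i, u i • singleFam (mulChar (c i) x), fun γ => ?_, ?_⟩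
    · have happ : ∀ (F : Fin r → SummableFamily Γ k Γ), (∑ i, F i) γ = ∑ i, F i γ := by
        intro F
        let ev : SummableFamily Γ k Γ →+ HahnSeries Γ k :=
          { toFun := fun s => s γ, map_zero' := rfl, map_add' := fun _ _ => rfl }
        exact map_sum ev F Finset.univ
      rw [happ, hDsingle]
      rw [Finset.smul_sum]
      refine Finset.sum_congr rfl fun i _ => ?_
      rw [SummableFamily.smul_apply, of_symm_smul_of_eq_mul]
      rw [singleFam_apply, mulChar_coeff]
      rw [hsmulMul, smul_single', one_mul]
    · rw [← SummableFamily.lsum_apply, map_sum]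
      simp only [SummableFamily.lsum_apply, SummableFamily.hsum_smul, hsum_singleFam]
      rfl
  · -- strong leibniz
    intro γ
    refine ⟨SummableFamily.ofFinsupp (Finsupp.equivFunOnFinite.symm
      (fun i => ι ((H.e γ).coeff i) • (single γ 1 * logDer H D i))), fun i => ?_, ?_⟩
    · simp [SummableFamily.coe_ofFinsupp]
    · rw [SummableFamily.hsum_ofFinsupp, Finsupp.sum_fintype _ _ (fun _ => rfl)]
      simp only [Finsupp.coe_equivFunOnFinite_symm, id]
      rw [hDsingle]
      refine Finset.sum_congr rfl fun i _ => ?_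
      rw [hlog, one_mul, ← hci, mul_comm ((single γ) (1:k)) (u i), hsmulMul, smul_single', mul_one]
  · -- explicit formula
    intro a
    refine ⟨fun i => singleFam (mulChar (c i) a), fun i γ => ?_, ?_⟩
    · rw [singleFam_apply, mulChar_coeff, hci, smul_single_one]
    · rw [hD]
      exact Finset.sum_congr rfl fun i _ => by rw [hsum_singleFam]
end

section
/- Suppose Γ is a subgroup of the Hahn group Σ_{φ∈Φ} ℝ, that k contains all the real exponents appearing in elements of Γ, and that the ordered set Φ carries a right shift σ: Φ → Φ. Define a map d on the monomials t_φ by d(t_φ)/t_φ := t^{θ_φ} = Π_{n≥1} t_{σ^n(φ)}^{θ_{φ,n}}, where θ_φ = Σ_{n≥1} θ_{φ,n} 1_{σ^n(φ)} ∈ Γ with θ_{φ,n} ∈ ℝ and θ_{φ,1} < 0. Then d extends to a series derivation on k((Γ)) via the strong Leibniz rule and strong linearity; in particular, for every series a = Σ_α a_α t^α, the family (a_α α_φ t^{α+θ_φ})_{α,φ} is summable. -/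
/- Common setting: a generalized series field `k((Γ))`, where the totally ordered abelian
group `Γ` is regarded, via Hahn's embedding theorem, as a subgroup of the Hahn group
`Σ_{φ ∈ Φ} ℝ = HahnSeries Φ ℝ`, and the coefficient field `k` contains the real exponents
(via a ring homomorphism `ι : ℝ →+* k`). -/

open HahnSeries

/-- A right shift on an ordered set: an order preserving map `σ` with `σ φ > φ`. -/
def IsRightShift {Φ : Type*} [Preorder Φ] (σ : Φ → Φ) : Prop :=
  StrictMono σ ∧ ∀ φ, φ < σ φ

namespace RSD

noncomputable section

variable {Φ : Type*} [LinearOrder Φ] {Γ : Type*} [AddCommGroup Γ] [LinearOrder Γ] [IsOrderedAddMonoid Γ]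
  {k : Type*} [Field k]
  (H : HahnEmbeddingData Φ Γ) (ι : ℝ →+* k)
  (σ : Φ → Φ) (θ : Φ → Γ)

section OrderLemmas

variable (hσ : IsRightShift σ)
variable (hsupp : ∀ φ ψ, ψ ∈ (H.e (θ φ)).support → ∃ n : ℕ, 1 ≤ n ∧ ψ = σ^[n] φ)
variable (hneg : ∀ φ, (H.e (θ φ)).coeff (σ φ) < 0)

include hσ in
lemma le_iterate {φ : Φ} {n : ℕ} (hn : 1 ≤ n) : σ φ ≤ σ^[n] φ := by
  induction n with
  | zero => omega
  | succ m ih =>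
    rcases Nat.eq_or_lt_of_le hn with h | h
    · simp [← h]
    · have h1 : 1 ≤ m := by omega
      calc σ φ ≤ σ^[m] φ := ih h1
        _ ≤ σ^[m+1] φ := by
            rw [Function.iterate_succ_apply']
            exact le_of_lt (hσ.2 _)

include hσ hsupp in
lemma theta_coeff_eq_zero {φ : Φ} {q : Φ} (hq : q < σ φ) : (H.e (θ φ)).coeff q = 0 := by
  by_contra h
  obtain ⟨n, hn1, hn2⟩ := hsupp φ q h
  exact absurd (hn2 ▸ hq) (not_lt.mpr (le_iterate σ hσ hn1))

include hσ hsupp hneg in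
lemma theta_strictMono : StrictMono θ := by
  intro ψ φ hlt
  have key : (0 : Γ) < θ φ - θ ψ := by
    rw [H.ord, ]
    refine ⟨σ ψ, ?_, ?_⟩
    · rw [map_sub, HahnSeries.coeff_sub,
        theta_coeff_eq_zero H σ θ hσ hsupp (hσ.1 hlt), zero_sub]
      exact neg_pos.mpr (hneg ψ)
    · intro q hq
      rw [map_sub, HahnSeries.coeff_sub,
        theta_coeff_eq_zero H σ θ hσ hsupp (hq.trans (hσ.1 hlt)),
        theta_coeff_eq_zero H σ θ hσ hsupp hq, sub_zero]
  exact sub_pos.mp key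

include hσ in
lemma vanish_of_nonneg_le {x y : Γ} (hx : 0 ≤ x) (hxy : x ≤ y) {p : Φ}
    (hy : ∀ q, q < p → (H.e y).coeff q = 0) :
    ∀ q, q < p → (H.e x).coeff q = 0 := by
  rcases eq_or_lt_of_le hx with rfl | hx0
  · simp
  obtain ⟨r, hr, hr0⟩ := (H.ord x).mp hx0
  have hpr : p ≤ r := by
    by_contra hc
    push_neg at hc
    rcases eq_or_lt_of_le hxy with rfl | hxy0
    · exact absurd (hy r hc) (ne_of_gt hr)
    obtain ⟨r', hr', hr'0⟩ := (H.ord (y - x)).mp (sub_pos.mpr hxy0)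
    rcases lt_trichotomy r' r with h | h | h
    · rw [map_sub, HahnSeries.coeff_sub, hy r' (h.trans hc), hr0 r' h, sub_zero] at hr'
      exact lt_irrefl 0 hr'
    · subst h
      rw [map_sub, HahnSeries.coeff_sub, hy r' hc] at hr'
      linarith
    · have := hr'0 r h
      rw [map_sub, HahnSeries.coeff_sub, hy r hc, zero_sub] at this
      linarith [neg_eq_zero.mp this]
  exact fun q hq => hr0 q (hq.trans_le hpr)

include hσ hsupp hneg in
/-- Core combinatorial lemma: no bad sequences. -/
lemma no_bad_seq (α : ℕ → Γ) (φs : ℕ → Φ)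
    (hne : ∀ n, (H.e (α n)).coeff (φs n) ≠ 0)
    (hd : ∀ n, φs (n + 1) < φs n)
    (hm : ∀ n, α n ≤ α (n + 1))
    (hle : ∀ n, α (n + 1) - α n ≤ θ (φs n) - θ (φs (n + 1))) : False := by
  have hanti : StrictAnti φs := strictAnti_nat_of_succ_lt hd
  have hvan : ∀ n q, q < σ (φs (n + 1)) → (H.e (α (n + 1) - α n)).coeff q = 0 := by
    intro n q hq
    refine vanish_of_nonneg_le H σ hσ (sub_nonneg.mpr (hm n)) (hle n) ?_ q hq
    intro q' hq'
    rw [map_sub, HahnSeries.coeff_sub,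
      theta_coeff_eq_zero H σ θ hσ hsupp (hq'.trans (hσ.1 (hd n))),
      theta_coeff_eq_zero H σ θ hσ hsupp hq', sub_zero]
  have key : ∀ n m, m ≤ n → (H.e (α m)).coeff (φs n) = (H.e (α 0)).coeff (φs n) := by
    intro n m
    induction m with
    | zero => intro _; rfl
    | succ m ih =>
      intro hmn
      have h1 : α (m + 1) = α m + (α (m + 1) - α m) := by abel
      rw [h1, map_add, HahnSeries.coeff_add, ih (by omega),
        hvan m (φs n) (lt_of_le_of_lt (hanti.antitone hmn) (hσ.2 _)), add_zero]
  have hmem : ∀ n, φs n ∈ (H.e (α 0)).support := by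
    intro n
    have h2 := key n n le_rfl
    simp only [HahnSeries.mem_support, ne_eq]
    rw [← h2]
    exact hne n
  have hwf := (H.e (α 0)).isWF_support
  rw [Set.isWF_iff_no_descending_seq] at hwf
  exact hwf φs hanti hmem

end OrderLemmas

end

end RSD

namespace RSD

noncomputable section

set_option linter.unusedSectionVars false

variable {Φ : Type*} [LinearOrder Φ] {Γ : Type*} [AddCommGroup Γ] [LinearOrder Γ] [IsOrderedAddMonoid Γ]
  {k : Type*} [Field k]
  (H : HahnEmbeddingData Φ Γ) (ι : ℝ →+* k)
  (σ : Φ → Φ) (θ : Φ → Γ)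

section Summability

variable (hσ : IsRightShift σ)
variable (hsupp : ∀ φ ψ, ψ ∈ (H.e (θ φ)).support → ∃ n : ℕ, 1 ≤ n ∧ ψ = σ^[n] φ)
variable (hneg : ∀ φ, (H.e (θ φ)).coeff (σ φ) < 0)

/-- The candidate support set of the derivative of `a`. -/
def Tset (a : HahnSeries Γ k) : Set Γ :=
  {g | ∃ p : Γ × Φ, a.coeff p.1 ≠ 0 ∧ (H.e p.1).coeff p.2 ≠ 0 ∧ p.1 + θ p.2 = g}

/-- The fiber of the support map over `g`. -/
def fiber (a : HahnSeries Γ k) (g : Γ) : Set (Γ × Φ) :=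
  {p | a.coeff p.1 ≠ 0 ∧ (H.e p.1).coeff p.2 ≠ 0 ∧ p.1 + θ p.2 = g}

include hσ hsupp hneg in
lemma isPWO_Tset (a : HahnSeries Γ k) : (Tset H θ a).IsPWO := by
  rw [Set.isPWO_iff_isWF, Set.isWF_iff_no_descending_seq]
  intro f hf hmem
  have hmem' : ∀ n : ℕ, ∃ p : Γ × Φ,
      a.coeff p.1 ≠ 0 ∧ (H.e p.1).coeff p.2 ≠ 0 ∧ p.1 + θ p.2 = f n := fun n => hmem n
  choose p hp1 hp2 hp3 using hmem'
  obtain ⟨g, hg⟩ := a.isPWO_support.exists_monotone_subseq (f := fun n => (p n).1)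
    (fun n => hp1 n)
  set α : ℕ → Γ := fun n => (p (g n)).1 with hα
  set φs : ℕ → Φ := fun n => (p (g n)).2 with hφs
  have hm : ∀ n, α n ≤ α (n + 1) := fun n => hg (by omega : (n:ℕ) ≤ n + 1)
  have hflt : ∀ n, f (g (n + 1)) < f (g n) := fun n => hf (g.strictMono (by omega))
  have hsum : ∀ n, α n + θ (φs n) = f (g n) := fun n => hp3 (g n)
  have hθlt : ∀ n, θ (φs (n + 1)) < θ (φs n) := by
    intro n
    have h1 := hflt n
    rw [← hsum n, ← hsum (n + 1)] at h1
    calc θ (φs (n + 1)) = α (n + 1) + θ (φs (n + 1)) - α (n + 1) := by abel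
      _ < α n + θ (φs n) - α (n + 1) := by exact sub_lt_sub_right h1 _
      _ ≤ α n + θ (φs n) - α n := by exact sub_le_sub_left (by exact hm n) _
      _ = θ (φs n) := by abel
  have hd : ∀ n, φs (n + 1) < φs n := by
    intro n
    by_contra hc
    push_neg at hc
    exact absurd ((theta_strictMono H σ θ hσ hsupp hneg).monotone hc)
      (not_le.mpr (hθlt n))
  refine no_bad_seq H σ θ hσ hsupp hneg α φs (fun n => hp2 (g n)) hd hm ?_
  intro n
  have h1 := hflt n
  rw [← hsum n, ← hsum (n + 1)] at h1
  rw [sub_le_sub_iff]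
  calc α (n + 1) + θ (φs (n + 1)) ≤ α n + θ (φs n) := le_of_lt h1
    _ = θ (φs n) + α n := by abel

include hσ hsupp hneg in
lemma finite_fiber (a : HahnSeries Γ k) (g : Γ) : (fiber H θ a g).Finite := by
  rw [← Set.not_infinite]
  intro hinf
  set emb := hinf.natEmbedding with hemb
  set A : ℕ → Γ := fun n => (emb n : Γ × Φ).1 with hA
  set B : ℕ → Φ := fun n => (emb n : Γ × Φ).2 with hB
  have hmem : ∀ n, (emb n : Γ × Φ) ∈ fiber H θ a g := fun n => (emb n).2
  have hp1 : ∀ n, a.coeff (A n) ≠ 0 := fun n => (hmem n).1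
  have hp2 : ∀ n, (H.e (A n)).coeff (B n) ≠ 0 := fun n => (hmem n).2.1
  have hp3 : ∀ n, A n + θ (B n) = g := fun n => (hmem n).2.2
  have hAinj : Function.Injective A := by
    intro m n h
    have hθ : θ (B m) = θ (B n) := by
      have := (hp3 m).trans (hp3 n).symm
      rw [h] at this
      exact (add_right_injective _ this)
    have hBmn : B m = B n :=
      (theta_strictMono H σ θ hσ hsupp hneg).injective hθ
    have : emb m = emb n := Subtype.ext (Prod.ext h hBmn)
    exact emb.injective this
  obtain ⟨g', hg'⟩ := a.isPWO_support.exists_monotone_subseq (f := A) (fun n => hp1 n)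
  set α : ℕ → Γ := fun n => A (g' n) with hα
  set φs : ℕ → Φ := fun n => B (g' n) with hφs
  have hmono : StrictMono α :=
    hg'.strictMono_of_injective (hAinj.comp g'.injective)
  have hθlt : ∀ n, θ (φs (n + 1)) < θ (φs n) := by
    intro n
    have h1 : α n + θ (φs n) = g := hp3 (g' n)
    have h2 : α (n + 1) + θ (φs (n + 1)) = g := hp3 (g' (n + 1))
    have h3 : α n < α (n + 1) := hmono (by omega)
    calc θ (φs (n + 1)) = α (n + 1) + θ (φs (n + 1)) - α (n + 1) := by abel
      _ = α n + θ (φs n) - α (n + 1) := by rw [h1, h2]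
      _ < α n + θ (φs n) - α n := sub_lt_sub_left h3 _
      _ = θ (φs n) := by abel
  have hd : ∀ n, φs (n + 1) < φs n := by
    intro n
    by_contra hc
    push_neg at hc
    exact absurd ((theta_strictMono H σ θ hσ hsupp hneg).monotone hc)
      (not_le.mpr (hθlt n))
  refine no_bad_seq H σ θ hσ hsupp hneg α φs (fun n => hp2 (g' n)) hd
    (fun n => le_of_lt (hmono (by omega))) ?_
  intro n
  have h1 : α n + θ (φs n) = g := hp3 (g' n)
  have h2 : α (n + 1) + θ (φs (n + 1)) = g := hp3 (g' (n + 1))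
  rw [sub_le_sub_iff]
  rw [add_comm (θ (φs n)) (α n)]
  rw [h2, h1]

end Summability

end

end RSD

namespace RSD

noncomputable section

set_option linter.unusedSectionVars false

open HahnSeries

variable {Φ : Type*} [LinearOrder Φ] {Γ : Type*} [AddCommGroup Γ] [LinearOrder Γ] [IsOrderedAddMonoid Γ]
  {k : Type*} [Field k]
  (H : HahnEmbeddingData Φ Γ) (ι : ℝ →+* k)
  (σ : Φ → Φ) (θ : Φ → Γ)

lemma coeff_mul_single (x : HahnSeries Γ k) (b g : Γ) :
    (x * HahnSeries.single b (1:k)).coeff g = x.coeff (g - b) := by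
  conv_lhs => rw [show g = (g - b) + b by abel]
  rw [HahnSeries.coeff_mul_single_add, mul_one]

lemma Pmem_fiber {a : HahnSeries Γ k} {p : Γ × Φ} {g : Γ}
    (h : ((a.coeff p.1 * ι ((H.e p.1).coeff p.2)) •
      HahnSeries.single (p.1 + θ p.2) (1:k)).coeff g ≠ 0) :
    p ∈ fiber H θ a g := by
  rw [HahnSeries.coeff_smul, smul_eq_mul] at h
  by_cases hg : g = p.1 + θ p.2
  · rw [hg, HahnSeries.coeff_single_same, mul_one] at h
    refine ⟨left_ne_zero_of_mul h, ?_, hg.symm⟩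
    intro hz
    rw [hz, map_zero, mul_zero] at h
    exact h rfl
  · rw [HahnSeries.coeff_single_of_ne hg, mul_zero] at h
    exact absurd rfl h

section Families

variable (hσ : IsRightShift σ)
variable (hsupp : ∀ φ ψ, ψ ∈ (H.e (θ φ)).support → ∃ n : ℕ, 1 ≤ n ∧ ψ = σ^[n] φ)
variable (hneg : ∀ φ, (H.e (θ φ)).coeff (σ φ) < 0)

/-- The doubly-indexed summable family `(a_α α_φ t^{α+θ_φ})`. -/
def Pfam (a : HahnSeries Γ k) : SummableFamily Γ k (Γ × Φ) where
  toFun p := (a.coeff p.1 * ι ((H.e p.1).coeff p.2)) •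
    HahnSeries.single (p.1 + θ p.2) (1:k)
  isPWO_iUnion_support' := by
    refine (isPWO_Tset H σ θ hσ hsupp hneg a).mono ?_
    intro g hg
    simp only [Set.mem_iUnion, HahnSeries.mem_support] at hg
    obtain ⟨p, hp⟩ := hg
    obtain ⟨h1, h2, h3⟩ := Pmem_fiber H ι θ hp
    exact ⟨p, h1, h2, h3⟩
  finite_co_support' g :=
    (finite_fiber H σ θ hσ hsupp hneg a g).subset
      (fun p hp => Pmem_fiber H ι θ hp)

@[simp] lemma Pfam_apply (a : HahnSeries Γ k) (p : Γ × Φ) :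
    Pfam H ι σ θ hσ hsupp hneg a p =
      (a.coeff p.1 * ι ((H.e p.1).coeff p.2)) •
        HahnSeries.single (p.1 + θ p.2) (1:k) := rfl

/-- The coefficientwise multiplier `δ_φ`. -/
def delta (φ : Φ) (x : HahnSeries Γ k) : HahnSeries Γ k where
  coeff γ := ι ((H.e γ).coeff φ) * x.coeff γ
  isPWO_support' := x.isPWO_support'.mono (fun γ hγ => by
    simp only [Function.mem_support] at hγ ⊢
    exact right_ne_zero_of_mul hγ)

@[simp] lemma delta_coeff (φ : Φ) (x : HahnSeries Γ k) (γ : Γ) :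
    (delta H ι φ x).coeff γ = ι ((H.e γ).coeff φ) * x.coeff γ := rfl

lemma colfun_mem_fiber {a : HahnSeries Γ k} {φ : Φ} {g : Γ}
    (h : (delta H ι φ a * HahnSeries.single (θ φ) (1:k)).coeff g ≠ 0) :
    ((g - θ φ, φ) : Γ × Φ) ∈ fiber H θ a g := by
  rw [coeff_mul_single, delta_coeff] at h
  refine ⟨right_ne_zero_of_mul h, ?_, sub_add_cancel g (θ φ)⟩
  intro hz
  rw [hz, map_zero, zero_mul] at h
  exact h rfl

/-- The column family `φ ↦ δ_φ(a) t^{θ_φ}`. -/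
def colSF (a : HahnSeries Γ k) : SummableFamily Γ k Φ where
  toFun φ := delta H ι φ a * HahnSeries.single (θ φ) (1:k)
  isPWO_iUnion_support' := by
    refine (isPWO_Tset H σ θ hσ hsupp hneg a).mono ?_
    intro g hg
    simp only [Set.mem_iUnion, HahnSeries.mem_support] at hg
    obtain ⟨φ, hφ⟩ := hg
    obtain ⟨h1, h2, h3⟩ := colfun_mem_fiber H ι θ hφ
    exact ⟨(g - θ φ, φ), h1, h2, h3⟩
  finite_co_support' g := by
    have hinj : Function.Injective (fun ψ : Φ => ((g - θ ψ, ψ) : Γ × Φ)) :=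
      fun x y h => congrArg Prod.snd h
    refine ((finite_fiber H σ θ hσ hsupp hneg a g).preimage hinj.injOn).subset ?_
    intro φ hφ
    exact colfun_mem_fiber H ι θ hφ

@[simp] lemma colSF_apply (a : HahnSeries Γ k) (φ : Φ) :
    colSF H ι σ θ hσ hsupp hneg a φ = delta H ι φ a * HahnSeries.single (θ φ) (1:k) := rfl

/-- The `γ`-th row family `φ ↦ a_γ γ_φ t^{γ+θ_φ}`. -/
def rowSF (a : HahnSeries Γ k) (γ : Γ) : SummableFamily Γ k Φ where
  toFun φ := (a.coeff γ * ι ((H.e γ).coeff φ)) • HahnSeries.single (γ + θ φ) (1:k)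
  isPWO_iUnion_support' := by
    refine (isPWO_Tset H σ θ hσ hsupp hneg a).mono ?_
    intro g hg
    simp only [Set.mem_iUnion, HahnSeries.mem_support] at hg
    obtain ⟨φ, hφ⟩ := hg
    obtain ⟨h1, h2, h3⟩ := Pmem_fiber H ι θ (p := (γ, φ)) hφ
    exact ⟨(γ, φ), h1, h2, h3⟩
  finite_co_support' g := by
    have hinj : Function.Injective (fun ψ : Φ => ((γ, ψ) : Γ × Φ)) :=
      fun x y h => congrArg Prod.snd h
    refine ((finite_fiber H σ θ hσ hsupp hneg a g).preimage hinj.injOn).subset ?_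
    intro φ hφ
    exact Pmem_fiber H ι θ (p := (γ, φ)) hφ

@[simp] lemma rowSF_apply (a : HahnSeries Γ k) (γ : Γ) (φ : Φ) :
    rowSF H ι σ θ hσ hsupp hneg a γ φ =
      (a.coeff γ * ι ((H.e γ).coeff φ)) • HahnSeries.single (γ + θ φ) (1:k) := rfl

/-- The family of row sums. -/
def rowFam (a : HahnSeries Γ k) : SummableFamily Γ k Γ where
  toFun γ := (rowSF H ι σ θ hσ hsupp hneg a γ).hsum
  isPWO_iUnion_support' := by
    refine (isPWO_Tset H σ θ hσ hsupp hneg a).mono ?_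
    intro g hg
    simp only [Set.mem_iUnion, HahnSeries.mem_support] at hg
    obtain ⟨γ, hγ⟩ := hg
    rw [SummableFamily.coeff_hsum] at hγ
    have : ∃ φ, ((rowSF H ι σ θ hσ hsupp hneg a γ) φ).coeff g ≠ 0 := by
      by_contra hc
      push_neg at hc
      exact hγ (finsum_eq_zero_of_forall_eq_zero hc)
    obtain ⟨φ, hφ⟩ := this
    obtain ⟨h1, h2, h3⟩ := Pmem_fiber H ι θ (p := (γ, φ)) hφ
    exact ⟨(γ, φ), h1, h2, h3⟩
  finite_co_support' g := by
    refine ((finite_fiber H σ θ hσ hsupp hneg a g).image Prod.fst).subset ?_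
    intro γ hγ
    simp only [Set.mem_setOf_eq, SummableFamily.coeff_hsum] at hγ
    have : ∃ φ, ((rowSF H ι σ θ hσ hsupp hneg a γ) φ).coeff g ≠ 0 := by
      by_contra hc
      push_neg at hc
      exact hγ (finsum_eq_zero_of_forall_eq_zero hc)
    obtain ⟨φ, hφ⟩ := this
    exact ⟨(γ, φ), Pmem_fiber H ι θ (p := (γ, φ)) hφ, rfl⟩

@[simp] lemma rowFam_apply (a : HahnSeries Γ k) (γ : Γ) :
    rowFam H ι σ θ hσ hsupp hneg a γ = (rowSF H ι σ θ hσ hsupp hneg a γ).hsum := rfl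

lemma Psupport_finite (a : HahnSeries Γ k) (g : Γ) :
    (Function.support fun p : Γ × Φ =>
      (Pfam H ι σ θ hσ hsupp hneg a p).coeff g).Finite :=
  (finite_fiber H σ θ hσ hsupp hneg a g).subset
    (fun p hp => Pmem_fiber H ι θ hp)

lemma hsum_rowFam (a : HahnSeries Γ k) :
    (rowFam H ι σ θ hσ hsupp hneg a).hsum = (Pfam H ι σ θ hσ hsupp hneg a).hsum := by
  ext g
  rw [SummableFamily.coeff_hsum, SummableFamily.coeff_hsum,
    finsum_curry _ (Psupport_finite H ι σ θ hσ hsupp hneg a g)]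
  refine finsum_congr fun γ => ?_
  rw [rowFam_apply, SummableFamily.coeff_hsum]
  rfl

lemma hsum_colSF (a : HahnSeries Γ k) :
    (colSF H ι σ θ hσ hsupp hneg a).hsum = (Pfam H ι σ θ hσ hsupp hneg a).hsum := by
  ext g
  rw [SummableFamily.coeff_hsum, SummableFamily.coeff_hsum]
  have h1 : ∑ᶠ p : Γ × Φ, (Pfam H ι σ θ hσ hsupp hneg a p).coeff g =
      ∑ᶠ q : Φ × Γ, (Pfam H ι σ θ hσ hsupp hneg a (Equiv.prodComm Φ Γ q)).coeff g :=
    (finsum_comp_equiv (Equiv.prodComm Φ Γ)).symm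
  rw [h1, finsum_curry _ (((Psupport_finite H ι σ θ hσ hsupp hneg a g).preimage
    (Equiv.injective _).injOn))]
  refine finsum_congr fun φ => ?_
  rw [finsum_eq_single _ (g - θ φ) ?_]
  · simp only [Equiv.prodComm_apply, Prod.swap_prod_mk, Pfam_apply]
    rw [colSF_apply, coeff_mul_single, delta_coeff, HahnSeries.coeff_smul, smul_eq_mul]
    rw [show (g - θ φ) + θ φ = g by abel, HahnSeries.coeff_single_same, mul_one, mul_comm]
  · intro γ hγ
    simp only [Equiv.prodComm_apply, Prod.swap_prod_mk, Pfam_apply]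
    rw [HahnSeries.coeff_smul, HahnSeries.coeff_single_of_ne, smul_zero]
    intro hc
    exact hγ (by rw [hc]; abel)

end Families

end

end RSD

namespace RSD

noncomputable section

set_option linter.unusedSectionVars false

open HahnSeries

variable {Φ : Type*} [LinearOrder Φ] {Γ : Type*} [AddCommGroup Γ] [LinearOrder Γ] [IsOrderedAddMonoid Γ]
  {k : Type*} [Field k]
  (H : HahnEmbeddingData Φ Γ) (ι : ℝ →+* k)
  (σ : Φ → Φ) (θ : Φ → Γ)

lemma hsum_eq_of_unique {β : Type*} (s : SummableFamily Γ k β) (b₀ : β)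
    (h : ∀ b, b ≠ b₀ → s b = 0) : s.hsum = s b₀ := by
  ext g
  rw [SummableFamily.coeff_hsum]
  exact finsum_eq_single _ b₀ (fun b hb => by rw [h b hb, HahnSeries.coeff_zero])

lemma smul_single (c : k) (γ : Γ) (r : k) :
    c • HahnSeries.single γ r = HahnSeries.single γ (c * r) := by
  ext γ'
  rw [HahnSeries.coeff_smul, smul_eq_mul, HahnSeries.coeff_single, HahnSeries.coeff_single]
  split_ifs with h
  · rfl
  · exact mul_zero c

lemma delta_single (ψ : Φ) (γ : Γ) (c : k) :
    delta H ι ψ (HahnSeries.single γ c) =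
      HahnSeries.single γ (ι ((H.e γ).coeff ψ) * c) := by
  ext γ'
  rw [delta_coeff, HahnSeries.coeff_single, HahnSeries.coeff_single]
  split_ifs with h
  · rw [h]
  · exact mul_zero _

lemma delta_add (φ : Φ) (x y : HahnSeries Γ k) :
    delta H ι φ (x + y) = delta H ι φ x + delta H ι φ y := by
  ext γ
  rw [HahnSeries.coeff_add, delta_coeff, delta_coeff, delta_coeff,
    HahnSeries.coeff_add, mul_add]

lemma delta_support_subset (φ : Φ) (x : HahnSeries Γ k) :
    (delta H ι φ x).support ⊆ x.support := by
  intro γ hγ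
  rw [HahnSeries.mem_support, delta_coeff] at hγ
  exact right_ne_zero_of_mul hγ

lemma delta_mul (φ : Φ) (x y : HahnSeries Γ k) :
    delta H ι φ (x * y) = delta H ι φ x * y + x * delta H ι φ y := by
  ext γ
  rw [HahnSeries.coeff_add,
    HahnSeries.coeff_mul_left' x.isPWO_support (delta_support_subset H ι φ x),
    HahnSeries.coeff_mul_right' y.isPWO_support (delta_support_subset H ι φ y),
    delta_coeff, HahnSeries.coeff_mul, Finset.mul_sum, ← Finset.sum_add_distrib]
  refine Finset.sum_congr rfl fun ij hij => ?_
  rw [Finset.mem_addAntidiagonal] at hij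
  obtain ⟨-, -, hsum⟩ := hij
  rw [delta_coeff, delta_coeff]
  have h1 : (H.e γ).coeff φ = (H.e ij.1).coeff φ + (H.e ij.2).coeff φ := by
    rw [← hsum, map_add, HahnSeries.coeff_add]
  rw [h1, map_add]
  ring

section Families

variable (hσ : IsRightShift σ)
variable (hsupp : ∀ φ ψ, ψ ∈ (H.e (θ φ)).support → ∃ n : ℕ, 1 ≤ n ∧ ψ = σ^[n] φ)
variable (hneg : ∀ φ, (H.e (θ φ)).coeff (σ φ) < 0)

/-- The derivation. -/
def Dfun (a : HahnSeries Γ k) : HahnSeries Γ k := (Pfam H ι σ θ hσ hsupp hneg a).hsum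

lemma Pfam_add (x y : HahnSeries Γ k) :
    Pfam H ι σ θ hσ hsupp hneg (x + y) =
      Pfam H ι σ θ hσ hsupp hneg x + Pfam H ι σ θ hσ hsupp hneg y := by
  refine SummableFamily.ext fun p => ?_
  rw [SummableFamily.add_apply, Pfam_apply, Pfam_apply, Pfam_apply,
    HahnSeries.coeff_add, add_mul, add_smul]

lemma Dfun_add (x y : HahnSeries Γ k) :
    Dfun H ι σ θ hσ hsupp hneg (x + y) =
      Dfun H ι σ θ hσ hsupp hneg x + Dfun H ι σ θ hσ hsupp hneg y := by
  rw [Dfun, Dfun, Dfun, Pfam_add, SummableFamily.hsum_add]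

lemma colSF_mul (x y : HahnSeries Γ k) :
    colSF H ι σ θ hσ hsupp hneg (x * y) =
      y • colSF H ι σ θ hσ hsupp hneg x + x • colSF H ι σ θ hσ hsupp hneg y := by
  refine SummableFamily.ext fun φ => ?_
  rw [SummableFamily.add_apply, SummableFamily.smul_apply, SummableFamily.smul_apply,
    HahnSeries.of_symm_smul_of_eq_mul, HahnSeries.of_symm_smul_of_eq_mul,
    colSF_apply, colSF_apply, colSF_apply, delta_mul]
  ring

lemma Dfun_mul (x y : HahnSeries Γ k) :
    Dfun H ι σ θ hσ hsupp hneg (x * y) =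
      Dfun H ι σ θ hσ hsupp hneg x * y + x * Dfun H ι σ θ hσ hsupp hneg y := by
  rw [Dfun, Dfun, Dfun, ← hsum_colSF, ← hsum_colSF, ← hsum_colSF, colSF_mul,
    SummableFamily.hsum_add, SummableFamily.hsum_smul, SummableFamily.hsum_smul]
  ring

lemma Dfun_tmon (φ : Φ) :
    Dfun H ι σ θ hσ hsupp hneg (tmon H k φ) = tmon H k φ * HahnSeries.single (θ φ) 1 := by
  rw [Dfun, ← hsum_colSF]
  have h0 : ∀ ψ, ψ ≠ φ → colSF H ι σ θ hσ hsupp hneg (tmon H k φ) ψ = 0 := by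
    intro ψ hψ
    rw [colSF_apply, tmon, delta_single, H.hb, HahnSeries.coeff_single_of_ne hψ,
      map_zero, zero_mul, HahnSeries.single_eq_zero, zero_mul]
  rw [hsum_eq_of_unique _ φ h0, colSF_apply, tmon, delta_single, H.hb,
    HahnSeries.coeff_single_same, map_one, one_mul]

lemma tmon_ne_zero (φ : Φ) : tmon H k φ ≠ 0 :=
  HahnSeries.single_ne_zero one_ne_zero

lemma logDer_eq (φ : Φ) :
    logDer H (Dfun H ι σ θ hσ hsupp hneg) φ = HahnSeries.single (θ φ) 1 := by
  rw [logDer, Dfun_tmon, mul_comm (tmon H k φ), mul_assoc,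
    mul_inv_cancel₀ (tmon_ne_zero H φ), mul_one]

lemma rowSF_single_eq_zero {γ γ' : Γ} (h : γ' ≠ γ) :
    rowSF H ι σ θ hσ hsupp hneg (HahnSeries.single γ (1:k)) γ' = 0 := by
  refine SummableFamily.ext fun φ => ?_
  rw [rowSF_apply, HahnSeries.coeff_single_of_ne h, zero_mul, zero_smul,
    SummableFamily.zero_apply]

lemma hsum_zero {β : Type*} : (0 : SummableFamily Γ k β).hsum = 0 := by
  ext g
  rw [SummableFamily.coeff_hsum]
  simp only [SummableFamily.zero_apply, HahnSeries.coeff_zero, finsum_zero]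

lemma Pfam_single_hsum (γ : Γ) :
    (Pfam H ι σ θ hσ hsupp hneg (HahnSeries.single γ (1:k))).hsum =
      (rowSF H ι σ θ hσ hsupp hneg (HahnSeries.single γ (1:k)) γ).hsum := by
  rw [← hsum_rowFam, hsum_eq_of_unique _ γ (fun γ' h => by
    rw [rowFam_apply, rowSF_single_eq_zero H ι σ θ hσ hsupp hneg h, hsum_zero]),
    rowFam_apply]

lemma rowSF_hsum_eq (x : HahnSeries Γ k) (γ : Γ) :
    (rowSF H ι σ θ hσ hsupp hneg x γ).hsum =
      x.coeff γ • (Pfam H ι σ θ hσ hsupp hneg (HahnSeries.single γ (1:k))).hsum := by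
  rw [Pfam_single_hsum]
  ext g
  rw [HahnSeries.coeff_smul, smul_eq_mul, SummableFamily.coeff_hsum,
    SummableFamily.coeff_hsum]
  have hfin : (Function.support fun φ =>
      ((rowSF H ι σ θ hσ hsupp hneg (HahnSeries.single γ (1:k)) γ) φ).coeff g).Finite :=
    ((rowSF H ι σ θ hσ hsupp hneg (HahnSeries.single γ (1:k)) γ).finite_co_support' g).subset
      (fun φ h => h)
  rw [mul_finsum _ _]
  refine finsum_congr fun φ => ?_
  rw [rowSF_apply, rowSF_apply, HahnSeries.coeff_smul, HahnSeries.coeff_smul,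
    HahnSeries.coeff_single_same, smul_eq_mul, smul_eq_mul, one_mul]
  ring

end Families

end

end RSD

/-- if `Φ` carries a right shift `σ` and one defines
`d(t_φ)/t_φ := t^{θ_φ} = Π_{n ≥ 1} t_{σ^n(φ)}^{θ_{φ,n}}` where
`θ_φ = Σ_{n ≥ 1} θ_{φ,n} 1_{σ^n(φ)} ∈ Γ` with `θ_{φ,1} < 0`, then this extends to a series
derivation on `k((Γ))` via the strong Leibniz rule and strong linearity; in particular for
every series `a` the family `(a_α α_φ t^{α + θ_φ})_{(α,φ)}` is summable. -/
theorem right_shift_series_derivation {Φ : Type*} [LinearOrder Φ]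
    {Γ : Type*} [AddCommGroup Γ] [LinearOrder Γ] [IsOrderedAddMonoid Γ] {k : Type*} [Field k]
    (H : HahnEmbeddingData Φ Γ) (ι : ℝ →+* k)
    (σ : Φ → Φ) (hσ : IsRightShift σ)
    (θ : Φ → Γ)
    (hsupp : ∀ φ ψ, ψ ∈ (H.e (θ φ)).support → ∃ n : ℕ, 1 ≤ n ∧ ψ = σ^[n] φ)
    (hneg : ∀ φ, (H.e (θ φ)).coeff (σ φ) < 0) :
    ∃ D : HahnSeries Γ k → HahnSeries Γ k,
      IsSeriesDerivation H ι D ∧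
      (∀ φ, D (tmon H k φ) = tmon H k φ * HahnSeries.single (θ φ) 1) ∧
      (∀ a : HahnSeries Γ k, ∃ s : HahnSeries.SummableFamily Γ k (Γ × Φ),
        (∀ p : Γ × Φ,
          s p = (a.coeff p.1 * ι ((H.e p.1).coeff p.2)) • HahnSeries.single (p.1 + θ p.2) 1) ∧
        D a = s.hsum) := by
  refine ⟨RSD.Dfun H ι σ θ hσ hsupp hneg, ⟨?_, ?_, ?_, ?_⟩, ?_, ?_⟩
  · exact RSD.Dfun_add H ι σ θ hσ hsupp hneg
  · exact RSD.Dfun_mul H ι σ θ hσ hsupp hneg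
  · intro x
    refine ⟨RSD.rowFam H ι σ θ hσ hsupp hneg x, fun γ => ?_, ?_⟩
    · rw [RSD.rowFam_apply, RSD.rowSF_hsum_eq]
      rfl
    · rw [show RSD.Dfun H ι σ θ hσ hsupp hneg x =
        (RSD.Pfam H ι σ θ hσ hsupp hneg x).hsum from rfl,
        ← RSD.hsum_rowFam]
  · intro γ
    refine ⟨RSD.colSF H ι σ θ hσ hsupp hneg (HahnSeries.single γ 1), fun φ => ?_, ?_⟩
    · rw [RSD.colSF_apply, RSD.logDer_eq H ι σ θ hσ hsupp hneg φ,
        RSD.delta_single, ← smul_mul_assoc, RSD.smul_single, mul_one]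
    · rw [show RSD.Dfun H ι σ θ hσ hsupp hneg (HahnSeries.single γ 1) =
        (RSD.Pfam H ι σ θ hσ hsupp hneg (HahnSeries.single γ 1)).hsum from rfl,
        ← RSD.hsum_colSF]
  · exact RSD.Dfun_tmon H ι σ θ hσ hsupp hneg
  · intro a
    exact ⟨RSD.Pfam H ι σ θ hσ hsupp hneg a, fun p => rfl, rfl⟩
end

section
/- Let d be a series derivation on k((Γ)), where Γ is a subgroup of the Hahn group Σ_{φ∈Φ} ℝ, and set θ_φ := v(d(t_φ)/t_φ) for each φ ∈ Φ. Then d satisfies l'Hospital's rule (HD2) and the compatibility of the logarithmic derivative with the valuation (HD3) if and only if the following condition (H3) holds: for all φ₁, φ₂ ∈ Φ with φ₁ < φ₂, one has θ_{φ₁} < θ_{φ₂} and v_Γ(θ_{φ₁} − θ_{φ₂}) > φ₁. In that case (HD1) also holds with ker d = k, so d is a Hardy type derivation. -/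
/- Common setting: a generalized series field `k((Γ))`, where the totally ordered abelian
group `Γ` is regarded, via Hahn's embedding theorem, as a subgroup of the Hahn group
`Σ_{φ ∈ Φ} ℝ = HahnSeries Φ ℝ`, and the coefficient field `k` contains the real exponents
(via a ring homomorphism `ι : ℝ →+* k`). -/

open HahnSeries

section AuxGeneric

namespace HahnSeries

variable {Γ' : Type*} [LinearOrder Γ'] {R : Type*} [Zero R]

theorem orderTop_eq_of_forall {x : HahnSeries Γ' R} {g : Γ'} (h1 : x.coeff g ≠ 0)
    (h2 : ∀ g' < g, x.coeff g' = 0) : x.orderTop = (g : WithTop Γ') := by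
  refine orderTop_eq_of_le ((mem_support _ _).2 h1) (fun g' hg' => ?_)
  by_contra hlt
  exact ((mem_support _ _).1 hg') (h2 g' (lt_of_not_ge hlt))

theorem le_orderTop_of_forall {x : HahnSeries Γ' R} {g : Γ'}
    (h2 : ∀ g' < g, x.coeff g' = 0) : (g : WithTop Γ') ≤ x.orderTop := by
  by_cases hx : x = 0
  · simp [hx]
  · rw [orderTop_of_ne_zero hx, WithTop.coe_le_coe]
    by_contra hlt
    exact ((mem_support _ _).1
      (x.isWF_support.min_mem (support_nonempty_iff.2 hx))) (h2 _ (lt_of_not_ge hlt))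

end HahnSeries

end AuxGeneric

section AuxEmbedding
open HahnSeries

variable {Φ : Type*} [LinearOrder Φ] {Γ : Type*} [AddCommGroup Γ] [LinearOrder Γ] [IsOrderedAddMonoid Γ]
  (H : HahnEmbeddingData Φ Γ)

theorem HahnEmbeddingData.e_ne {γ : Γ} (h : γ ≠ 0) : H.e γ ≠ 0 := by
  intro h'
  exact h (H.inj (h'.trans (map_zero H.e).symm))

theorem HahnEmbeddingData.pos_of_lex {γ : Γ} {φ : Φ} (h1 : 0 < (H.e γ).coeff φ)
    (h2 : ∀ ψ < φ, (H.e γ).coeff ψ = 0) : 0 < γ :=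
  (H.ord γ).2 ⟨φ, h1, fun ψ hψ => h2 ψ hψ⟩

theorem HahnEmbeddingData.cls_exists {γ : Γ} (h : γ ≠ 0) :
    ∃ ψ : Φ, (H.e γ).orderTop = (ψ : WithTop Φ) := by
  have := orderTop_ne_top.2 (H.e_ne h)
  exact ⟨WithTop.untop _ this, (WithTop.coe_untop _ this).symm⟩

theorem HahnEmbeddingData.lead_pos {γ : Γ} {ψ : Φ} (hγ : 0 < γ)
    (hψ : (H.e γ).orderTop = (ψ : WithTop Φ)) : 0 < (H.e γ).coeff ψ := by
  obtain ⟨φ, hpos, hz⟩ := (H.ord γ).1 hγ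
  have h1 : (H.e γ).coeff ψ ≠ 0 := coeff_orderTop_ne hψ
  have h2 : ¬ (ψ < φ) := fun hlt => h1 (hz ψ hlt)
  have h3 : ¬ (φ < ψ) := fun hlt => by
    have := coeff_eq_zero_of_lt_orderTop (x := H.e γ) (i := φ)
      (by rw [hψ]; exact_mod_cast hlt)
    rw [this] at hpos; exact lt_irrefl 0 hpos
  have : ψ = φ := le_antisymm (not_lt.1 h3) (not_lt.1 h2)
  rwa [← this] at hpos

/-- Positivity from a strictly dominant positive part. -/
theorem HahnEmbeddingData.pos_add_small {γ δ : Γ} {ψ : Φ} (hγ : 0 < γ)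
    (hψ : (H.e γ).orderTop = (ψ : WithTop Φ))
    (hδ : (ψ : WithTop Φ) < (H.e δ).orderTop) : 0 < γ + δ := by
  refine H.pos_of_lex (φ := ψ) ?_ ?_
  · rw [map_add, HahnSeries.coeff_add, coeff_eq_zero_of_lt_orderTop hδ, add_zero]
    exact H.lead_pos hγ hψ
  · intro ψ' hψ'
    rw [map_add, HahnSeries.coeff_add,
      coeff_eq_zero_of_lt_orderTop (x := H.e γ) (by rw [hψ]; exact_mod_cast hψ'),
      coeff_eq_zero_of_lt_orderTop (lt_trans (by exact_mod_cast hψ') hδ), add_zero]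

theorem HahnEmbeddingData.b_pos (φ : Φ) : 0 < H.b φ := by
  refine H.pos_of_lex (φ := φ) ?_ ?_ <;> rw [H.hb]
  · rw [HahnSeries.coeff_single_same]; exact one_pos
  · intro ψ hψ; rw [HahnSeries.coeff_single_of_ne (ne_of_lt hψ)]

theorem HahnEmbeddingData.orderTop_e_b (φ : Φ) :
    (H.e (H.b φ)).orderTop = (φ : WithTop Φ) := by
  rw [H.hb]; exact orderTop_single one_ne_zero

theorem HahnEmbeddingData.nsmul_b_lt {φ₁ φ₂ : Φ} (h : φ₁ < φ₂) (n : ℕ) :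
    n • H.b φ₂ < H.b φ₁ := by
  have : 0 < H.b φ₁ - n • H.b φ₂ := by
    refine H.pos_of_lex (φ := φ₁) ?_ ?_
    · rw [map_sub, map_nsmul, H.hb, H.hb, HahnSeries.coeff_sub, HahnSeries.coeff_single_same]
      have : ((n • HahnSeries.single φ₂ (1:ℝ)).coeff φ₁) = 0 := by
        rw [← Nat.cast_smul_eq_nsmul ℝ, HahnSeries.coeff_smul,
          HahnSeries.coeff_single_of_ne (ne_of_lt h), smul_zero]
      rw [this, sub_zero]; exact one_pos
    · intro ψ hψ
      rw [map_sub, map_nsmul, H.hb, H.hb, HahnSeries.coeff_sub,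
        HahnSeries.coeff_single_of_ne (ne_of_lt hψ)]
      have : ((n • HahnSeries.single φ₂ (1:ℝ)).coeff ψ) = 0 := by
        rw [← Nat.cast_smul_eq_nsmul ℝ, HahnSeries.coeff_smul,
          HahnSeries.coeff_single_of_ne (ne_of_lt (lt_trans hψ h)), smul_zero]
      rw [this, sub_zero]
  exact sub_pos.mp this

end AuxEmbedding
section AuxEmbedding2
open HahnSeries

variable {Φ : Type*} [LinearOrder Φ] {Γ : Type*} [AddCommGroup Γ] [LinearOrder Γ] [IsOrderedAddMonoid Γ]
  (H : HahnEmbeddingData Φ Γ)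

theorem HahnEmbeddingData.orderTop_e_sub {γ γ' : Γ} {ψ ψ' : Φ}
    (hγ : (H.e γ).orderTop = (ψ : WithTop Φ)) (hγ' : (H.e γ').orderTop = (ψ' : WithTop Φ))
    (h : ψ' < ψ) : (H.e (γ' - γ)).orderTop = (ψ' : WithTop Φ) := by
  refine HahnSeries.orderTop_eq_of_forall ?_ ?_
  · rw [map_sub, HahnSeries.coeff_sub,
      coeff_eq_zero_of_lt_orderTop (x := H.e γ) (by rw [hγ]; exact_mod_cast h), sub_zero]
    exact coeff_orderTop_ne hγ'
  · intro ψ'' hψ''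
    rw [map_sub, HahnSeries.coeff_sub,
      coeff_eq_zero_of_lt_orderTop (x := H.e γ') (by rw [hγ']; exact_mod_cast hψ''),
      coeff_eq_zero_of_lt_orderTop (x := H.e γ) (by rw [hγ]; exact_mod_cast hψ''.trans h),
      sub_zero]

/-- Monotonicity of `γ ↦ γ + θ (class γ)` under condition (H3). -/
theorem HahnEmbeddingData.mu_mono (θ : Φ → Γ)
    (hθ1 : ∀ φ₁ φ₂ : Φ, φ₁ < φ₂ → θ φ₁ < θ φ₂)
    (hθ2 : ∀ φ₁ φ₂ : Φ, φ₁ < φ₂ → ((φ₁ : Φ) : WithTop Φ) < (H.e (θ φ₁ - θ φ₂)).orderTop)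
    {γ γ' : Γ} {ψ ψ' : Φ} (hγ : (H.e γ).orderTop = (ψ : WithTop Φ))
    (hγ' : (H.e γ').orderTop = (ψ' : WithTop Φ)) (h : γ < γ') :
    γ + θ ψ < γ' + θ ψ' := by
  rcases lt_trichotomy ψ ψ' with hlt | heq | hgt
  · exact add_lt_add h (hθ1 _ _ hlt)
  · rw [heq]; exact add_lt_add_left h _
  · have hpos : 0 < (γ' - γ) + (θ ψ' - θ ψ) := by
      refine H.pos_add_small (ψ := ψ') (sub_pos.2 h) (H.orderTop_e_sub hγ hγ' hgt)
        (hθ2 ψ' ψ hgt)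
    have : (γ' - γ) + (θ ψ' - θ ψ) = (γ' + θ ψ') - (γ + θ ψ) := by abel
    rw [this] at hpos
    exact sub_pos.mp hpos

theorem HahnEmbeddingData.orderTop_e_abs {x : Γ} :
    (H.e |x|).orderTop = (H.e x).orderTop := by
  rcases abs_choice x with h | h
  · rw [h]
  · rw [h, map_neg, orderTop_neg]

/-- If `|y| < |x|` (both nonzero), the class of `x` is at most the class of `y`. -/
theorem HahnEmbeddingData.cls_le_of_abs_lt {x y : Γ} {ψx ψy : Φ} (hy : y ≠ 0)
    (hψx : (H.e x).orderTop = (ψx : WithTop Φ)) (hψy : (H.e y).orderTop = (ψy : WithTop Φ))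
    (h : |y| < |x|) : ψx ≤ ψy := by
  by_contra hlt
  push_neg at hlt
  have : 0 < |y| + (-|x|) := by
    refine H.pos_add_small (ψ := ψy) (abs_pos.2 hy) ?_ ?_
    · rw [H.orderTop_e_abs]; exact hψy
    · rw [map_neg, orderTop_neg, H.orderTop_e_abs, hψx]; exact_mod_cast hlt
  rw [← sub_eq_add_neg, sub_pos] at this
  exact absurd h (not_lt.2 (le_of_lt this))

theorem HahnEmbeddingData.not_archEquiv_of_cls_lt {x y : Γ} {ψx ψy : Φ} (hx : x ≠ 0)
    (hψx : (H.e x).orderTop = (ψx : WithTop Φ)) (hψy : (H.e y).orderTop = (ψy : WithTop Φ))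
    (h : ψx < ψy) : ¬ ArchEquiv x y := by
  rintro ⟨n, h1, -⟩
  have : 0 < |x| + (-(n • |y|)) := by
    refine H.pos_add_small (ψ := ψx) (abs_pos.2 hx) (by rw [H.orderTop_e_abs]; exact hψx) ?_
    rw [map_neg, orderTop_neg]
    refine lt_of_lt_of_le (show ((ψx : WithTop Φ) < (ψy : WithTop Φ)) from by exact_mod_cast h) ?_
    refine HahnSeries.le_orderTop_of_forall (fun ψ' hψ' => ?_)
    rw [map_nsmul, ← Nat.cast_smul_eq_nsmul ℝ, HahnSeries.coeff_smul,
      coeff_eq_zero_of_lt_orderTop (x := H.e |y|)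
        (by rw [H.orderTop_e_abs, hψy]; exact_mod_cast hψ'), smul_zero]
  rw [← sub_eq_add_neg, sub_pos] at this
  exact absurd h1 (not_le.2 this)

theorem HahnEmbeddingData.archEquiv_of_cls_eq {x y : Γ} {ψ : Φ} (hx : x ≠ 0) (hy : y ≠ 0)
    (hψx : (H.e x).orderTop = (ψ : WithTop Φ)) (hψy : (H.e y).orderTop = (ψ : WithTop Φ)) :
    ArchEquiv x y := by
  set r := (H.e |x|).coeff ψ with hr
  set s := (H.e |y|).coeff ψ with hs
  have hrpos : 0 < r := H.lead_pos (abs_pos.2 hx) (by rw [H.orderTop_e_abs]; exact hψx)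
  have hspos : 0 < s := H.lead_pos (abs_pos.2 hy) (by rw [H.orderTop_e_abs]; exact hψy)
  obtain ⟨n₁, hn₁⟩ := exists_nat_gt (r / s)
  obtain ⟨n₂, hn₂⟩ := exists_nat_gt (s / r)
  refine ⟨n₁ + n₂, ?_, ?_⟩
  · -- |x| ≤ (n₁+n₂) • |y|
    have key : 0 < (n₁ + n₂) • |y| + (-|x|) := by
      refine H.pos_of_lex (φ := ψ) ?_ ?_
      · rw [map_add, map_neg, map_nsmul, HahnSeries.coeff_add, HahnSeries.coeff_neg,
          ← Nat.cast_smul_eq_nsmul ℝ, HahnSeries.coeff_smul]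
        have : (r : ℝ) / s < (n₁ + n₂ : ℕ) := lt_of_lt_of_le hn₁ (by exact_mod_cast Nat.le_add_right n₁ n₂)
        have := (div_lt_iff₀ hspos).1 this
        simp only [smul_eq_mul, ← hr, ← hs]
        linarith
      · intro ψ' hψ'
        rw [map_add, map_neg, map_nsmul, HahnSeries.coeff_add, HahnSeries.coeff_neg,
          ← Nat.cast_smul_eq_nsmul ℝ, HahnSeries.coeff_smul,
          coeff_eq_zero_of_lt_orderTop (x := H.e |y|)
            (by rw [H.orderTop_e_abs, hψy]; exact_mod_cast hψ'),
          coeff_eq_zero_of_lt_orderTop (x := H.e |x|)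
            (by rw [H.orderTop_e_abs, hψx]; exact_mod_cast hψ'), smul_zero, neg_zero, add_zero]
    rw [← sub_eq_add_neg, sub_pos] at key
    exact le_of_lt key
  · have key : 0 < (n₁ + n₂) • |x| + (-|y|) := by
      refine H.pos_of_lex (φ := ψ) ?_ ?_
      · rw [map_add, map_neg, map_nsmul, HahnSeries.coeff_add, HahnSeries.coeff_neg,
          ← Nat.cast_smul_eq_nsmul ℝ, HahnSeries.coeff_smul]
        have : (s : ℝ) / r < (n₁ + n₂ : ℕ) := lt_of_lt_of_le hn₂ (by exact_mod_cast Nat.le_add_left n₂ n₁)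
        have := (div_lt_iff₀ hrpos).1 this
        simp only [smul_eq_mul, ← hr, ← hs]
        linarith
      · intro ψ' hψ'
        rw [map_add, map_neg, map_nsmul, HahnSeries.coeff_add, HahnSeries.coeff_neg,
          ← Nat.cast_smul_eq_nsmul ℝ, HahnSeries.coeff_smul,
          coeff_eq_zero_of_lt_orderTop (x := H.e |x|)
            (by rw [H.orderTop_e_abs, hψx]; exact_mod_cast hψ'),
          coeff_eq_zero_of_lt_orderTop (x := H.e |y|)
            (by rw [H.orderTop_e_abs, hψy]; exact_mod_cast hψ'), smul_zero, neg_zero, add_zero]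
    rw [← sub_eq_add_neg, sub_pos] at key
    exact le_of_lt key

theorem HahnEmbeddingData.archEquiv_iff_cls_eq {x y : Γ} {ψx ψy : Φ} (hx : x ≠ 0) (hy : y ≠ 0)
    (hψx : (H.e x).orderTop = (ψx : WithTop Φ)) (hψy : (H.e y).orderTop = (ψy : WithTop Φ)) :
    ArchEquiv x y ↔ ψx = ψy := by
  constructor
  · intro harch
    rcases lt_trichotomy ψx ψy with hlt | heq | hgt
    · exact absurd harch (H.not_archEquiv_of_cls_lt hx hψx hψy hlt)
    · exact heq
    · obtain ⟨n, h1, h2⟩ := harch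
      exact absurd ⟨n, h2, h1⟩ (H.not_archEquiv_of_cls_lt hy hψy hψx hgt)
  · intro heq
    exact H.archEquiv_of_cls_eq hx hy hψx (heq ▸ hψy)

end AuxEmbedding2
section AuxDeriv
open HahnSeries

variable {Φ : Type*} [LinearOrder Φ] {Γ : Type*} [AddCommGroup Γ] [LinearOrder Γ] [IsOrderedAddMonoid Γ]
  {k : Type*} [Field k] {H : HahnEmbeddingData Φ Γ} {ι : ℝ →+* k}
  {D : HahnSeries Γ k → HahnSeries Γ k}

theorem IsSeriesDerivation.D_one (hD : IsSeriesDerivation H ι D) : D 1 = 0 := by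
  have h := hD.leibniz 1 1
  simp only [one_mul, mul_one] at h
  have := add_left_cancel (a := D 1) (b := D 1) (c := 0) (by rw [add_zero, ← h])
  exact this

theorem IsSeriesDerivation.D_single_smul (hD : IsSeriesDerivation H ι D) (γ : Γ) (c : k) :
    D (HahnSeries.single γ c) = c • D (HahnSeries.single γ 1) := by
  obtain ⟨s, hs, hx⟩ := hD.strong_linear (HahnSeries.single γ c)
  ext g
  rw [hx, SummableFamily.coeff_hsum]
  rw [finsum_eq_single _ γ (fun γ' hγ' => by
    rw [hs γ', HahnSeries.coeff_single_of_ne hγ', zero_smul, HahnSeries.coeff_zero])]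
  rw [hs γ, HahnSeries.coeff_single_same]

theorem IsSeriesDerivation.D_C (hD : IsSeriesDerivation H ι D) (c : k) :
    D (HahnSeries.single (0 : Γ) c) = 0 := by
  rw [hD.D_single_smul 0 c, HahnSeries.single_zero_one, hD.D_one, smul_zero]

/-- Coefficient formula for `D (single γ 1)` coming from the strong Leibniz rule. -/
theorem IsSeriesDerivation.D_single_orderTop (hD : IsSeriesDerivation H ι D)
    {θ : Φ → Γ} (hθ : ∀ φ, (logDer H D φ).orderTop = ((θ φ : Γ) : WithTop Γ))
    (hmono : ∀ φ₁ φ₂ : Φ, φ₁ < φ₂ → θ φ₁ < θ φ₂)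
    {γ : Γ} {ψ : Φ} (hγ : γ ≠ 0) (hψ : (H.e γ).orderTop = (ψ : WithTop Φ)) :
    (D (HahnSeries.single γ (1 : k))).orderTop = ((γ + θ ψ : Γ) : WithTop Γ) := by
  obtain ⟨s, hs, hDγ⟩ := hD.strong_leibniz γ
  have hcoeff : ∀ g : Γ, ∀ φ : Φ, (s φ).coeff g
      = ι ((H.e γ).coeff φ) * (logDer H D φ).coeff (g - γ) := by
    intro g φ
    rw [hs φ, HahnSeries.coeff_smul, smul_eq_mul]
    congr 1
    have : (HahnSeries.single γ (1:k) * logDer H D φ).coeff (g - γ + γ)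
        = 1 * (logDer H D φ).coeff (g - γ) := HahnSeries.coeff_single_mul_add
    rw [sub_add_cancel] at this
    rw [this, one_mul]
  have hmono' : ∀ φ : Φ, ψ ≤ φ → θ ψ ≤ θ φ := fun φ h =>
    h.lt_or_eq.elim (fun h' => le_of_lt (hmono _ _ h')) (fun h' => by rw [h'])
  have hsupp : ∀ φ : Φ, (H.e γ).coeff φ ≠ 0 → ψ ≤ φ := by
    intro φ h
    have := orderTop_le_of_coeff_ne_zero h
    rw [hψ] at this
    exact_mod_cast this
  refine HahnSeries.orderTop_eq_of_forall ?_ ?_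
  · rw [hDγ, SummableFamily.coeff_hsum]
    rw [finsum_eq_single _ ψ (fun φ hφ => ?_)]
    · rw [hcoeff, add_sub_cancel_left]
      exact mul_ne_zero (fun h0 => coeff_orderTop_ne hψ (by
          have : Function.Injective ι := ι.injective
          exact this (by rw [h0, map_zero])))
        (coeff_orderTop_ne (hθ ψ))
    · rw [hcoeff, add_sub_cancel_left]
      by_cases hc : (H.e γ).coeff φ = 0
      · rw [hc, map_zero, zero_mul]
      · have hlt : ψ < φ := lt_of_le_of_ne (hsupp φ hc) (Ne.symm hφ)
        rw [coeff_eq_zero_of_lt_orderTop (x := logDer H D φ)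
          (by rw [hθ φ]; exact_mod_cast hmono _ _ hlt), mul_zero]
  · intro g hg
    rw [hDγ, SummableFamily.coeff_hsum]
    refine finsum_eq_zero_of_forall_eq_zero (fun φ => ?_)
    rw [hcoeff]
    by_cases hc : (H.e γ).coeff φ = 0
    · rw [hc, map_zero, zero_mul]
    · rw [coeff_eq_zero_of_lt_orderTop (x := logDer H D φ)
        (by rw [hθ φ]
            have : g - γ < θ φ := lt_of_lt_of_le (by rwa [sub_lt_iff_lt_add']) (hmono' φ (hsupp φ hc))
            exact_mod_cast this), mul_zero]

/-- Valuation of `D a` when `γ₀` is the least nonzero element of the support of `a`. -/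
theorem IsSeriesDerivation.D_orderTop (hD : IsSeriesDerivation H ι D)
    {θ : Φ → Γ} (hθ : ∀ φ, (logDer H D φ).orderTop = ((θ φ : Γ) : WithTop Γ))
    (hmono : ∀ φ₁ φ₂ : Φ, φ₁ < φ₂ → θ φ₁ < θ φ₂)
    (hθ2 : ∀ φ₁ φ₂ : Φ, φ₁ < φ₂ → ((φ₁ : Φ) : WithTop Φ) < (H.e (θ φ₁ - θ φ₂)).orderTop)
    {a : HahnSeries Γ k} {γ₀ : Γ} {ψ : Φ} (h0 : γ₀ ≠ 0)
    (hψ : (H.e γ₀).orderTop = (ψ : WithTop Φ)) (hmem : a.coeff γ₀ ≠ 0)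
    (hmin : ∀ γ : Γ, a.coeff γ ≠ 0 → γ ≠ 0 → γ₀ ≤ γ) :
    (D a).orderTop = ((γ₀ + θ ψ : Γ) : WithTop Γ) := by
  obtain ⟨s, hs, hDa⟩ := hD.strong_linear a
  have hterm : ∀ g : Γ, ∀ γ : Γ, g ≤ γ₀ + θ ψ → γ ≠ γ₀ → (s γ).coeff g = 0 := by
    intro g γ hg hγ
    rw [hs γ, HahnSeries.coeff_smul]
    by_cases hc : a.coeff γ = 0
    · rw [hc, zero_smul]
    · by_cases hz : γ = 0
      · subst hz
        rw [HahnSeries.single_zero_one, hD.D_one, HahnSeries.coeff_zero, smul_zero]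
      · have hlt : γ₀ < γ := lt_of_le_of_ne (hmin γ hc hz) (Ne.symm hγ)
        obtain ⟨ψγ, hψγ⟩ := H.cls_exists hz
        have hμ : γ₀ + θ ψ < γ + θ ψγ := H.mu_mono θ hmono hθ2 hψ hψγ hlt
        rw [coeff_eq_zero_of_lt_orderTop (x := D (HahnSeries.single γ 1))
          (by rw [hD.D_single_orderTop hθ hmono hz hψγ]
              exact_mod_cast lt_of_le_of_lt hg hμ), smul_zero]
  refine HahnSeries.orderTop_eq_of_forall ?_ ?_
  · rw [hDa, SummableFamily.coeff_hsum,
      finsum_eq_single _ γ₀ (fun γ hγ => hterm _ γ le_rfl hγ), hs γ₀, HahnSeries.coeff_smul]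
    refine mul_ne_zero hmem ?_
    exact coeff_orderTop_ne (hD.D_single_orderTop hθ hmono h0 hψ)
  · intro g hg
    rw [hDa, SummableFamily.coeff_hsum]
    refine finsum_eq_zero_of_forall_eq_zero (fun γ => ?_)
    by_cases hγ : γ = γ₀
    · subst hγ
      rw [hs γ, HahnSeries.coeff_smul, coeff_eq_zero_of_lt_orderTop
        (x := D (HahnSeries.single γ 1))
        (by rw [hD.D_single_orderTop hθ hmono h0 hψ]; exact_mod_cast hg), smul_zero]
    · exact hterm g γ (le_of_lt hg) hγ

end AuxDeriv
section AuxHD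
open HahnSeries

variable {Φ : Type*} [LinearOrder Φ] {Γ : Type*} [AddCommGroup Γ] [LinearOrder Γ] [IsOrderedAddMonoid Γ]
  {k : Type*} [Field k] {H : HahnEmbeddingData Φ Γ} {ι : ℝ →+* k}
  {D : HahnSeries Γ k → HahnSeries Γ k}

theorem exists_orderTop_eq {x : HahnSeries Γ k} (hx : x ≠ 0) :
    ∃ g : Γ, x.orderTop = (g : WithTop Γ) := by
  have := orderTop_ne_top.2 hx
  exact ⟨WithTop.untop _ this, (WithTop.coe_untop _ this).symm⟩

theorem IsSeriesDerivation.hd2_of (hD : IsSeriesDerivation H ι D)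
    {θ : Φ → Γ} (hθ : ∀ φ, (logDer H D φ).orderTop = ((θ φ : Γ) : WithTop Γ))
    (hmono : ∀ φ₁ φ₂ : Φ, φ₁ < φ₂ → θ φ₁ < θ φ₂)
    (hθ2 : ∀ φ₁ φ₂ : Φ, φ₁ < φ₂ → ((φ₁ : Φ) : WithTop Φ) < (H.e (θ φ₁ - θ φ₂)).orderTop) :
    HDtwo D := by
  intro a b ha hb hoa hob
  obtain ⟨ψa, hψa⟩ := H.cls_exists hoa
  obtain ⟨ψb, hψb⟩ := H.cls_exists hob
  have hDa := hD.D_orderTop hθ hmono hθ2 hoa hψa (coeff_order_eq_zero.not.2 ha)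
    (fun γ hc _ => order_le_of_coeff_ne_zero hc)
  have hDb := hD.D_orderTop hθ hmono hθ2 hob hψb (coeff_order_eq_zero.not.2 hb)
    (fun γ hc _ => order_le_of_coeff_ne_zero hc)
  rw [← order_eq_orderTop_of_ne_zero ha, ← order_eq_orderTop_of_ne_zero hb, hDa, hDb,
    WithTop.coe_le_coe, WithTop.coe_le_coe]
  constructor
  · intro h
    rcases h.lt_or_eq with h' | h'
    · exact le_of_lt (H.mu_mono θ hmono hθ2 hψa hψb h')
    · have hψeq : ψa = ψb := by
        rw [h'] at hψa
        exact_mod_cast hψa.symm.trans hψb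
      rw [h', hψeq]
  · intro h
    by_contra hlt
    push_neg at hlt
    exact absurd h (not_le.2 (H.mu_mono θ hmono hθ2 hψb hψa hlt))

theorem IsSeriesDerivation.logder_orderTop (hD : IsSeriesDerivation H ι D)
    {θ : Φ → Γ} (hθ : ∀ φ, (logDer H D φ).orderTop = ((θ φ : Γ) : WithTop Γ))
    (hmono : ∀ φ₁ φ₂ : Φ, φ₁ < φ₂ → θ φ₁ < θ φ₂)
    (hθ2 : ∀ φ₁ φ₂ : Φ, φ₁ < φ₂ → ((φ₁ : Φ) : WithTop Φ) < (H.e (θ φ₁ - θ φ₂)).orderTop)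
    {a : HahnSeries Γ k} (ha : a ≠ 0) (hoa : a.order ≠ 0) {ψ : Φ}
    (hψ : (H.e a.order).orderTop = (ψ : WithTop Φ)) :
    (D a * a⁻¹).orderTop = ((θ ψ : Γ) : WithTop Γ) := by
  have hDa := hD.D_orderTop hθ hmono hθ2 hoa hψ (coeff_order_eq_zero.not.2 ha)
    (fun γ hc _ => order_le_of_coeff_ne_zero hc)
  have hDane : D a ≠ 0 := orderTop_ne_top.1 (by rw [hDa]; exact WithTop.coe_ne_top)
  have hainv : a⁻¹ ≠ 0 := inv_ne_zero ha
  have hprod : D a * a⁻¹ ≠ 0 := mul_ne_zero hDane hainv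
  have horder : (D a).order = a.order + θ ψ := by
    have h' := order_eq_orderTop_of_ne_zero hDane
    rw [hDa] at h'
    exact_mod_cast h'
  have hinv : (a⁻¹).order = -a.order := by
    have h1 : a * a⁻¹ = 1 := mul_inv_cancel₀ ha
    have h2 := order_mul ha hainv
    rw [h1, order_one] at h2
    exact eq_neg_of_add_eq_zero_right h2.symm
  rw [← order_eq_orderTop_of_ne_zero hprod, order_mul hDane hainv, horder, hinv]
  congr 1
  abel

theorem IsSeriesDerivation.hd3_of (hD : IsSeriesDerivation H ι D)
    {θ : Φ → Γ} (hθ : ∀ φ, (logDer H D φ).orderTop = ((θ φ : Γ) : WithTop Γ))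
    (hmono : ∀ φ₁ φ₂ : Φ, φ₁ < φ₂ → θ φ₁ < θ φ₂)
    (hθ2 : ∀ φ₁ φ₂ : Φ, φ₁ < φ₂ → ((φ₁ : Φ) : WithTop Φ) < (H.e (θ φ₁ - θ φ₂)).orderTop) :
    HDthree D := by
  intro a b ha hb h1 h2
  have hob : b.order ≠ 0 := fun h => by rw [h, abs_zero] at h2; exact lt_irrefl 0 h2
  have hoa : a.order ≠ 0 := by
    intro h
    rw [h, abs_zero] at h1
    exact absurd (h2.trans h1) (lt_irrefl 0)
  obtain ⟨ψa, hψa⟩ := H.cls_exists hoa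
  obtain ⟨ψb, hψb⟩ := H.cls_exists hob
  rw [hD.logder_orderTop hθ hmono hθ2 ha hoa hψa, hD.logder_orderTop hθ hmono hθ2 hb hob hψb]
  have hle : ψa ≤ ψb := H.cls_le_of_abs_lt hob hψa hψb h1
  have hθle : θ ψa ≤ θ ψb := hle.lt_or_eq.elim (fun h => le_of_lt (hmono _ _ h))
    (fun h => by rw [h])
  refine ⟨by exact_mod_cast hθle, ?_⟩
  rw [WithTop.coe_inj]
  constructor
  · intro h
    have hψeq : ψa = ψb := by
      rcases hle.lt_or_eq with h' | h'
      · exact absurd h (ne_of_lt (hmono _ _ h'))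
      · exact h'
    exact H.archEquiv_of_cls_eq hoa hob hψa (hψeq ▸ hψb)
  · intro harch
    have := (H.archEquiv_iff_cls_eq hoa hob hψa hψb).1 harch
    rw [this]

theorem IsSeriesDerivation.ker_iff (hD : IsSeriesDerivation H ι D)
    {θ : Φ → Γ} (hθ : ∀ φ, (logDer H D φ).orderTop = ((θ φ : Γ) : WithTop Γ))
    (hmono : ∀ φ₁ φ₂ : Φ, φ₁ < φ₂ → θ φ₁ < θ φ₂)
    (hθ2 : ∀ φ₁ φ₂ : Φ, φ₁ < φ₂ → ((φ₁ : Φ) : WithTop Φ) < (H.e (θ φ₁ - θ φ₂)).orderTop) :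
    ∀ x : HahnSeries Γ k, D x = 0 ↔ ∃ c : k, x = HahnSeries.C c := by
  intro x
  constructor
  · intro hx
    by_contra hne
    push_neg at hne
    have hex : ∃ γ : Γ, γ ≠ 0 ∧ x.coeff γ ≠ 0 := by
      by_contra hall
      push_neg at hall
      refine hne (x.coeff 0) ?_
      ext g
      rw [HahnSeries.C_apply]
      by_cases hg : g = 0
      · rw [hg, HahnSeries.coeff_single_same]
      · rw [HahnSeries.coeff_single_of_ne hg, hall g hg]
    obtain ⟨γ, hγ0, hγc⟩ := hex
    have hsub : x.support \ {0} ⊆ x.support := Set.diff_subset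
    have hSwf : (x.support \ {0}).IsWF := x.isWF_support.mono hsub
    have hSne : (x.support \ {0}).Nonempty := ⟨γ, (HahnSeries.mem_support _ _).2 hγc, hγ0⟩
    set γ₀ := hSwf.min hSne with hγ₀
    have hγ₀S : γ₀ ∈ x.support \ {0} := hSwf.min_mem hSne
    have h0 : γ₀ ≠ 0 := hγ₀S.2
    obtain ⟨ψ, hψ⟩ := H.cls_exists h0
    have hmem : x.coeff γ₀ ≠ 0 := (HahnSeries.mem_support _ _).1 hγ₀S.1
    have hmin : ∀ γ' : Γ, x.coeff γ' ≠ 0 → γ' ≠ 0 → γ₀ ≤ γ' := fun γ' hc hz =>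
      hSwf.min_le hSne ⟨(HahnSeries.mem_support _ _).2 hc, hz⟩
    have := hD.D_orderTop hθ hmono hθ2 h0 hψ hmem hmin
    rw [hx, orderTop_zero] at this
    exact WithTop.coe_ne_top this.symm
  · rintro ⟨c, rfl⟩
    rw [HahnSeries.C_apply]
    exact hD.D_C c

theorem IsSeriesDerivation.hdone_of (hD : IsSeriesDerivation H ι D)
    {θ : Φ → Γ} (hθ : ∀ φ, (logDer H D φ).orderTop = ((θ φ : Γ) : WithTop Γ))
    (hmono : ∀ φ₁ φ₂ : Φ, φ₁ < φ₂ → θ φ₁ < θ φ₂)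
    (hθ2 : ∀ φ₁ φ₂ : Φ, φ₁ < φ₂ → ((φ₁ : Φ) : WithTop Φ) < (H.e (θ φ₁ - θ φ₂)).orderTop) :
    HDone D := by
  have hker := hD.ker_iff hθ hmono hθ2
  refine Set.ext (fun x => ?_)
  simp only [Set.mem_setOf_eq]
  constructor
  · intro hx
    refine ⟨HahnSeries.single 0 (x.coeff 0), x - HahnSeries.single 0 (x.coeff 0),
      hD.D_C _, ?_, by abel⟩
    set m := x - HahnSeries.single 0 (x.coeff 0) with hm
    by_cases hm0 : m = 0
    · rw [hm0, orderTop_zero]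
      exact WithTop.coe_lt_top (0:Γ)
    · obtain ⟨g₀, hg₀⟩ := exists_orderTop_eq hm0
      have hc : m.coeff g₀ ≠ 0 := coeff_orderTop_ne hg₀
      have hg₀pos : 0 < g₀ := by
        by_contra hle
        push_neg at hle
        rcases hle.lt_or_eq with h' | h'
        · have hxg : x.coeff g₀ = 0 := coeff_eq_zero_of_lt_orderTop
            (lt_of_lt_of_le (by exact_mod_cast h' : ((g₀:Γ) : WithTop Γ) < ((0:Γ) : WithTop Γ))
              (by simpa using hx))
          apply hc
          rw [hm, HahnSeries.coeff_sub, hxg, HahnSeries.coeff_single_of_ne (ne_of_lt h'),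
            sub_zero]
        · apply hc
          rw [h', hm, HahnSeries.coeff_sub, HahnSeries.coeff_single_same, sub_self]
      rw [hg₀]
      exact_mod_cast hg₀pos
  · rintro ⟨c, m, hc, hm, rfl⟩
    obtain ⟨c₀, rfl⟩ := (hker c).1 hc
    refine le_trans (le_min ?_ (le_of_lt hm)) min_orderTop_le_orderTop_add
    rw [HahnSeries.C_apply]
    have := orderTop_single_le (a := (0:Γ)) (r := c₀) (R := k)
    simpa using this
end AuxHD
/-- a series derivation `d` on `k((Γ))` satisfies (HD2) and (HD3) if and only
if condition (H3) holds: for `φ₁ < φ₂` one has `θ_{φ₁} < θ_{φ₂}` and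
`v_Γ(θ_{φ₁} − θ_{φ₂}) > φ₁`, where `θ_φ = v(d(t_φ)/t_φ)`.  In that case (HD1) also holds,
with `ker d = k`, so `d` is a Hardy type derivation. -/
theorem hardy_type_criterion {Φ : Type*} [LinearOrder Φ]
    {Γ : Type*} [AddCommGroup Γ] [LinearOrder Γ] [IsOrderedAddMonoid Γ] {k : Type*} [Field k]
    (H : HahnEmbeddingData Φ Γ) (ι : ℝ →+* k)
    (D : HahnSeries Γ k → HahnSeries Γ k) (hD : IsSeriesDerivation H ι D)
    (θ : Φ → Γ) (hθ : ∀ φ, (logDer H D φ).orderTop = ((θ φ : Γ) : WithTop Γ)) :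
    ((HDtwo D ∧ HDthree D) ↔
      (∀ φ₁ φ₂ : Φ, φ₁ < φ₂ → θ φ₁ < θ φ₂ ∧
        ((φ₁ : Φ) : WithTop Φ) < (H.e (θ φ₁ - θ φ₂)).orderTop)) ∧
    ((∀ φ₁ φ₂ : Φ, φ₁ < φ₂ → θ φ₁ < θ φ₂ ∧
        ((φ₁ : Φ) : WithTop Φ) < (H.e (θ φ₁ - θ φ₂)).orderTop) →
      (HDone D ∧ ∀ x : HahnSeries Γ k, D x = 0 ↔ ∃ c : k, x = HahnSeries.C c)) := by
  constructor
  · constructor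
    · rintro ⟨h2, h3⟩
      -- Part (i): θ is strictly increasing.
      have hi : ∀ φ₁ φ₂ : Φ, φ₁ < φ₂ → θ φ₁ < θ φ₂ := by
        intro φ₁ φ₂ h12
        have ha : tmon H k φ₁ ≠ 0 := HahnSeries.single_ne_zero one_ne_zero
        have hb : tmon H k φ₂ ≠ 0 := HahnSeries.single_ne_zero one_ne_zero
        have hoa : (tmon H k φ₁).order = H.b φ₁ := HahnSeries.order_single one_ne_zero
        have hob : (tmon H k φ₂).order = H.b φ₂ := HahnSeries.order_single one_ne_zero
        have habs : |(tmon H k φ₂).order| < |(tmon H k φ₁).order| := by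
          rw [hoa, hob, abs_of_pos (H.b_pos φ₁), abs_of_pos (H.b_pos φ₂)]
          simpa using H.nsmul_b_lt h12 1
        have hpos : 0 < |(tmon H k φ₂).order| := by
          rw [hob, abs_of_pos (H.b_pos φ₂)]
          exact H.b_pos φ₂
        obtain ⟨hle, heq⟩ := h3 _ _ ha hb habs hpos
        have hle' : ((θ φ₁ : Γ) : WithTop Γ) ≤ ((θ φ₂ : Γ) : WithTop Γ) := by
          rw [← hθ φ₁, ← hθ φ₂]
          exact hle
        have hne : θ φ₁ ≠ θ φ₂ := by
          intro he
          have harch : ArchEquiv (tmon H k φ₁).order (tmon H k φ₂).order := by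
            refine heq.1 ?_
            show (logDer H D φ₁).orderTop = (logDer H D φ₂).orderTop
            rw [hθ φ₁, hθ φ₂, he]
          rw [hoa, hob] at harch
          exact H.not_archEquiv_of_cls_lt (ne_of_gt (H.b_pos φ₁)) (H.orderTop_e_b φ₁)
            (H.orderTop_e_b φ₂) h12 harch
        exact lt_of_le_of_ne (by exact_mod_cast hle') hne
      -- Part (ii): the valuation condition.
      intro φ₁ φ₂ h12
      refine ⟨hi φ₁ φ₂ h12, ?_⟩
      by_contra hcon
      push_neg at hcon
      have hδpos : 0 < θ φ₂ - θ φ₁ := sub_pos.2 (hi _ _ h12)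
      set δ := θ φ₂ - θ φ₁ with hδ
      have hδne : δ ≠ 0 := ne_of_gt hδpos
      have heδ : H.e (θ φ₁ - θ φ₂) = - H.e δ := by
        rw [← map_neg]
        congr 1
        rw [hδ]
        abel
      obtain ⟨ψ, hψ⟩ := H.cls_exists hδne
      have hψle : ψ ≤ φ₁ := by
        rw [heδ, HahnSeries.orderTop_neg, hψ] at hcon
        exact_mod_cast hcon
      have hbo : (HahnSeries.single δ (1:k)).order = δ := HahnSeries.order_single one_ne_zero
      have hao : (HahnSeries.single (H.b φ₂) (1:k)).order = H.b φ₂ :=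
        HahnSeries.order_single one_ne_zero
      have hblt : H.b φ₂ < δ := by
        have hkey : 0 < δ + (-(H.b φ₂)) := by
          refine H.pos_add_small hδpos hψ ?_
          rw [map_neg, HahnSeries.orderTop_neg, H.orderTop_e_b]
          exact_mod_cast lt_of_le_of_lt hψle h12
        rw [← sub_eq_add_neg, sub_pos] at hkey
        exact hkey
      have h2' := h2 (HahnSeries.single (H.b φ₂) 1) (HahnSeries.single δ 1)
        (HahnSeries.single_ne_zero one_ne_zero) (HahnSeries.single_ne_zero one_ne_zero)
        (by rw [hao]; exact ne_of_gt (H.b_pos φ₂)) (by rw [hbo]; exact hδne)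
      have hle : (HahnSeries.single (H.b φ₂) (1:k)).orderTop
          ≤ (HahnSeries.single δ (1:k)).orderTop := by
        rw [HahnSeries.orderTop_single one_ne_zero, HahnSeries.orderTop_single one_ne_zero]
        exact_mod_cast le_of_lt hblt
      have hDle := h2'.1 hle
      rw [hD.D_single_orderTop hθ hi (ne_of_gt (H.b_pos φ₂)) (H.orderTop_e_b φ₂),
        hD.D_single_orderTop hθ hi hδne hψ, WithTop.coe_le_coe] at hDle
      have hθψ : θ ψ ≤ θ φ₁ := hψle.lt_or_eq.elim (fun h => le_of_lt (hi _ _ h))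
        (fun h => by rw [h])
      have hfinal : H.b φ₂ + θ φ₂ ≤ θ φ₂ :=
        calc H.b φ₂ + θ φ₂ ≤ δ + θ ψ := hDle
          _ ≤ δ + θ φ₁ := add_le_add_right hθψ δ
          _ = θ φ₂ := by rw [hδ]; abel
      exact absurd (H.b_pos φ₂) (not_lt.2 (add_le_iff_nonpos_left.1 hfinal))
    · intro hH3
      have hmono : ∀ φ₁ φ₂ : Φ, φ₁ < φ₂ → θ φ₁ < θ φ₂ := fun φ₁ φ₂ h => (hH3 φ₁ φ₂ h).1
      have hθ2 : ∀ φ₁ φ₂ : Φ, φ₁ < φ₂ →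
          ((φ₁ : Φ) : WithTop Φ) < (H.e (θ φ₁ - θ φ₂)).orderTop :=
        fun φ₁ φ₂ h => (hH3 φ₁ φ₂ h).2
      exact ⟨hD.hd2_of hθ hmono hθ2, hD.hd3_of hθ hmono hθ2⟩
  · intro hH3
    have hmono : ∀ φ₁ φ₂ : Φ, φ₁ < φ₂ → θ φ₁ < θ φ₂ := fun φ₁ φ₂ h => (hH3 φ₁ φ₂ h).1
    have hθ2 : ∀ φ₁ φ₂ : Φ, φ₁ < φ₂ →
        ((φ₁ : Φ) : WithTop Φ) < (H.e (θ φ₁ - θ φ₂)).orderTop :=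
      fun φ₁ φ₂ h => (hH3 φ₁ φ₂ h).2
    exact ⟨hD.hdone_of hθ hmono hθ2, hD.ker_iff hθ hmono hθ2⟩
end

section
/- Let k be an ordered field, order k((Γ)) lexicographically (so that its valuation ring k[[Γ_{≥0}]] is the convex hull of k), and let d be a series derivation of Hardy type on k((Γ)). Then k((Γ)) is an H-field if and only if for every φ ∈ Φ one has d(t_φ)/t_φ < 0, i.e. the leading coefficient of d(t_φ)/t_φ is negative. -/
/- Common setting: a generalized series field `k((Γ))`, where the totally ordered abelian
group `Γ` is regarded, via Hahn's embedding theorem, as a subgroup of the Hahn group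
`Σ_{φ ∈ Φ} ℝ = HahnSeries Φ ℝ`, and the coefficient field `k` contains the real exponents
(via a ring homomorphism `ι : ℝ →+* k`). -/

open HahnSeries

section Aux
open HahnSeries

theorem lexPos_iff_aux {Φ : Type*} [LinearOrder Φ] {R : Type*} [Zero R] [PartialOrder R]
    {x : HahnSeries Φ R} :
    LexPos x ↔ ∃ φ : Φ, x.orderTop = (φ : WithTop Φ) ∧ 0 < x.coeff φ := by
  constructor
  · rintro ⟨φ, h1, h2⟩
    refine ⟨φ, orderTop_eq_of_le ((mem_support _ _).2 (ne_of_gt h1)) ?_, h1⟩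
    intro g hg
    by_contra hlt
    push_neg at hlt
    exact (mem_support _ _).1 hg (h2 g hlt)
  · rintro ⟨φ, h1, h2⟩
    refine ⟨φ, h2, fun ψ hψ => coeff_eq_zero_of_lt_orderTop ?_⟩
    rw [h1]
    exact_mod_cast hψ

theorem lexPos_neg_iff_aux {Φ : Type*} [LinearOrder Φ] {R : Type*}
    [AddCommGroup R] [LinearOrder R] [IsOrderedAddMonoid R] {x : HahnSeries Φ R} :
    LexPos (-x) ↔ ∃ φ : Φ, x.orderTop = (φ : WithTop Φ) ∧ x.coeff φ < 0 := by
  rw [lexPos_iff_aux]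
  simp only [orderTop_neg, coeff_neg, neg_pos]

theorem lexPos_ne_zero {Φ : Type*} [LinearOrder Φ] {R : Type*} [Zero R] [PartialOrder R]
    {x : HahnSeries Φ R} (h : LexPos x) : x ≠ 0 := by
  obtain ⟨φ, h1, h2⟩ := lexPos_iff_aux.1 h
  rw [ne_eq, ← orderTop_eq_top, h1]
  exact fun hc => by simp at hc

theorem iota_neg_aux {k : Type*} [Field k] [LinearOrder k] [IsStrictOrderedRing k] (ι : ℝ →+* k) {r : ℝ} (hr : r < 0) :
    ι r < 0 := by
  have h0 : (0:ℝ) ≤ -r := by linarith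
  have h1 : ι (-r) = ι (Real.sqrt (-r)) ^ 2 := by
    rw [← map_pow, Real.sq_sqrt h0]
  have h2 : ι (-r) ≠ 0 := by
    intro hc
    have := ι.injective (hc.trans (map_zero ι).symm)
    linarith
  have h3 : 0 < ι (-r) := lt_of_le_of_ne (h1 ▸ sq_nonneg _) (Ne.symm h2)
  rw [map_neg] at h3
  linarith

theorem lexPos_smul_aux {Φ : Type*} [LinearOrder Φ] {k : Type*} [Field k] [LinearOrder k] [IsStrictOrderedRing k]
    {x : HahnSeries Φ k} {c : k} (hc : 0 < c) (h : LexPos x) : LexPos (c • x) := by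
  obtain ⟨φ, h1, h2⟩ := h
  exact ⟨φ, by rw [HahnSeries.coeff_smul, smul_eq_mul]; positivity,
    fun ψ hψ => by rw [HahnSeries.coeff_smul, h2 ψ hψ, smul_zero]⟩

theorem single_one_mul_coeff_aux {Γ : Type*} [AddCommGroup Γ] [LinearOrder Γ] [IsOrderedAddMonoid Γ]
    {k : Type*} [Field k] [LinearOrder k] [IsStrictOrderedRing k] (g y : Γ) (x : HahnSeries Γ k) :
    (HahnSeries.single g (1:k) * x).coeff y = x.coeff (y - g) := by
  rw [show y = (y - g) + g by abel, coeff_single_mul_add, one_mul, add_sub_cancel_right]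

theorem lexPos_single_one_mul_aux {Γ : Type*} [AddCommGroup Γ] [LinearOrder Γ] [IsOrderedAddMonoid Γ]
    {k : Type*} [Field k] [LinearOrder k] [IsStrictOrderedRing k] (g : Γ) {x : HahnSeries Γ k} (h : LexPos x) :
    LexPos (HahnSeries.single g (1:k) * x) := by
  obtain ⟨φ, h1, h2⟩ := h
  refine ⟨g + φ, ?_, fun ψ hψ => ?_⟩
  · rw [single_one_mul_coeff_aux, add_sub_cancel_left]; exact h1
  · rw [single_one_mul_coeff_aux]
    exact h2 _ (by have := sub_lt_sub_right hψ g; simpa [add_sub_cancel_left] using this)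

theorem lexPos_add_of_lt_aux {Γ : Type*} [AddCommGroup Γ] [LinearOrder Γ] [IsOrderedAddMonoid Γ]
    {k : Type*} [Field k] [LinearOrder k] [IsStrictOrderedRing k] {x y : HahnSeries Γ k} (hx : LexPos x)
    (hxy : x.orderTop < y.orderTop) : LexPos (x + y) := by
  obtain ⟨φ, h1, h2⟩ := lexPos_iff_aux.1 hx
  refine ⟨φ, ?_, fun ψ hψ => ?_⟩
  · have hy : (φ : WithTop Γ) < y.orderTop := by rw [← h1]; exact hxy
    rw [coeff_add, coeff_eq_zero_of_lt_orderTop hy, add_zero]; exact h2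
  · have hψx : (ψ : WithTop Γ) < x.orderTop := by rw [h1]; exact_mod_cast hψ
    rw [coeff_add, coeff_eq_zero_of_lt_orderTop hψx,
      coeff_eq_zero_of_lt_orderTop (hψx.trans hxy), add_zero]

theorem b_pos_aux {Φ : Type*} [LinearOrder Φ] {Γ : Type*} [AddCommGroup Γ] [LinearOrder Γ] [IsOrderedAddMonoid Γ]
    (H : HahnEmbeddingData Φ Γ) (φ : Φ) : 0 < H.b φ := by
  refine (H.ord _).2 ?_
  rw [H.hb]
  exact ⟨φ, by simp, fun ψ h => coeff_single_of_ne (ne_of_lt h)⟩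

theorem b_lt_aux {Φ : Type*} [LinearOrder Φ] {Γ : Type*} [AddCommGroup Γ] [LinearOrder Γ] [IsOrderedAddMonoid Γ]
    (H : HahnEmbeddingData Φ Γ) {φ ψ : Φ} (h : φ < ψ) : H.b ψ < H.b φ := by
  rw [← sub_pos]
  refine (H.ord _).2 ?_
  rw [map_sub, H.hb, H.hb]
  refine ⟨φ, ?_, fun ρ hρ => ?_⟩
  · simp [coeff_sub, coeff_single, h.ne]
  · simp [coeff_sub, coeff_single, hρ.ne, (hρ.trans h).ne]

theorem not_archEquiv_aux {Φ : Type*} [LinearOrder Φ] {Γ : Type*}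
    [AddCommGroup Γ] [LinearOrder Γ] [IsOrderedAddMonoid Γ] (H : HahnEmbeddingData Φ Γ) {φ ψ : Φ} (h : φ < ψ) :
    ¬ ArchEquiv (H.b φ) (H.b ψ) := by
  rintro ⟨n, h1, h2⟩
  rw [abs_of_pos (b_pos_aux H φ), abs_of_pos (b_pos_aux H ψ)] at h1
  -- h1 : H.b φ ≤ n • H.b ψ
  have hd : 0 ≤ n • H.b ψ - H.b φ := by rwa [sub_nonneg]
  have hcoeff : (H.e (n • H.b ψ - H.b φ)).coeff φ = -1 := by
    rw [map_sub, map_nsmul, H.hb, H.hb, coeff_sub, coeff_nsmul]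
    simp [coeff_single, h.ne]
  rcases eq_or_lt_of_le hd with heq | hlt
  · rw [← heq] at hcoeff
    simp at hcoeff
  · obtain ⟨ρ, hρ1, hρ2⟩ := (H.ord _).1 hlt
    rcases lt_trichotomy ρ φ with hc | hc | hc
    · have : (H.e (n • H.b ψ - H.b φ)).coeff ρ = 0 := by
        rw [map_sub, map_nsmul, H.hb, H.hb, coeff_sub, coeff_nsmul]
        simp [coeff_single, hc.ne, (hc.trans h).ne]
      rw [this] at hρ1; exact lt_irrefl _ hρ1
    · rw [hc, hcoeff] at hρ1; linarith
    · have := hρ2 φ hc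
      rw [hcoeff] at this; norm_num at this

end Aux

section DAux
open HahnSeries

variable {Φ : Type*} [LinearOrder Φ] {Γ : Type*} [AddCommGroup Γ] [LinearOrder Γ] [IsOrderedAddMonoid Γ]
  {k : Type*} [Field k] [LinearOrder k] [IsStrictOrderedRing k]

theorem hsum_eq_of_unique {α : Type*} (s : SummableFamily Γ k α) (i0 : α)
    (h : ∀ i, i ≠ i0 → s i = 0) : s.hsum = s i0 := by
  ext g
  rw [SummableFamily.coeff_hsum]
  exact finsum_eq_single _ i0 (fun i hi => by rw [h i hi]; simp)

theorem D_one_aux (H : HahnEmbeddingData Φ Γ) (ι : ℝ →+* k)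
    {D : HahnSeries Γ k → HahnSeries Γ k} (hSD : IsSeriesDerivation H ι D) :
    D 1 = 0 := by
  have h := hSD.leibniz 1 1
  rw [mul_one, mul_one, one_mul] at h
  exact left_eq_add.mp h

theorem D_zero_aux (H : HahnEmbeddingData Φ Γ) (ι : ℝ →+* k)
    {D : HahnSeries Γ k → HahnSeries Γ k} (hSD : IsSeriesDerivation H ι D) :
    D 0 = 0 := by
  have h := hSD.map_add 0 0
  rw [add_zero] at h
  exact left_eq_add.mp h

theorem D_single_smul_aux (H : HahnEmbeddingData Φ Γ) (ι : ℝ →+* k)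
    {D : HahnSeries Γ k → HahnSeries Γ k} (hSD : IsSeriesDerivation H ι D) (γ : Γ) (c : k) :
    D (HahnSeries.single γ c) = c • D (HahnSeries.single γ 1) := by
  obtain ⟨s, hs, hsum⟩ := hSD.strong_linear (HahnSeries.single γ c)
  rw [hsum, hsum_eq_of_unique s γ
    (fun i hi => by rw [hs i, coeff_single_of_ne hi, zero_smul]),
    hs γ, coeff_single_same]

theorem D_const_aux (H : HahnEmbeddingData Φ Γ) (ι : ℝ →+* k)
    {D : HahnSeries Γ k → HahnSeries Γ k} (hSD : IsSeriesDerivation H ι D) (c : k) :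
    D (HahnSeries.single (0:Γ) c) = 0 := by
  rw [D_single_smul_aux H ι hSD, single_zero_one, D_one_aux H ι hSD, smul_zero]

theorem logDer_lt_aux (H : HahnEmbeddingData Φ Γ) (ι : ℝ →+* k)
    {D : HahnSeries Γ k → HahnSeries Γ k} (hd3 : HDthree D) {φ ψ : Φ} (h : φ < ψ) :
    (logDer H D φ).orderTop < (logDer H D ψ).orderTop := by
  have hφ0 : (tmon H k φ) ≠ 0 := single_ne_zero one_ne_zero
  have hψ0 : (tmon H k ψ) ≠ 0 := single_ne_zero one_ne_zero
  have horderφ : (tmon H k φ).order = H.b φ := order_single one_ne_zero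
  have horderψ : (tmon H k ψ).order = H.b ψ := order_single one_ne_zero
  have habs : |(tmon H k ψ).order| < |(tmon H k φ).order| := by
    rw [horderφ, horderψ, abs_of_pos (b_pos_aux H ψ), abs_of_pos (b_pos_aux H φ)]
    exact b_lt_aux H h
  have hpos : 0 < |(tmon H k ψ).order| := by
    rw [horderψ, abs_of_pos (b_pos_aux H ψ)]
    exact b_pos_aux H ψ
  obtain ⟨hle, hiff⟩ := hd3 (tmon H k φ) (tmon H k ψ) hφ0 hψ0 habs hpos
  refine lt_of_le_of_ne hle ?_
  intro heq
  apply not_archEquiv_aux H h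
  rw [← horderφ, ← horderψ]
  exact hiff.1 heq

theorem lexPos_D_single_neg (H : HahnEmbeddingData Φ Γ) (ι : ℝ →+* k)
    {D : HahnSeries Γ k → HahnSeries Γ k} (hD : IsHardySeriesDerivation H ι D)
    (hlog : ∀ φ : Φ, LexPos (-(logDer H D φ))) {γ : Γ} (hγ : γ < 0) :
    LexPos (D (HahnSeries.single γ (1:k))) := by
  obtain ⟨hSD, hd1, hd2, hd3⟩ := hD
  obtain ⟨s, hs, hDs⟩ := hSD.strong_leibniz γ
  have hα : LexPos (-(H.e γ)) := by
    have := (H.ord (-γ)).1 (neg_pos.2 hγ)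
    rwa [map_neg] at this
  obtain ⟨φ0, hφ0top, hφ0neg⟩ := lexPos_neg_iff_aux.1 hα
  obtain ⟨u0, hu0top, hu0neg⟩ := lexPos_neg_iff_aux.1 (hlog φ0)
  have hcoeff : ∀ (φ : Φ) (y : Γ),
      (s φ).coeff y = ι ((H.e γ).coeff φ) * (logDer H D φ).coeff (y - γ) := by
    intro φ y
    rw [hs φ, HahnSeries.coeff_smul, smul_eq_mul, single_one_mul_coeff_aux]
  have hvanish : ∀ (φ : Φ), φ ≠ φ0 → ∀ y : Γ, y ≤ γ + u0 → (s φ).coeff y = 0 := by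
    intro φ hφ y hy
    rcases eq_or_ne ((H.e γ).coeff φ) 0 with hz | hz
    · rw [hcoeff, hz, map_zero, zero_mul]
    · have hlt : φ0 < φ := by
        refine lt_of_le_of_ne ?_ (Ne.symm hφ)
        have h5 := orderTop_le_of_coeff_ne_zero hz
        rw [hφ0top] at h5
        exact_mod_cast h5
      have hlog_lt := logDer_lt_aux H ι hd3 hlt
      have h6 : ((y - γ : Γ) : WithTop Γ) < (logDer H D φ).orderTop := by
        refine lt_of_le_of_lt ?_ hlog_lt
        rw [hu0top]
        exact_mod_cast sub_le_iff_le_add'.2 hy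
      rw [hcoeff, coeff_eq_zero_of_lt_orderTop h6, mul_zero]
  have hφ0coeff : ∀ y : Γ, y < γ + u0 → (s φ0).coeff y = 0 := by
    intro y hy
    have h6 : ((y - γ : Γ) : WithTop Γ) < (logDer H D φ0).orderTop := by
      rw [hu0top]
      exact_mod_cast sub_lt_iff_lt_add'.2 hy
    rw [hcoeff, coeff_eq_zero_of_lt_orderTop h6, mul_zero]
  rw [hDs]
  refine ⟨γ + u0, ?_, fun ψ hψ => ?_⟩
  · rw [SummableFamily.coeff_hsum, finsum_eq_single _ φ0 (fun φ hφ => hvanish φ hφ _ le_rfl),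
      hcoeff, add_sub_cancel_left]
    exact mul_pos_of_neg_of_neg (iota_neg_aux ι hφ0neg) hu0neg
  · rw [SummableFamily.coeff_hsum]
    refine finsum_eq_zero_of_forall_eq_zero (fun φ => ?_)
    rcases eq_or_ne φ φ0 with rfl | hφ
    · exact hφ0coeff ψ hψ
    · exact hvanish φ hφ ψ (le_of_lt hψ)

end DAux

/-- let `k` be an ordered field, order `k((Γ))` lexicographically, and let `d`
be a series derivation of Hardy type on `k((Γ))`.  Then `k((Γ))` is an H-field (axioms
(HF1): `O_v = ker d + m_v`, and (HF2): `f > 0` and `v(f) < 0` imply `d(f) > 0`) if and only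
if for every `φ ∈ Φ` the leading coefficient of `d(t_φ)/t_φ` is negative, i.e.
`d(t_φ)/t_φ < 0`. -/
theorem hfield_iff_logder_neg {Φ : Type*} [LinearOrder Φ]
    {Γ : Type*} [AddCommGroup Γ] [LinearOrder Γ] [IsOrderedAddMonoid Γ] {k : Type*} [Field k] [LinearOrder k] [IsStrictOrderedRing k]
    (H : HahnEmbeddingData Φ Γ) (ι : ℝ →+* k)
    (D : HahnSeries Γ k → HahnSeries Γ k) (hD : IsHardySeriesDerivation H ι D) :
    (HDone D ∧
      ∀ f : HahnSeries Γ k, LexPos f → f.orderTop < (0 : WithTop Γ) → LexPos (D f)) ↔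
    (∀ φ : Φ, LexPos (-(logDer H D φ))) := by
  open HahnSeries in
  obtain ⟨hSD, hd1, hd2, hd3⟩ := hD
  constructor
  · rintro ⟨-, hHF⟩ φ
    have hgpos : 0 < H.b φ := b_pos_aux H φ
    have hmul1 : (HahnSeries.single (H.b φ) (1:k)) * HahnSeries.single (-(H.b φ)) (1:k) = 1 := by
      rw [single_mul_single, add_neg_cancel, one_mul, single_zero_one]
    have htinv : (tmon H k φ)⁻¹ = HahnSeries.single (-(H.b φ)) (1:k) :=
      inv_eq_of_mul_eq_one_right hmul1
    have hLP : LexPos (HahnSeries.single (-(H.b φ)) (1:k)) :=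
      ⟨-(H.b φ), by simp, fun ψ h => coeff_single_of_ne (ne_of_lt h)⟩
    have hord : (HahnSeries.single (-(H.b φ)) (1:k)).orderTop < (0 : WithTop Γ) := by
      rw [orderTop_single one_ne_zero]
      exact_mod_cast neg_lt_zero.2 hgpos
    have hDtinv := hHF _ hLP hord
    have hld : logDer H D φ
        = D (HahnSeries.single (H.b φ) (1:k)) * HahnSeries.single (-(H.b φ)) (1:k) := by
      show D (tmon H k φ) * (tmon H k φ)⁻¹ = _
      rw [htinv]
      rfl
    have hleib := hSD.leibniz (HahnSeries.single (H.b φ) (1:k))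
      (HahnSeries.single (-(H.b φ)) (1:k))
    rw [hmul1, D_one_aux H ι hSD] at hleib
    have key := neg_eq_of_add_eq_zero_right hleib.symm
    rw [hld, key]
    exact lexPos_single_one_mul_aux _ hDtinv
  · intro hlog
    refine ⟨hd1, ?_⟩
    intro f hf hford
    obtain ⟨γ, hγtop, hγc⟩ := lexPos_iff_aux.1 hf
    have hγ : γ < 0 := by
      rw [hγtop] at hford
      exact_mod_cast hford
    set c : k := f.coeff γ with hc
    set g : HahnSeries Γ k := f - HahnSeries.single γ c with hgdef
    set c0 : k := g.coeff 0 with hc0def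
    set g' : HahnSeries Γ k := g - HahnSeries.single 0 c0 with hg'def
    have hDf : D f = c • D (HahnSeries.single γ 1) + D g' := by
      have h1 : D f = D (HahnSeries.single γ c) + D g := by
        rw [← hSD.map_add]
        congr 1
        rw [hgdef]
        abel
      have h2 : D g = D (HahnSeries.single (0:Γ) c0) + D g' := by
        rw [← hSD.map_add]
        congr 1
        rw [hg'def]
        abel
      rw [h1, h2, D_const_aux H ι hSD, zero_add, D_single_smul_aux H ι hSD]
    have hX : LexPos (c • D (HahnSeries.single γ (1:k))) :=
      lexPos_smul_aux hγc (lexPos_D_single_neg H ι ⟨hSD, hd1, hd2, hd3⟩ hlog hγ)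
    by_cases hg'0 : g' = 0
    · rw [hDf, hg'0, D_zero_aux H ι hSD, add_zero]
      exact hX
    · have hcoeffg' : ∀ y : Γ, y ≤ γ → g'.coeff y = 0 := by
        intro y hy
        rw [hg'def, coeff_sub, hgdef, coeff_sub]
        have hy0 : y ≠ 0 := ne_of_lt (lt_of_le_of_lt hy hγ)
        rw [coeff_single_of_ne hy0, sub_zero]
        rcases eq_or_lt_of_le hy with rfl | hylt
        · rw [coeff_single_same, sub_self]
        · rw [coeff_single_of_ne (ne_of_lt hylt),
            coeff_eq_zero_of_lt_orderTop (by rw [hγtop]; exact_mod_cast hylt), sub_zero]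
      have hcz : g'.coeff 0 = 0 := by
        rw [hg'def, coeff_sub, coeff_single_same, hc0def, sub_self]
      have hordg' : g'.order ≠ 0 := by
        intro hcon
        exact (mt coeff_order_eq_zero.1 hg'0) (by rw [hcon]; exact hcz)
      have hordgt : (γ : WithTop Γ) < g'.orderTop := by
        have h5 : γ < g'.order :=
          lt_of_not_ge fun hle => (mt coeff_order_eq_zero.1 hg'0) (hcoeffg' _ hle)
        rw [← order_eq_orderTop_of_ne_zero hg'0]
        exact_mod_cast h5
      have ha0 : (HahnSeries.single γ c : HahnSeries Γ k) ≠ 0 := single_ne_zero (ne_of_gt hγc)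
      have horda : (HahnSeries.single γ c : HahnSeries Γ k).order = γ :=
        order_single (ne_of_gt hγc)
      have h2a := hd2 (HahnSeries.single γ c) g' ha0 hg'0
        (by rw [horda]; exact ne_of_lt hγ) hordg'
      have h2b := hd2 g' (HahnSeries.single γ c) hg'0 ha0 hordg'
        (by rw [horda]; exact ne_of_lt hγ)
      have hle1 : (HahnSeries.single γ c : HahnSeries Γ k).orderTop ≤ g'.orderTop := by
        rw [orderTop_single (ne_of_gt hγc)]
        exact le_of_lt hordgt
      have hnle : ¬ g'.orderTop ≤ (HahnSeries.single γ c : HahnSeries Γ k).orderTop := by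
        rw [orderTop_single (ne_of_gt hγc)]
        exact not_le.2 hordgt
      have hDlt : (D (HahnSeries.single γ c)).orderTop < (D g').orderTop :=
        lt_of_le_not_ge (h2a.1 hle1) fun hcon => hnle (h2b.2 hcon)
      rw [D_single_smul_aux H ι hSD] at hDlt
      rw [hDf]
      exact lexPos_add_of_lt_aux hX hDlt
end

section
/- Let Φ be order isomorphic to a subset S of ℝ, let Γ be a subgroup of the Hahn group Σ_{φ∈Φ} ℝ (with all ribs A_φ = ℝ), and let k contain all real exponents appearing in elements of Γ. Then k((Γ)) carries a series derivation of Hardy type d such that for every φ ∈ Φ, d(t_φ)/t_φ is a monomial c_φ t^{θ_φ} with c_φ ∈ k. -/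
/- Common setting: a generalized series field `k((Γ))`, where the totally ordered abelian
group `Γ` is regarded, via Hahn's embedding theorem, as a subgroup of the Hahn group
`Σ_{φ ∈ Φ} ℝ = HahnSeries Φ ℝ`, and the coefficient field `k` contains the real exponents
(via a ring homomorphism `ι : ℝ →+* k`). -/

open HahnSeries

noncomputable section HardyProofSection

namespace HardyProof

open HahnSeries Set

variable {Φ : Type*} [LinearOrder Φ] {Γ : Type*} [AddCommGroup Γ] [LinearOrder Γ] [IsOrderedAddMonoid Γ]
  {k : Type*} [Field k]

theorem e_ne_zero (H : HahnEmbeddingData Φ Γ) {γ : Γ} (h : γ ≠ 0) : H.e γ ≠ 0 :=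
  fun h0 => h (H.inj (by rw [h0, map_zero]))

theorem pos_of_coeff (H : HahnEmbeddingData Φ Γ) {γ : Γ} {u : Φ}
    (hu : 0 < (H.e γ).coeff u) (hlow : ∀ w, w < u → (H.e γ).coeff w = 0) : 0 < γ :=
  (H.ord γ).mpr ⟨u, hu, hlow⟩

/-- The leading exponent of (the Hahn embedding image of) a nonzero element. -/
def lexp (H : HahnEmbeddingData Φ Γ) {γ : Γ} (h : γ ≠ 0) : Φ :=
  (H.e γ).isWF_support.min (support_nonempty_iff.2 (e_ne_zero H h))

theorem lexp_mem (H : HahnEmbeddingData Φ Γ) {γ : Γ} (h : γ ≠ 0) :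
    (H.e γ).coeff (lexp H h) ≠ 0 :=
  (H.e γ).isWF_support.min_mem _

theorem lexp_le (H : HahnEmbeddingData Φ Γ) {γ : Γ} (h : γ ≠ 0) {w : Φ}
    (hw : (H.e γ).coeff w ≠ 0) : lexp H h ≤ w :=
  Set.IsWF.min_le _ _ hw

theorem coeff_of_lt_lexp (H : HahnEmbeddingData Φ Γ) {γ : Γ} (h : γ ≠ 0) {w : Φ}
    (hw : w < lexp H h) : (H.e γ).coeff w = 0 := by
  by_contra hc
  exact absurd (lexp_le H h hc) hw.not_ge

theorem lexp_coeff_pos (H : HahnEmbeddingData Φ Γ) {γ : Γ} (h : γ ≠ 0) (hpos : 0 < γ) :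
    0 < (H.e γ).coeff (lexp H h) := by
  obtain ⟨w, hw, hlow⟩ := (H.ord γ).mp hpos
  have h1 : lexp H h ≤ w := lexp_le H h (ne_of_gt hw)
  have h2 : ¬ lexp H h < w := fun hlt => lexp_mem H h (hlow _ hlt)
  have : lexp H h = w := le_antisymm h1 (not_lt.mp h2)
  rw [this]; exact hw

/-- The squeeze lemma: if `0 ≤ x ≤ B` and all coefficients of `B` up to level `φ0`
vanish, then so do those of `x`. -/
theorem squeeze (H : HahnEmbeddingData Φ Γ) {x B : Γ} {φ0 : Φ}
    (hx : 0 ≤ x) (hxB : x ≤ B) (hB : ∀ χ, χ ≤ φ0 → (H.e B).coeff χ = 0) :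
    ∀ χ, χ ≤ φ0 → (H.e x).coeff χ = 0 := by
  intro χ hχ
  by_contra hc
  have hx0 : x ≠ 0 := by
    rintro rfl
    rw [map_zero] at hc
    exact hc rfl
  have hxpos : 0 < x := hx.lt_of_ne (Ne.symm hx0)
  set u := lexp H hx0 with hu
  have huχ : u ≤ χ := lexp_le H hx0 hc
  have huφ0 : u ≤ φ0 := huχ.trans hχ
  have hxB' : x ≠ B := by
    rintro rfl
    exact hc (hB χ hχ)
  have hBx : 0 < B - x := sub_pos.mpr (hxB.lt_of_ne hxB')
  obtain ⟨w, hw, hlow⟩ := (H.ord (B - x)).mp hBx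
  have hcoeffu : (H.e (B - x)).coeff u = -((H.e x).coeff u) := by
    rw [map_sub, coeff_sub, hB u huφ0, zero_sub]
  have hxu : 0 < (H.e x).coeff u := lexp_coeff_pos H hx0 hxpos
  have hwu : ¬ w < u := by
    intro hwu
    have : (H.e (B - x)).coeff w = 0 := by
      rw [map_sub, coeff_sub, hB w ((hwu.le.trans huχ).trans hχ),
        coeff_of_lt_lexp H hx0 hwu, sub_zero]
    rw [this] at hw; exact lt_irrefl 0 hw
  have hup : ¬ u < w := by
    intro hup
    have := hlow u hup
    rw [hcoeffu, neg_eq_zero] at this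
    exact (ne_of_gt hxu) this
  have : w = u := le_antisymm (not_lt.mp hup) (not_lt.mp hwu)
  rw [this, hcoeffu] at hw
  exact absurd hw (not_lt.mpr (le_of_lt (neg_neg_iff_pos.mpr hxu)))

end HardyProof
noncomputable section HardyProofSection2

namespace HardyProof

open HahnSeries Set

variable {Φ : Type*} [LinearOrder Φ] {Γ : Type*} [AddCommGroup Γ] [LinearOrder Γ] [IsOrderedAddMonoid Γ]
  {k : Type*} [Field k]

/-- A choice of exponents `θ φ` for the logarithmic derivatives `d t_φ / t_φ = t^{θ φ}`,
with the property that for `φ < ψ` the difference `θ ψ - θ φ` is positive with leading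
exponent strictly above `φ`. -/
structure ThetaPack (H : HahnEmbeddingData Φ Γ) where
  θ : Φ → Γ
  key : ∀ {φ ψ : Φ}, φ < ψ → ∃ u, φ < u ∧ 0 < (H.e (θ ψ - θ φ)).coeff u ∧
      ∀ w, w < u → (H.e (θ ψ - θ φ)).coeff w = 0

variable {H : HahnEmbeddingData Φ Γ}

theorem ThetaPack.mono (T : ThetaPack H) : StrictMono T.θ := by
  intro φ ψ h
  obtain ⟨u, -, hu, hlow⟩ := T.key h
  have := pos_of_coeff H hu hlow
  exact sub_pos.mp this

theorem ThetaPack.star (T : ThetaPack H) {φ ψ : Φ} (h : φ < ψ) :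
    ∀ χ, χ ≤ φ → (H.e (T.θ ψ - T.θ φ)).coeff χ = 0 := by
  intro χ hχ
  obtain ⟨u, hu, -, hlow⟩ := T.key h
  exact hlow χ (lt_of_le_of_lt hχ hu)

/-- The key combinatorial lemma: there is no sequence of pairs `(γ n, φ n)` with `γ`
nondecreasing, `φ` strictly decreasing, `φ n` in the support of `e (γ n)`, and
`γ n + θ (φ n)` bounded above by its initial value. -/
theorem ThetaPack.no_bad (T : ThetaPack H) (γs : ℕ → Γ) (φs : ℕ → Φ)
    (hγ : Monotone γs) (hφ : StrictAnti φs)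
    (hsupp : ∀ n, (H.e (γs n)).coeff (φs n) ≠ 0)
    (hδ : ∀ n, γs n + T.θ (φs n) ≤ γs 0 + T.θ (φs 0)) : False := by
  have key : ∀ n : ℕ, 0 < n → (H.e (γs 0)).coeff (φs n) ≠ 0 := by
    intro n hn
    have hφn : φs n < φs 0 := hφ hn
    have hxB : γs n - γs 0 ≤ T.θ (φs 0) - T.θ (φs n) := by
      have := hδ n
      have h2 : γs n + T.θ (φs n) - (γs 0 + T.θ (φs n)) ≤
          γs 0 + T.θ (φs 0) - (γs 0 + T.θ (φs n)) := by
        exact sub_le_sub_right (this.trans (le_of_eq rfl)) _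
      calc γs n - γs 0 = γs n + T.θ (φs n) - (γs 0 + T.θ (φs n)) := by abel
        _ ≤ γs 0 + T.θ (φs 0) - (γs 0 + T.θ (φs n)) := h2
        _ = T.θ (φs 0) - T.θ (φs n) := by abel
    have hzero : (H.e (γs n - γs 0)).coeff (φs n) = 0 :=
      squeeze H (sub_nonneg.mpr (hγ (Nat.zero_le n))) hxB
        (T.star hφn) (φs n) le_rfl
    rw [map_sub, coeff_sub, sub_eq_zero] at hzero
    rw [← hzero]
    exact hsupp n
  have hWF := (H.e (γs 0)).isWF_support
  rw [Set.isWF_iff_no_descending_seq] at hWF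
  exact hWF (fun n => φs (n + 1)) (hφ.comp_strictMono (fun a b h => Nat.add_lt_add_right h 1))
    (fun n => key (n + 1) (Nat.succ_pos n))

/-- The set of pairs contributing to a given coefficient of the derivative. -/
def pairSet (H : HahnEmbeddingData Φ Γ) (T : ThetaPack H) (x : HahnSeries Γ k) (δ : Γ) :
    Set (Γ × Φ) :=
  {p | x.coeff p.1 ≠ 0 ∧ (H.e p.1).coeff p.2 ≠ 0 ∧ p.1 + T.θ p.2 = δ}

theorem pairSet_finite (T : ThetaPack H) (x : HahnSeries Γ k) (δ : Γ) :
    (pairSet H T x δ).Finite := by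
  by_contra hinf
  have hinf' : (pairSet H T x δ).Infinite := hinf
  let f := hinf'.natEmbedding
  have hmem : ∀ n : ℕ, ((f n : Γ × Φ).1) ∈ x.support := fun n => (f n).2.1
  obtain ⟨g, hg⟩ := x.isPWO_support.exists_monotone_subseq (f := fun n => (f n : Γ × Φ).1) hmem
  set γs : ℕ → Γ := fun n => (f (g n) : Γ × Φ).1 with hγs
  set φs : ℕ → Φ := fun n => (f (g n) : Γ × Φ).2 with hφs
  have hθeq : ∀ n, γs n + T.θ (φs n) = δ := fun n => (f (g n)).2.2.2
  have hstrict : ∀ m n : ℕ, m < n → γs m < γs n := by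
    intro m n hmn
    have hle : γs m ≤ γs n := hg hmn.le
    rcases lt_or_eq_of_le hle with h | h
    · exact h
    · exfalso
      have hθ : T.θ (φs m) = T.θ (φs n) := by
        have h2 := (hθeq m).trans (hθeq n).symm
        rw [h] at h2
        exact add_left_cancel h2
      have : φs m = φs n := T.mono.injective hθ
      have hpair : (f (g m) : Γ × Φ) = (f (g n) : Γ × Φ) := Prod.ext h this
      have : g m = g n := by
        have := f.injective (Subtype.ext hpair)
        exact this
      exact (Nat.ne_of_lt (g.strictMono hmn)) this
  have hφanti : StrictAnti φs := by
    intro m n hmn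
    have : T.θ (φs n) < T.θ (φs m) := by
      have h1 := hθeq m
      have h2 := hθeq n
      have := hstrict m n hmn
      have : γs m + T.θ (φs n) < γs n + T.θ (φs n) := add_lt_add_left this _
      rw [h2, ← h1] at this
      exact lt_of_add_lt_add_left this
    exact T.mono.lt_iff_lt.mp this
  exact T.no_bad γs φs (fun m n h => (monotone_nat_of_le_succ
      (fun i => (hstrict i (i+1) (Nat.lt_succ_self i)).le)) h) hφanti
    (fun n => (f (g n)).2.2.1) (fun n => le_of_eq ((hθeq n).trans (hθeq 0).symm))

/-- The image of a PWO set under the "derivative support" correspondence is PWO. -/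
theorem target_isPWO (T : ThetaPack H) (S : Set Γ) (hS : S.IsPWO) :
    {δ : Γ | ∃ γ ∈ S, ∃ u, (H.e γ).coeff u ≠ 0 ∧ γ + T.θ u = δ}.IsPWO := by
  rw [Set.isPWO_iff_isWF]
  rw [Set.isWF_iff_no_descending_seq]
  intro df hdf hmem
  choose γs hγS φs hφsupp hφeq using hmem
  obtain ⟨g, hg⟩ := hS.exists_monotone_subseq (f := γs) hγS
  have hdganti : StrictAnti (fun n => df (g n)) := hdf.comp_strictMono g.strictMono
  have hφanti : StrictAnti (fun n => φs (g n)) := by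
    intro m n hmn
    have hθlt : T.θ (φs (g n)) < T.θ (φs (g m)) := by
      have h1 : γs (g m) + T.θ (φs (g m)) = df (g m) := hφeq (g m)
      have h2 : γs (g n) + T.θ (φs (g n)) = df (g n) := hφeq (g n)
      have hd : df (g n) < df (g m) := hdganti hmn
      have hγ : γs (g m) ≤ γs (g n) := hg hmn.le
      have : γs (g m) + T.θ (φs (g n)) ≤ γs (g n) + T.θ (φs (g n)) := add_le_add_left hγ _
      rw [h2] at this
      have : γs (g m) + T.θ (φs (g n)) < df (g m) := lt_of_le_of_lt this hd
      rw [← h1] at this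
      exact lt_of_add_lt_add_left this
    exact T.mono.lt_iff_lt.mp hθlt
  exact T.no_bad (fun n => γs (g n)) (fun n => φs (g n)) (fun m n h => hg h) hφanti
    (fun n => hφsupp (g n))
    (fun n => by
      rw [hφeq (g n), hφeq (g 0)]
      exact (hdganti.antitone (Nat.zero_le n)))

end HardyProof
noncomputable section HardyProofSection3

namespace HardyProof

open HahnSeries Set

variable {Φ : Type*} [LinearOrder Φ] {Γ : Type*} [AddCommGroup Γ] [LinearOrder Γ] [IsOrderedAddMonoid Γ]
  {k : Type*} [Field k] {H : HahnEmbeddingData Φ Γ}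

/-- The "φ-component" of a series: coefficientwise multiplication by `ι ((e γ).coeff φ)`. -/
def dag (H : HahnEmbeddingData Φ Γ) (ι : ℝ →+* k) (x : HahnSeries Γ k) (φ : Φ) :
    HahnSeries Γ k where
  coeff γ := x.coeff γ * ι ((H.e γ).coeff φ)
  isPWO_support' := x.isPWO_support.mono (fun γ hγ => by
    simp only [Function.mem_support] at hγ
    rw [mem_support]
    intro hx
    exact hγ (by rw [hx, zero_mul]))

@[simp] theorem dag_coeff (ι : ℝ →+* k) (x : HahnSeries Γ k) (φ : Φ) (γ : Γ) :
    (dag H ι x φ).coeff γ = x.coeff γ * ι ((H.e γ).coeff φ) := rfl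

theorem dag_support_subset (ι : ℝ →+* k) (x : HahnSeries Γ k) (φ : Φ) :
    (dag H ι x φ).support ⊆ x.support := by
  intro γ hγ
  rw [mem_support] at hγ ⊢
  intro hx
  exact hγ (by rw [dag_coeff, hx, zero_mul])

theorem term_coeff (ι : ℝ →+* k) (T : ThetaPack H) (x : HahnSeries Γ k) (φ : Φ) (δ : Γ) :
    (dag H ι x φ * single (T.θ φ) 1).coeff δ =
      x.coeff (δ - T.θ φ) * ι ((H.e (δ - T.θ φ)).coeff φ) := by
  have h := coeff_mul_single_add (r := (1 : k)) (x := dag H ι x φ)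
    (a := δ - T.θ φ) (b := T.θ φ)
  rw [sub_add_cancel] at h
  rw [h, mul_one, dag_coeff]

theorem term_ne_zero (ι : ℝ →+* k) (T : ThetaPack H) {x : HahnSeries Γ k} {φ : Φ} {δ : Γ}
    (h : (dag H ι x φ * single (T.θ φ) 1).coeff δ ≠ 0) :
    (δ - T.θ φ, φ) ∈ pairSet H T x δ := by
  rw [term_coeff] at h
  refine ⟨fun h0 => h (by rw [h0, zero_mul]), fun h0 => h ?_, by simp⟩
  rw [h0, map_zero, mul_zero]

/-- The summable family defining the derivation. -/
def Dfam (H : HahnEmbeddingData Φ Γ) (ι : ℝ →+* k) (T : ThetaPack H) (x : HahnSeries Γ k) :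
    SummableFamily Γ k Φ where
  toFun φ := dag H ι x φ * single (T.θ φ) 1
  isPWO_iUnion_support' := by
    apply (target_isPWO T x.support x.isPWO_support).mono
    intro δ hδ
    simp only [Set.mem_iUnion] at hδ
    obtain ⟨φ, hφ⟩ := hδ
    rw [mem_support] at hφ
    obtain ⟨h1, h2, h3⟩ := term_ne_zero ι T hφ
    exact ⟨δ - T.θ φ, h1, φ, h2, h3⟩
  finite_co_support' δ := by
    apply ((pairSet_finite T x δ).image Prod.snd).subset
    intro φ hφ
    simp only [Set.mem_setOf_eq] at hφ
    exact ⟨(δ - T.θ φ, φ), term_ne_zero ι T hφ, rfl⟩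

/-- The derivation. -/
def D (H : HahnEmbeddingData Φ Γ) (ι : ℝ →+* k) (T : ThetaPack H) (x : HahnSeries Γ k) :
    HahnSeries Γ k :=
  (Dfam H ι T x).hsum

theorem D_coeff (ι : ℝ →+* k) (T : ThetaPack H) (x : HahnSeries Γ k) (δ : Γ) :
    (D H ι T x).coeff δ = ∑ᶠ φ, x.coeff (δ - T.θ φ) * ι ((H.e (δ - T.θ φ)).coeff φ) := by
  rw [D, SummableFamily.coeff_hsum]
  exact finsum_congr (fun φ => term_coeff ι T x φ δ)

theorem pairSet_snd_injOn (T : ThetaPack H) (x : HahnSeries Γ k) (δ : Γ) :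
    Set.InjOn Prod.snd (pairSet H T x δ) := by
  intro p hp q hq h
  have h1 : p.1 = q.1 := by
    have hp3 := hp.2.2
    have hq3 := hq.2.2
    rw [← h] at hq3
    have := hp3.trans hq3.symm
    exact add_right_cancel this
  exact Prod.ext h1 h

theorem pairSet_fst_injOn (T : ThetaPack H) (x : HahnSeries Γ k) (δ : Γ) :
    Set.InjOn Prod.fst (pairSet H T x δ) := by
  intro p hp q hq h
  have h2 : p.2 = q.2 := by
    have hp3 := hp.2.2
    have hq3 := hq.2.2
    rw [← h] at hq3
    have := add_left_cancel (hp3.trans hq3.symm)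
    exact T.mono.injective this
  exact Prod.ext h h2

/-- The coefficient of `D x` as a finite sum over contributing pairs. -/
theorem D_coeff_eq_sum (ι : ℝ →+* k) (T : ThetaPack H) (x : HahnSeries Γ k) (δ : Γ) :
    (D H ι T x).coeff δ = ∑ p ∈ (pairSet_finite T x δ).toFinset,
      x.coeff p.1 * ι ((H.e p.1).coeff p.2) := by
  rw [D_coeff]
  set F : Φ → k := fun φ => x.coeff (δ - T.θ φ) * ι ((H.e (δ - T.θ φ)).coeff φ) with hF
  have hsupp : Function.support F ⊆
      ((pairSet_finite T x δ).toFinset.image Prod.snd : Finset Φ) := by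
    intro φ hφ
    rw [Function.mem_support] at hφ
    have h1 : x.coeff (δ - T.θ φ) ≠ 0 := fun h0 => hφ (by rw [hF]; simp [h0])
    have h2 : (H.e (δ - T.θ φ)).coeff φ ≠ 0 := by
      intro h0
      apply hφ
      rw [hF]
      simp only [h0, map_zero, mul_zero]
    simp only [Finset.coe_image, Set.mem_image, Finset.mem_coe, Set.Finite.mem_toFinset]
    exact ⟨(δ - T.θ φ, φ), ⟨h1, h2, by simp⟩, rfl⟩
  rw [finsum_eq_finset_sum_of_support_subset F hsupp]
  rw [Finset.sum_image (fun p hp q hq h => pairSet_snd_injOn T x δ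
    ((pairSet_finite T x δ).mem_toFinset.mp hp) ((pairSet_finite T x δ).mem_toFinset.mp hq) h)]
  apply Finset.sum_congr rfl
  intro p hp
  have hp' := (pairSet_finite T x δ).mem_toFinset.mp hp
  have h1 : δ - T.θ p.2 = p.1 := by
    rw [← hp'.2.2]; abel
  rw [hF]
  simp only [h1]

theorem D_coeff_ne_zero_imp (ι : ℝ →+* k) (T : ThetaPack H) {x : HahnSeries Γ k} {δ : Γ}
    (h : (D H ι T x).coeff δ ≠ 0) :
    ∃ p : Γ × Φ, x.coeff p.1 ≠ 0 ∧ (H.e p.1).coeff p.2 ≠ 0 ∧ p.1 + T.θ p.2 = δ := by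
  rw [D_coeff_eq_sum ι T] at h
  obtain ⟨p, hp, -⟩ := Finset.exists_ne_zero_of_sum_ne_zero h
  exact ⟨p, (pairSet_finite T x δ).mem_toFinset.mp hp⟩

end HardyProof
noncomputable section HardyProofSection4

namespace HardyProof

open HahnSeries Set

variable {Φ : Type*} [LinearOrder Φ] {Γ : Type*} [AddCommGroup Γ] [LinearOrder Γ] [IsOrderedAddMonoid Γ]
  {k : Type*} [Field k] {H : HahnEmbeddingData Φ Γ}

theorem dag_add (ι : ℝ →+* k) (x y : HahnSeries Γ k) (φ : Φ) :
    dag H ι (x + y) φ = dag H ι x φ + dag H ι y φ := by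
  ext γ
  simp only [dag_coeff, coeff_add, add_mul]

theorem Dfam_add (ι : ℝ →+* k) (T : ThetaPack H) (x y : HahnSeries Γ k) :
    Dfam H ι T (x + y) = Dfam H ι T x + Dfam H ι T y := by
  apply SummableFamily.ext
  intro φ
  rw [SummableFamily.add_apply]
  show dag H ι (x + y) φ * single (T.θ φ) 1 = _
  rw [dag_add, add_mul]
  rfl

theorem D_add (ι : ℝ →+* k) (T : ThetaPack H) (x y : HahnSeries Γ k) :
    D H ι T (x + y) = D H ι T x + D H ι T y := by
  rw [D, Dfam_add, SummableFamily.hsum_add]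
  rfl

/-- The Leibniz identity at the level of φ-components. -/
theorem dag_mul (ι : ℝ →+* k) (x y : HahnSeries Γ k) (φ : Φ) :
    dag H ι (x * y) φ = dag H ι x φ * y + x * dag H ι y φ := by
  ext σ
  rw [coeff_add, dag_coeff,
    coeff_mul_left' (x.isPWO_support) (dag_support_subset ι x φ),
    coeff_mul_right' (y.isPWO_support) (dag_support_subset ι y φ), coeff_mul,
    Finset.sum_mul, ← Finset.sum_add_distrib]
  apply Finset.sum_congr rfl
  intro ij hij
  rw [Finset.mem_addAntidiagonal] at hij
  obtain ⟨h1, h2, h3⟩ := hij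
  rw [dag_coeff, dag_coeff, ← h3, map_add, coeff_add, map_add, mul_add]
  ring

theorem Dfam_mul (ι : ℝ →+* k) (T : ThetaPack H) (x y : HahnSeries Γ k) :
    Dfam H ι T (x * y) = y • Dfam H ι T x + x • Dfam H ι T y := by
  apply SummableFamily.ext
  intro φ
  rw [SummableFamily.add_apply, SummableFamily.smul_apply, SummableFamily.smul_apply]
  show dag H ι (x * y) φ * single (T.θ φ) 1 = _
  rw [dag_mul, add_mul]
  rw [of_symm_smul_of_eq_mul, of_symm_smul_of_eq_mul]
  show _ = y * (dag H ι x φ * single (T.θ φ) 1) + x * (dag H ι y φ * single (T.θ φ) 1)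
  ring

theorem D_mul (ι : ℝ →+* k) (T : ThetaPack H) (x y : HahnSeries Γ k) :
    D H ι T (x * y) = D H ι T x * y + x * D H ι T y := by
  rw [D, Dfam_mul, SummableFamily.hsum_add, SummableFamily.hsum_smul, SummableFamily.hsum_smul]
  rw [mul_comm y]
  rfl

theorem dag_single (ι : ℝ →+* k) (γ : Γ) (a : k) (φ : Φ) :
    dag H ι (single γ a) φ = single γ (a * ι ((H.e γ).coeff φ)) := by
  ext γ'
  rw [dag_coeff, coeff_single, coeff_single]
  split_ifs with h
  · subst h; rfl
  · rw [zero_mul]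

theorem Dfam_single_apply (ι : ℝ →+* k) (T : ThetaPack H) (γ : Γ) (a : k) (φ : Φ) :
    Dfam H ι T (single γ a) φ = single (γ + T.θ φ) (a * ι ((H.e γ).coeff φ)) := by
  show dag H ι (single γ a) φ * single (T.θ φ) 1 = _
  rw [dag_single, single_mul_single, mul_one]

theorem D_const (ι : ℝ →+* k) (T : ThetaPack H) (a : k) :
    D H ι T (single (0 : Γ) a) = 0 := by
  ext δ
  rw [D, SummableFamily.coeff_hsum, coeff_zero]
  apply finsum_eq_zero_of_forall_eq_zero
  intro φ
  rw [Dfam_single_apply]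
  simp

theorem D_zero_of_support_subset (ι : ℝ →+* k) (T : ThetaPack H) {x : HahnSeries Γ k}
    (h : x.support ⊆ {0}) : D H ι T x = 0 := by
  ext δ
  rw [D_coeff, coeff_zero]
  apply finsum_eq_zero_of_forall_eq_zero
  intro φ
  by_cases hx : x.coeff (δ - T.θ φ) = 0
  · rw [hx, zero_mul]
  · have : δ - T.θ φ = 0 := h hx
    rw [this, map_zero, coeff_zero, map_zero, mul_zero]

end HardyProof
noncomputable section HardyProofSection5

namespace HardyProof

open HahnSeries Set

variable {Φ : Type*} [LinearOrder Φ] {Γ : Type*} [AddCommGroup Γ] [LinearOrder Γ] [IsOrderedAddMonoid Γ]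
  {k : Type*} [Field k] {H : HahnEmbeddingData Φ Γ}

theorem pairSet_single (T : ThetaPack H) {γ : Γ} {φ : Φ} {δ : Γ}
    (h2 : (H.e γ).coeff φ ≠ 0) (h3 : γ + T.θ φ = δ) :
    pairSet H T (single γ (1 : k)) δ = {(γ, φ)} := by
  ext p
  constructor
  · rintro ⟨hp1, hp2, hp3⟩
    have hp1' : p.1 = γ := by
      by_contra hne
      exact hp1 (coeff_single_of_ne hne)
    have hθ : T.θ p.2 = T.θ φ := by
      rw [hp1'] at hp3
      have := hp3.trans h3.symm
      exact add_left_cancel this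
    have : p.2 = φ := T.mono.injective hθ
    exact Set.mem_singleton_iff.mpr (Prod.ext hp1' this)
  · rintro rfl
    refine ⟨?_, h2, h3⟩
    rw [coeff_single_same]
    exact one_ne_zero

theorem D_single_coeff_of_pair (ι : ℝ →+* k) (T : ThetaPack H) {γ : Γ} {φ : Φ} {δ : Γ}
    (h2 : (H.e γ).coeff φ ≠ 0) (h3 : γ + T.θ φ = δ) :
    (D H ι T (single γ (1 : k))).coeff δ = ι ((H.e γ).coeff φ) := by
  rw [D_coeff_eq_sum]
  have htf : (pairSet_finite T (single γ (1 : k)) δ).toFinset = {(γ, φ)} := by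
    ext p
    rw [Set.Finite.mem_toFinset, pairSet_single T h2 h3, Finset.mem_singleton,
      Set.mem_singleton_iff]
  rw [htf, Finset.sum_singleton, coeff_single_same, one_mul]

theorem D_single_coeff_ne_zero (ι : ℝ →+* k) (T : ThetaPack H) {γ : Γ} {δ : Γ}
    (h : (D H ι T (single γ (1 : k))).coeff δ ≠ 0) :
    ∃ φ, (H.e γ).coeff φ ≠ 0 ∧ γ + T.θ φ = δ := by
  obtain ⟨p, hp1, hp2, hp3⟩ := D_coeff_ne_zero_imp ι T h
  have hp1' : p.1 = γ := by
    by_contra hne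
    exact hp1 (coeff_single_of_ne hne)
  rw [hp1'] at hp2 hp3
  exact ⟨p.2, hp2, hp3⟩

/-- The canonical strongly-linear decomposition of `D x` indexed by `Γ`. -/
def linFam (H : HahnEmbeddingData Φ Γ) (ι : ℝ →+* k) (T : ThetaPack H) (x : HahnSeries Γ k) :
    SummableFamily Γ k Γ where
  toFun γ := x.coeff γ • D H ι T (single γ (1 : k))
  isPWO_iUnion_support' := by
    apply (target_isPWO T x.support x.isPWO_support).mono
    intro δ hδ
    simp only [Set.mem_iUnion, mem_support] at hδ
    obtain ⟨γ, hγ⟩ := hδ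
    rw [coeff_smul, smul_eq_mul] at hγ
    have hx : x.coeff γ ≠ 0 := fun h0 => hγ (by rw [h0, zero_mul])
    have hD : (D H ι T (single γ (1 : k))).coeff δ ≠ 0 := fun h0 => hγ (by rw [h0, mul_zero])
    obtain ⟨φ, h2, h3⟩ := D_single_coeff_ne_zero ι T hD
    exact ⟨γ, hx, φ, h2, h3⟩
  finite_co_support' δ := by
    apply ((pairSet_finite T x δ).image Prod.fst).subset
    intro γ hγ
    simp only [Set.mem_setOf_eq] at hγ
    rw [coeff_smul, smul_eq_mul] at hγ
    have hx : x.coeff γ ≠ 0 := fun h0 => hγ (by rw [h0, zero_mul])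
    have hD : (D H ι T (single γ (1 : k))).coeff δ ≠ 0 := fun h0 => hγ (by rw [h0, mul_zero])
    obtain ⟨φ, h2, h3⟩ := D_single_coeff_ne_zero ι T hD
    exact ⟨(γ, φ), ⟨hx, h2, h3⟩, rfl⟩

theorem linFam_apply (ι : ℝ →+* k) (T : ThetaPack H) (x : HahnSeries Γ k) (γ : Γ) :
    linFam H ι T x γ = x.coeff γ • D H ι T (single γ (1 : k)) := rfl

theorem D_eq_linFam_hsum (ι : ℝ →+* k) (T : ThetaPack H) (x : HahnSeries Γ k) :
    D H ι T x = (linFam H ι T x).hsum := by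
  ext δ
  rw [SummableFamily.coeff_hsum, D_coeff_eq_sum]
  have hcongr : ∀ γ : Γ, (linFam H ι T x γ).coeff δ =
      x.coeff γ * (D H ι T (single γ (1 : k))).coeff δ := by
    intro γ
    rw [linFam_apply, coeff_smul, smul_eq_mul]
  have hsupp : Function.support (fun γ => (linFam H ι T x γ).coeff δ) ⊆
      ((pairSet_finite T x δ).toFinset.image Prod.fst : Finset Γ) := by
    intro γ hγ
    have hγ : x.coeff γ * (D H ι T (single γ (1 : k))).coeff δ ≠ 0 := by
      rw [← hcongr]; exact hγ
    have hx : x.coeff γ ≠ 0 := fun h0 => hγ (by rw [h0, zero_mul])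
    have hD : (D H ι T (single γ (1 : k))).coeff δ ≠ 0 := fun h0 => hγ (by rw [h0, mul_zero])
    obtain ⟨φ, h2, h3⟩ := D_single_coeff_ne_zero ι T hD
    simp only [Finset.coe_image, Set.mem_image, Finset.mem_coe, Set.Finite.mem_toFinset]
    exact ⟨(γ, φ), ⟨hx, h2, h3⟩, rfl⟩
  rw [finsum_eq_finset_sum_of_support_subset _ hsupp]
  rw [Finset.sum_image (fun p hp q hq h => pairSet_fst_injOn T x δ
    ((pairSet_finite T x δ).mem_toFinset.mp hp) ((pairSet_finite T x δ).mem_toFinset.mp hq) h)]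
  symm
  apply Finset.sum_congr rfl
  intro p hp
  have hp' := (pairSet_finite T x δ).mem_toFinset.mp hp
  show (linFam H ι T x p.1).coeff δ = _
  rw [hcongr, D_single_coeff_of_pair ι T hp'.2.1 hp'.2.2]

theorem D_tmon (ι : ℝ →+* k) (T : ThetaPack H) (φ : Φ) :
    D H ι T (tmon H k φ) = single (H.b φ + T.θ φ) 1 := by
  ext δ
  rw [tmon, D, SummableFamily.coeff_hsum]
  have hz : ∀ ψ : Φ, ψ ≠ φ → (Dfam H ι T (single (H.b φ) (1 : k)) ψ).coeff δ = 0 := by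
    intro ψ hψ
    rw [Dfam_single_apply, H.hb φ, coeff_single_of_ne hψ, map_zero, mul_zero, single_eq_zero,
      coeff_zero]
  rw [finsum_eq_single _ φ hz, Dfam_single_apply, H.hb φ, coeff_single_same, map_one, mul_one]

theorem tmon_inv (φ : Φ) :
    (tmon H k φ)⁻¹ = single (-(H.b φ)) 1 := by
  apply inv_eq_of_mul_eq_one_right
  rw [tmon, single_mul_single, one_mul, add_neg_cancel, single_zero_one]

theorem logDer_eq (ι : ℝ →+* k) (T : ThetaPack H) (φ : Φ) :
    logDer H (D H ι T) φ = single (T.θ φ) 1 := by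
  rw [logDer, D_tmon, tmon_inv, single_mul_single, mul_one]
  have h : H.b φ + T.θ φ + -H.b φ = T.θ φ := by abel
  rw [h]

end HardyProof
noncomputable section HardyProofSection6

namespace HardyProof

open HahnSeries Set

variable {Φ : Type*} [LinearOrder Φ] {Γ : Type*} [AddCommGroup Γ] [LinearOrder Γ] [IsOrderedAddMonoid Γ]
  {k : Type*} [Field k] {H : HahnEmbeddingData Φ Γ}

theorem ne_zero_of_e_coeff {γ : Γ} {φ : Φ} (h : (H.e γ).coeff φ ≠ 0) : γ ≠ 0 := by
  rintro rfl
  rw [map_zero, coeff_zero] at h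
  exact h rfl

theorem D_coeff_lower (ι : ℝ →+* k) (T : ThetaPack H) {x : HahnSeries Γ k} {γ0 : Γ}
    (h0 : γ0 ≠ 0) (hmin : ∀ γ, x.coeff γ ≠ 0 → γ ≠ 0 → γ0 ≤ γ) {δ : Γ}
    (hδ : (D H ι T x).coeff δ ≠ 0) : γ0 + T.θ (lexp H h0) ≤ δ := by
  obtain ⟨⟨γ, φ⟩, h1, h2, h3⟩ := D_coeff_ne_zero_imp ι T hδ
  have hγ0 : γ ≠ 0 := ne_zero_of_e_coeff h2
  have hγγ0 : γ0 ≤ γ := hmin γ h1 hγ0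
  set u := lexp H h0 with hu
  by_contra hlt
  rw [not_le] at hlt
  rcases lt_trichotomy φ u with hc | hc | hc
  · -- φ < u : contradiction via squeeze
    have hle : γ + T.θ φ ≤ γ0 + T.θ u := by
      rw [h3]; exact hlt.le
    have hle' : γ - γ0 ≤ T.θ u - T.θ φ := by
      calc γ - γ0 = γ + T.θ φ - (γ0 + T.θ φ) := by abel
        _ ≤ γ0 + T.θ u - (γ0 + T.θ φ) := sub_le_sub_right hle _
        _ = T.θ u - T.θ φ := by abel
    have hz : (H.e (γ - γ0)).coeff φ = 0 :=
      squeeze H (sub_nonneg.mpr hγγ0) hle' (T.star hc) φ le_rfl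
    rw [map_sub, coeff_sub, sub_eq_zero] at hz
    rw [hz, coeff_of_lt_lexp H h0 hc] at h2
    exact h2 rfl
  · -- φ = u
    subst hc
    rw [← h3] at hlt
    have : γ < γ0 := lt_of_add_lt_add_right hlt
    exact absurd hγγ0 (not_le.mpr this)
  · -- u < φ
    have : γ0 + T.θ u ≤ γ + T.θ φ :=
      add_le_add hγγ0 (T.mono hc).le
    rw [h3] at this
    exact absurd hlt (not_lt.mpr this)

theorem D_coeff_lead (ι : ℝ →+* k) (T : ThetaPack H) {x : HahnSeries Γ k} {γ0 : Γ}
    (h0 : γ0 ≠ 0) (hmem : x.coeff γ0 ≠ 0) (hmin : ∀ γ, x.coeff γ ≠ 0 → γ ≠ 0 → γ0 ≤ γ) :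
    (D H ι T x).coeff (γ0 + T.θ (lexp H h0)) =
      x.coeff γ0 * ι ((H.e γ0).coeff (lexp H h0)) := by
  set u := lexp H h0 with hu
  set δ0 := γ0 + T.θ u with hδ0
  have hpair : pairSet H T x δ0 = {(γ0, u)} := by
    ext ⟨γ, φ⟩
    constructor
    · rintro ⟨h1, h2, h3⟩
      have hγ0 : γ ≠ 0 := ne_zero_of_e_coeff h2
      have hγγ0 : γ0 ≤ γ := hmin γ h1 hγ0
      rcases eq_or_lt_of_le hγγ0 with heq | hlt
      · subst heq
        have : T.θ φ = T.θ u := by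
          have := h3.trans hδ0
          exact add_left_cancel this
        exact Set.mem_singleton_iff.mpr (Prod.ext rfl (T.mono.injective this))
      · exfalso
        have hθφ : T.θ φ < T.θ u := by
          have : γ0 + T.θ u = γ + T.θ φ := h3.symm
          have h4 : γ + T.θ φ < γ + T.θ u := by
            rw [← this]
            exact (add_lt_add_iff_right _).mpr hlt
          exact lt_of_add_lt_add_left h4
        have hφu : φ < u := T.mono.lt_iff_lt.mp hθφ
        have heq : γ - γ0 = T.θ u - T.θ φ := by
          have := h3
          rw [hδ0] at this
          have h5 : γ + T.θ φ - (γ0 + T.θ φ) = γ0 + T.θ u - (γ0 + T.θ φ) := by rw [this]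
          calc γ - γ0 = γ + T.θ φ - (γ0 + T.θ φ) := by abel
            _ = γ0 + T.θ u - (γ0 + T.θ φ) := h5
            _ = T.θ u - T.θ φ := by abel
        have hz : (H.e (γ - γ0)).coeff φ = 0 := by
          rw [heq]
          exact T.star hφu φ le_rfl
        rw [map_sub, coeff_sub, sub_eq_zero] at hz
        rw [hz, coeff_of_lt_lexp H h0 hφu] at h2
        exact h2 rfl
    · rintro h
      rw [Set.mem_singleton_iff] at h
      rw [h]
      exact ⟨hmem, lexp_mem H h0, rfl⟩
  rw [D_coeff_eq_sum]
  have htf : (pairSet_finite T x δ0).toFinset = {(γ0, u)} := by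
    ext p
    rw [Set.Finite.mem_toFinset, hpair, Finset.mem_singleton, Set.mem_singleton_iff]
  rw [htf, Finset.sum_singleton]

theorem exists_min_nonzero {x : HahnSeries Γ k} (hx : ¬ x.support ⊆ {0}) :
    ∃ γ0 : Γ, γ0 ≠ 0 ∧ x.coeff γ0 ≠ 0 ∧ ∀ γ, x.coeff γ ≠ 0 → γ ≠ 0 → γ0 ≤ γ := by
  have hS : (x.support \ {0} : Set Γ).Nonempty := by
    rw [Set.not_subset] at hx
    obtain ⟨γ, h1, h2⟩ := hx
    exact ⟨γ, h1, h2⟩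
  have hWF : (x.support \ {0} : Set Γ).IsWF := x.isWF_support.mono Set.diff_subset
  refine ⟨hWF.min hS, ?_, ?_, ?_⟩
  · have := (hWF.min_mem hS).2
    simpa using this
  · exact (hWF.min_mem hS).1
  · intro γ h1 h2
    exact hWF.min_le hS ⟨h1, by simpa using h2⟩

theorem iota_ne_zero (ι : ℝ →+* k) {c : ℝ} (hc : c ≠ 0) : ι c ≠ 0 := by
  intro h
  exact hc (RingHom.injective ι (by rw [h, map_zero]))

theorem D_ne_zero_of (ι : ℝ →+* k) (T : ThetaPack H) {x : HahnSeries Γ k}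
    (hx : ¬ x.support ⊆ {0}) : D H ι T x ≠ 0 := by
  obtain ⟨γ0, h0, hmem, hmin⟩ := exists_min_nonzero hx
  have hlead := D_coeff_lead ι T h0 hmem hmin
  intro hD
  rw [hD, coeff_zero] at hlead
  exact mul_ne_zero hmem (iota_ne_zero ι (lexp_mem H h0)) hlead.symm

theorem D_eq_zero_iff (ι : ℝ →+* k) (T : ThetaPack H) (x : HahnSeries Γ k) :
    D H ι T x = 0 ↔ x.support ⊆ {0} := by
  constructor
  · intro hD
    by_contra hx
    exact D_ne_zero_of ι T hx hD
  · exact D_zero_of_support_subset ι T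

/-- For `a ≠ 0` with `a.order ≠ 0`, the derivative is nonzero with order
`a.order + θ (lexp (a.order))`. -/
theorem D_order (ι : ℝ →+* k) (T : ThetaPack H) {a : HahnSeries Γ k} (ha : a ≠ 0)
    (hord : a.order ≠ 0) :
    D H ι T a ≠ 0 ∧ (D H ι T a).order = a.order + T.θ (lexp H hord) := by
  have hmem : a.coeff a.order ≠ 0 := (mt coeff_order_eq_zero.mp ha)
  have hmin : ∀ γ, a.coeff γ ≠ 0 → γ ≠ 0 → a.order ≤ γ := fun γ h1 _ =>
    order_le_of_coeff_ne_zero h1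
  have hlead := D_coeff_lead ι T hord hmem hmin
  have hne : (D H ι T a).coeff (a.order + T.θ (lexp H hord)) ≠ 0 := by
    rw [hlead]
    exact mul_ne_zero hmem (iota_ne_zero ι (lexp_mem H hord))
  have hDne : D H ι T a ≠ 0 := fun h => by rw [h, coeff_zero] at hne; exact hne rfl
  refine ⟨hDne, le_antisymm (order_le_of_coeff_ne_zero hne) ?_⟩
  exact D_coeff_lower ι T hord hmin ((mt coeff_order_eq_zero.mp hDne))

end HardyProof
noncomputable section HardyProofSection7

namespace HardyProof

open HahnSeries Set

variable {Φ : Type*} [LinearOrder Φ] {Γ : Type*} [AddCommGroup Γ] [LinearOrder Γ] [IsOrderedAddMonoid Γ]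
  {k : Type*} [Field k] {H : HahnEmbeddingData Φ Γ}

theorem lexp_unique (H : HahnEmbeddingData Φ Γ) {γ : Γ} (h : γ ≠ 0) {u : Φ}
    (hu : (H.e γ).coeff u ≠ 0) (hlow : ∀ w, w < u → (H.e γ).coeff w = 0) :
    lexp H h = u := by
  refine le_antisymm (lexp_le H h hu) ?_
  by_contra hc
  rw [not_le] at hc
  exact lexp_mem H h (hlow _ hc)

theorem lexp_neg (H : HahnEmbeddingData Φ Γ) {γ : Γ} (h : γ ≠ 0) (h' : -γ ≠ 0) :
    lexp H h' = lexp H h := by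
  apply lexp_unique
  · rw [map_neg, coeff_neg, neg_ne_zero]
    exact lexp_mem H h
  · intro w hw
    rw [map_neg, coeff_neg, neg_eq_zero]
    exact coeff_of_lt_lexp H h hw

theorem lexp_abs (H : HahnEmbeddingData Φ Γ) {γ : Γ} (h : γ ≠ 0) (h' : |γ| ≠ 0) :
    lexp H h' = lexp H h := by
  rcases abs_choice γ with hab | hab
  · congr 1
  · have : lexp H h' = lexp H (neg_ne_zero.mpr h) := by congr 1
    rw [this]
    exact lexp_neg H h _

/-- Key step for strict monotonicity of `γ ↦ γ + θ (lexp γ)`. -/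
theorem lexp_diff (H : HahnEmbeddingData Φ Γ) {α β : Γ} (hα : α ≠ 0) (hβ : β ≠ 0)
    (hlt : α < β) (hne : lexp H hα ≠ lexp H hβ) :
    (∀ w, w < min (lexp H hα) (lexp H hβ) → (H.e (β - α)).coeff w = 0) ∧
      0 < (H.e (β - α)).coeff (min (lexp H hα) (lexp H hβ)) := by
  set uα := lexp H hα
  set uβ := lexp H hβ
  set μ := min uα uβ with hμ
  have hlow : ∀ w, w < μ → (H.e (β - α)).coeff w = 0 := by
    intro w hw
    rw [map_sub, coeff_sub, coeff_of_lt_lexp H hβ (lt_of_lt_of_le hw (min_le_right _ _)),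
      coeff_of_lt_lexp H hα (lt_of_lt_of_le hw (min_le_left _ _)), sub_zero]
  refine ⟨hlow, ?_⟩
  have hneq : (H.e (β - α)).coeff μ ≠ 0 := by
    rcases lt_or_gt_of_ne hne with hc | hc
    · have hμα : μ = uα := min_eq_left hc.le
      rw [hμα, map_sub, coeff_sub, coeff_of_lt_lexp H hβ hc, zero_sub, neg_ne_zero]
      exact lexp_mem H hα
    · have hμβ : μ = uβ := min_eq_right hc.le
      rw [hμβ, map_sub, coeff_sub, coeff_of_lt_lexp H hα hc, sub_zero]
      exact lexp_mem H hβ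
  have hpos : 0 < β - α := sub_pos.mpr hlt
  obtain ⟨w0, hw0, hw0low⟩ := (H.ord (β - α)).mp hpos
  have : w0 = μ := by
    rcases lt_trichotomy w0 μ with hc | hc | hc
    · exact absurd (hlow w0 hc) (ne_of_gt hw0)
    · exact hc
    · exact absurd (hw0low μ hc) hneq
  rw [← this]
  exact hw0

theorem sigma_lt (T : ThetaPack H) {α β : Γ} (hα : α ≠ 0) (hβ : β ≠ 0) (hlt : α < β) :
    α + T.θ (lexp H hα) < β + T.θ (lexp H hβ) := by
  by_cases hne : lexp H hα = lexp H hβ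
  · rw [hne]
    exact add_lt_add_left hlt _
  · set uα := lexp H hα
    set uβ := lexp H hβ
    set μ := min uα uβ with hμ
    obtain ⟨hlow, hpos⟩ := lexp_diff H hα hβ hlt hne
    have hθz : ∀ w, w ≤ μ → (H.e (T.θ uβ - T.θ uα)).coeff w = 0 := by
      intro w hw
      rcases lt_or_gt_of_ne hne with hc | hc
      · exact T.star hc w (hw.trans (min_le_left _ _))
      · have : T.θ uβ - T.θ uα = -(T.θ uα - T.θ uβ) := by abel
        rw [this, map_neg, coeff_neg, neg_eq_zero]
        exact T.star hc w (hw.trans (min_le_right _ _))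
    have hdecomp : β + T.θ uβ - (α + T.θ uα) = (β - α) + (T.θ uβ - T.θ uα) := by abel
    have hkey : 0 < β + T.θ uβ - (α + T.θ uα) := by
      apply pos_of_coeff H (u := μ)
      · rw [hdecomp, map_add, coeff_add, hθz μ le_rfl, add_zero]
        exact hpos
      · intro w hw
        rw [hdecomp, map_add, coeff_add, hlow w hw, hθz w hw.le, add_zero]
    exact sub_pos.mp hkey

theorem sigma_congr (T : ThetaPack H) {α β : Γ} (hα : α ≠ 0) (hβ : β ≠ 0) (h : α = β) :
    α + T.θ (lexp H hα) = β + T.θ (lexp H hβ) := by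
  subst h
  rfl

theorem coeff_e_nsmul (H : HahnEmbeddingData Φ Γ) (n : ℕ) (γ : Γ) (w : Φ) :
    (H.e (n • γ)).coeff w = (n : ℝ) * (H.e γ).coeff w := by
  induction n with
  | zero => simp
  | succ n ih =>
    rw [succ_nsmul, map_add, coeff_add, ih]
    push_cast
    ring

theorem lexp_le_of_abs_lt (H : HahnEmbeddingData Φ Γ) {α β : Γ} (hα : α ≠ 0) (hβ : β ≠ 0)
    (h : |β| < |α|) : lexp H hα ≤ lexp H hβ := by
  by_contra hc
  rw [not_le] at hc
  have hA : |α| ≠ 0 := fun h0 => hα (abs_eq_zero.mp h0)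
  have hB : |β| ≠ 0 := fun h0 => hβ (abs_eq_zero.mp h0)
  have huA : lexp H hA = lexp H hα := lexp_abs H hα hA
  have huB : lexp H hB = lexp H hβ := lexp_abs H hβ hB
  have hpos : 0 < |α| - |β| := sub_pos.mpr h
  -- show |α| < |β| for contradiction
  have : 0 < |β| - |α| := by
    apply pos_of_coeff H (u := lexp H hβ)
    · rw [map_sub, coeff_sub]
      have h1 : (H.e |α|).coeff (lexp H hβ) = 0 := by
        apply coeff_of_lt_lexp H hA
        rw [huA]; exact hc
      rw [h1, sub_zero]
      have := lexp_coeff_pos H hB (abs_pos.mpr hβ)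
      rw [huB] at this
      exact this
    · intro w hw
      rw [map_sub, coeff_sub]
      have h1 : (H.e |β|).coeff w = 0 := by
        apply coeff_of_lt_lexp H hB
        rw [huB]; exact hw
      have h2 : (H.e |α|).coeff w = 0 := by
        apply coeff_of_lt_lexp H hA
        rw [huA]; exact hw.trans hc
      rw [h1, h2, sub_zero]
  have := sub_pos.mp this
  exact absurd h (not_lt.mpr this.le)

theorem arch_iff (H : HahnEmbeddingData Φ Γ) {α β : Γ} (hα : α ≠ 0) (hβ : β ≠ 0) :
    ArchEquiv α β ↔ lexp H hα = lexp H hβ := by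
  have hA : |α| ≠ 0 := fun h0 => hα (abs_eq_zero.mp h0)
  have hB : |β| ≠ 0 := fun h0 => hβ (abs_eq_zero.mp h0)
  have huA : lexp H hA = lexp H hα := lexp_abs H hα hA
  have huB : lexp H hB = lexp H hβ := lexp_abs H hβ hB
  constructor
  · intro ⟨n, h1, h2⟩
    by_contra hne
    -- wlog via cases
    rcases lt_or_gt_of_ne hne with hc | hc
    · -- lexp α < lexp β : show ∀ n, n • |β| < |α|, contradicting h1
      have : 0 < |α| - n • |β| := by
        apply pos_of_coeff H (u := lexp H hα)
        · rw [map_sub, coeff_sub, coeff_e_nsmul]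
          have h3 : (H.e |β|).coeff (lexp H hα) = 0 := by
            apply coeff_of_lt_lexp H hB
            rw [huB]; exact hc
          rw [h3, mul_zero, sub_zero]
          have := lexp_coeff_pos H hA (abs_pos.mpr hα)
          rw [huA] at this
          exact this
        · intro w hw
          rw [map_sub, coeff_sub, coeff_e_nsmul]
          have h3 : (H.e |β|).coeff w = 0 := by
            apply coeff_of_lt_lexp H hB
            rw [huB]; exact hw.trans hc
          have h4 : (H.e |α|).coeff w = 0 := by
            apply coeff_of_lt_lexp H hA
            rw [huA]; exact hw
          rw [h3, h4, mul_zero, sub_zero]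
      exact absurd h1 (not_le.mpr (sub_pos.mp this))
    · -- symmetric
      have : 0 < |β| - n • |α| := by
        apply pos_of_coeff H (u := lexp H hβ)
        · rw [map_sub, coeff_sub, coeff_e_nsmul]
          have h3 : (H.e |α|).coeff (lexp H hβ) = 0 := by
            apply coeff_of_lt_lexp H hA
            rw [huA]; exact hc
          rw [h3, mul_zero, sub_zero]
          have := lexp_coeff_pos H hB (abs_pos.mpr hβ)
          rw [huB] at this
          exact this
        · intro w hw
          rw [map_sub, coeff_sub, coeff_e_nsmul]
          have h3 : (H.e |α|).coeff w = 0 := by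
            apply coeff_of_lt_lexp H hA
            rw [huA]; exact hw.trans hc
          have h4 : (H.e |β|).coeff w = 0 := by
            apply coeff_of_lt_lexp H hB
            rw [huB]; exact hw
          rw [h3, h4, mul_zero, sub_zero]
      exact absurd h2 (not_le.mpr (sub_pos.mp this))
  · intro heq
    set u := lexp H hα with hu
    have lcA : 0 < (H.e |α|).coeff u := by
      have := lexp_coeff_pos H hA (abs_pos.mpr hα)
      rwa [huA] at this
    have lcB : 0 < (H.e |β|).coeff u := by
      have := lexp_coeff_pos H hB (abs_pos.mpr hβ)
      rwa [huB, ← heq] at this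
    obtain ⟨n1, hn1⟩ := exists_nat_gt ((H.e |α|).coeff u / (H.e |β|).coeff u)
    obtain ⟨n2, hn2⟩ := exists_nat_gt ((H.e |β|).coeff u / (H.e |α|).coeff u)
    have key : ∀ (x y : Γ) (hx : x ≠ 0) (hy : y ≠ 0) (n : ℕ),
        lexp H hx = u → lexp H hy = u →
        (H.e x).coeff u < n * (H.e y).coeff u → x ≤ n • y := by
      intro x y hx hy n hux huy hlt
      have : 0 < n • y - x := by
        apply pos_of_coeff H (u := u)
        · rw [map_sub, coeff_sub, coeff_e_nsmul]
          exact sub_pos.mpr hlt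
        · intro w hw
          rw [map_sub, coeff_sub, coeff_e_nsmul]
          have h3 : (H.e y).coeff w = 0 := by
            apply coeff_of_lt_lexp H hy
            rw [huy]; exact hw
          have h4 : (H.e x).coeff w = 0 := by
            apply coeff_of_lt_lexp H hx
            rw [hux]; exact hw
          rw [h3, h4, mul_zero, sub_zero]
      have := sub_pos.mp this
      exact this.le
    refine ⟨n1 + n2, ?_, ?_⟩
    · apply key |α| |β| hA hB (n1 + n2) (by rw [huA]) (by rw [huB, ← heq])
      have hlt1 : (H.e |α|).coeff u < n1 * (H.e |β|).coeff u := by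
        rw [div_lt_iff₀ lcB] at hn1
        linarith
      calc (H.e |α|).coeff u < n1 * (H.e |β|).coeff u := hlt1
        _ ≤ (↑(n1 + n2)) * (H.e |β|).coeff u := by
          apply mul_le_mul_of_nonneg_right _ lcB.le
          push_cast; linarith
    · apply key |β| |α| hB hA (n1 + n2) (by rw [huB, ← heq]) (by rw [huA])
      have hlt2 : (H.e |β|).coeff u < n2 * (H.e |α|).coeff u := by
        rw [div_lt_iff₀ lcA] at hn2
        linarith
      calc (H.e |β|).coeff u < n2 * (H.e |α|).coeff u := hlt2
        _ ≤ (↑(n1 + n2)) * (H.e |α|).coeff u := by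
          apply mul_le_mul_of_nonneg_right _ lcA.le
          push_cast; linarith

end HardyProof
noncomputable section HardyProofSection8

namespace HardyProof

open HahnSeries Set

variable {Φ : Type*} [LinearOrder Φ] {Γ : Type*} [AddCommGroup Γ] [LinearOrder Γ] [IsOrderedAddMonoid Γ]
  {k : Type*} [Field k] {H : HahnEmbeddingData Φ Γ}

theorem hd2 (ι : ℝ →+* k) (T : ThetaPack H) : HDtwo (D H ι T) := by
  intro a b ha hb hao hbo
  obtain ⟨hDa, hOa⟩ := D_order ι T ha hao
  obtain ⟨hDb, hOb⟩ := D_order ι T hb hbo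
  rw [← order_eq_orderTop_of_ne_zero ha, ← order_eq_orderTop_of_ne_zero hb,
    ← order_eq_orderTop_of_ne_zero hDa, ← order_eq_orderTop_of_ne_zero hDb, hOa, hOb,
    WithTop.coe_le_coe, WithTop.coe_le_coe]
  constructor
  · intro h
    rcases eq_or_lt_of_le h with heq | hlt
    · exact (sigma_congr T hao hbo heq).le
    · exact (sigma_lt T hao hbo hlt).le
  · intro h
    by_contra hc
    rw [not_le] at hc
    exact absurd h (not_le.mpr (sigma_lt T hbo hao hc))

theorem logder_orderTop (ι : ℝ →+* k) (T : ThetaPack H) {a : HahnSeries Γ k} (ha : a ≠ 0)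
    (hao : a.order ≠ 0) :
    (D H ι T a * a⁻¹).orderTop = (T.θ (lexp H hao) : WithTop Γ) := by
  obtain ⟨hDa, hOa⟩ := D_order ι T ha hao
  have hainv : a⁻¹ ≠ 0 := inv_ne_zero ha
  have hprod : D H ι T a * a⁻¹ ≠ 0 := mul_ne_zero hDa hainv
  rw [← order_eq_orderTop_of_ne_zero hprod, order_mul hDa hainv, hOa]
  have hinv : a⁻¹.order = -a.order := by
    have h1 : a * a⁻¹ = 1 := mul_inv_cancel₀ ha
    have h2 := order_mul ha hainv
    rw [h1, order_one] at h2
    exact eq_neg_of_add_eq_zero_right h2.symm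
  rw [hinv]
  have : a.order + T.θ (lexp H hao) + -a.order = T.θ (lexp H hao) := by abel
  rw [this]

theorem hd3 (ι : ℝ →+* k) (T : ThetaPack H) : HDthree (D H ι T) := by
  intro a b ha hb habs hbpos
  have hbo : b.order ≠ 0 := by
    intro h0
    rw [h0, abs_zero] at hbpos
    exact lt_irrefl 0 hbpos
  have hao : a.order ≠ 0 := by
    intro h0
    rw [h0, abs_zero] at habs
    exact absurd (hbpos.trans habs) (lt_irrefl 0)
  rw [logder_orderTop ι T ha hao, logder_orderTop ι T hb hbo]
  have hle : lexp H hao ≤ lexp H hbo := lexp_le_of_abs_lt H hao hbo habs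
  constructor
  · exact WithTop.coe_le_coe.mpr (T.mono.monotone hle)
  · rw [arch_iff H hao hbo]
    constructor
    · intro h
      exact T.mono.injective (WithTop.coe_inj.mp h)
    · intro h
      rw [h]

theorem hd1 (ι : ℝ →+* k) (T : ThetaPack H) : HDone (D H ι T) := by
  apply Set.ext
  intro x
  simp only [Set.mem_setOf_eq]
  constructor
  · intro hx
    refine ⟨single 0 (x.coeff 0), x - single 0 (x.coeff 0), D_const ι T _, ?_, by abel⟩
    set m := x - single 0 (x.coeff 0) with hm
    by_cases hm0 : m = 0
    · rw [hm0, orderTop_zero]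
      rw [← WithTop.coe_zero]
      exact WithTop.coe_lt_top 0
    · have hmzero : m.coeff 0 = 0 := by
        rw [hm, coeff_sub, coeff_single_same, sub_self]
      have hordne : m.order ≠ 0 := by
        intro h0
        have := (mt coeff_order_eq_zero.mp hm0)
        rw [h0, hmzero] at this
        exact this rfl
      have hcoeffm : m.coeff m.order = x.coeff m.order := by
        rw [hm, coeff_sub, coeff_single_of_ne hordne, sub_zero]
      have hxcoeff : x.coeff m.order ≠ 0 := by
        rw [← hcoeffm]
        exact (mt coeff_order_eq_zero.mp hm0)
      have h1 : x.orderTop ≤ (m.order : WithTop Γ) := orderTop_le_of_coeff_ne_zero hxcoeff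
      have h2 : (0 : WithTop Γ) ≤ (m.order : WithTop Γ) := hx.trans h1
      rw [← WithTop.coe_zero, WithTop.coe_le_coe] at h2
      have h3 : 0 < m.order := h2.lt_of_ne (Ne.symm hordne)
      rw [← order_eq_orderTop_of_ne_zero hm0, ← WithTop.coe_zero, WithTop.coe_lt_coe]
      exact h3
  · rintro ⟨c, m, hc, hm, rfl⟩
    have hsupp := (D_eq_zero_iff ι T c).mp hc
    have hcot : (0 : WithTop Γ) ≤ c.orderTop := by
      by_cases hc0 : c = 0
      · rw [hc0, orderTop_zero]
        exact le_top
      · rw [← order_eq_orderTop_of_ne_zero hc0, ← WithTop.coe_zero, WithTop.coe_le_coe]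
        have : c.order ∈ c.support := by
          rw [mem_support]
          exact (mt coeff_order_eq_zero.mp hc0)
        have := hsupp this
        rw [Set.mem_singleton_iff] at this
        rw [this]
    calc (0 : WithTop Γ) ≤ min c.orderTop m.orderTop := le_min hcot hm.le
      _ ≤ (c + m).orderTop := min_orderTop_le_orderTop_add

theorem smul_single_one (r : k) (γ : Γ) :
    r • (single γ (1 : k)) = single γ r := by
  ext δ
  rw [coeff_smul, coeff_single, coeff_single]
  split_ifs
  · rw [smul_eq_mul, mul_one]
  · rw [smul_zero]

theorem isSeriesDerivation (ι : ℝ →+* k) (T : ThetaPack H) :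
    IsSeriesDerivation H ι (D H ι T) := by
  constructor
  · exact D_add ι T
  · exact D_mul ι T
  · intro x
    exact ⟨linFam H ι T x, fun γ => rfl, D_eq_linFam_hsum ι T x⟩
  · intro γ
    refine ⟨Dfam H ι T (single γ (1 : k)), ?_, rfl⟩
    intro φ
    rw [logDer_eq ι T φ, Dfam_single_apply, one_mul, single_mul_single, mul_one,
      smul_single_one]

theorem isHardy (ι : ℝ →+* k) (T : ThetaPack H) :
    IsHardySeriesDerivation H ι (D H ι T) :=
  ⟨isSeriesDerivation ι T, hd1 ι T, hd2 ι T, hd3 ι T⟩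

end HardyProof
noncomputable section HardyProofSection9

namespace HardyProof

open HahnSeries Set

variable {Φ : Type*} [LinearOrder Φ] {Γ : Type*} [AddCommGroup Γ] [LinearOrder Γ] [IsOrderedAddMonoid Γ]

theorem exists_thetaPack (H : HahnEmbeddingData Φ Γ)
    (hΦ : ∃ f : Φ → ℝ, StrictMono f)
    (hribs : ∀ (φ : Φ) (x : ℝ), x ≠ 0 →
      ∃ γ : Γ, (H.e γ).coeff φ = x ∧ ∀ ψ, ψ < φ → (H.e γ).coeff ψ = 0) :
    Nonempty (ThetaPack H) := by
  classical
  obtain ⟨f, hf⟩ := hΦ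
  by_cases hne : Nonempty Φ
  swap
  · exact ⟨⟨fun _ => 0, fun {φ ψ} _ => absurd ⟨φ⟩ hne⟩⟩
  obtain ⟨φ0⟩ := hne
  -- a countable "order-dense from above" family
  let pick : ℚ × ℚ → Φ := fun pr =>
    if h : ∃ z : Φ, (f z) ∈ Set.Ioo (pr.1 : ℝ) (pr.2 : ℝ) then h.choose else φ0
  let q : ℕ → Φ := fun n => pick ((Denumerable.eqv (ℚ × ℚ)).symm n)
  have hq : ∀ x : Φ, (∃ y, x < y) → ∃ n, x < q n := by
    rintro x ⟨y, hxy⟩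
    have hfxy : f x < f y := hf hxy
    obtain ⟨p, hp1, hp2⟩ := exists_rat_btwn hfxy
    obtain ⟨r, hr⟩ := exists_rat_gt (f y)
    have hex : ∃ z : Φ, f z ∈ Set.Ioo (p : ℝ) (r : ℝ) := ⟨y, hp2, hr⟩
    refine ⟨Denumerable.eqv (ℚ × ℚ) (p, r), ?_⟩
    have h1 : q (Denumerable.eqv (ℚ × ℚ) (p, r)) = pick (p, r) := by
      simp only [q, Equiv.symm_apply_apply]
    have h2 : pick (p, r) = hex.choose := dif_pos hex
    have hspec := hex.choose_spec
    rw [h1, h2]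
    exact hf.lt_iff_lt.mp (hp1.trans hspec.1)
  -- a monotone strictly-expanding map
  let g : Φ → Φ := fun x => if h : ∃ n, x < q n then q (Nat.find h) else x
  have hg_gt : ∀ (x : Φ) (h : ∃ n, x < q n), x < g x := by
    intro x h
    have hgx : g x = q (Nat.find h) := dif_pos h
    rw [hgx]
    exact Nat.find_spec h
  have hg_mono : ∀ x y : Φ, x ≤ y → (∃ n, y < q n) → g x ≤ g y := by
    intro x y hxy hy
    have hx : ∃ n, x < q n := ⟨hy.choose, lt_of_le_of_lt hxy hy.choose_spec⟩
    have hgx : g x = q (Nat.find hx) := dif_pos hx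
    have hgy : g y = q (Nat.find hy) := dif_pos hy
    have hfind : Nat.find hx ≤ Nat.find hy := by
      apply Nat.find_mono
      intro n hn
      exact lt_of_le_of_lt hxy hn
    rcases eq_or_lt_of_le hfind with heq | hlt
    · rw [hgx, hgy, heq]
    · have h1 : ¬ y < q (Nat.find hx) := Nat.find_min hy hlt
      rw [hgx, hgy]
      exact (not_lt.mp h1).trans (Nat.find_spec hy).le
  -- the elements ζ φ
  have hcpos : ∀ x : Φ, Real.exp (-f x) ≠ 0 := fun x => ne_of_gt (Real.exp_pos _)
  let ζ : Φ → Γ := fun x => if h : ∃ n, x < q n then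
      (hribs (g x) (Real.exp (-f x)) (hcpos x)).choose else 0
  have hζspec : ∀ (x : Φ), (∃ n, x < q n) →
      (H.e (ζ x)).coeff (g x) = Real.exp (-f x) ∧
        ∀ ψ, ψ < g x → (H.e (ζ x)).coeff ψ = 0 := by
    intro x h
    have hζx : ζ x = (hribs (g x) (Real.exp (-f x)) (hcpos x)).choose := dif_pos h
    rw [hζx]
    exact (hribs (g x) (Real.exp (-f x)) (hcpos x)).choose_spec
  refine ⟨⟨fun x => -ζ x, ?_⟩⟩
  intro φ ψ hφψ
  have hφ : ∃ n, φ < q n := hq φ ⟨ψ, hφψ⟩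
  have hdiff : -ζ ψ - -ζ φ = ζ φ - ζ ψ := by abel
  obtain ⟨hζφ1, hζφ2⟩ := hζspec φ hφ
  by_cases hψ : ∃ n, ψ < q n
  · obtain ⟨hζψ1, hζψ2⟩ := hζspec ψ hψ
    have hgle : g φ ≤ g ψ := hg_mono φ ψ hφψ.le hψ
    refine ⟨g φ, hg_gt φ hφ, ?_, ?_⟩
    · rw [hdiff, map_sub, coeff_sub, hζφ1]
      rcases eq_or_lt_of_le hgle with heq | hlt
      · rw [← heq] at hζψ1
        rw [hζψ1]
        have : -f ψ < -f φ := neg_lt_neg (hf hφψ)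
        have := Real.exp_lt_exp.mpr this
        exact sub_pos.mpr this
      · rw [hζψ2 (g φ) hlt, sub_zero]
        exact Real.exp_pos _
    · intro w hw
      rw [hdiff, map_sub, coeff_sub, hζφ2 w hw, hζψ2 w (lt_of_lt_of_le hw hgle), sub_zero]
  · have hζψ0 : ζ ψ = 0 := dif_neg hψ
    refine ⟨g φ, hg_gt φ hφ, ?_, ?_⟩
    · rw [hdiff, hζψ0, sub_zero, hζφ1]
      exact Real.exp_pos _
    · intro w hw
      rw [hdiff, hζψ0, sub_zero, hζφ2 w hw]

end HardyProof

/-- if `Φ` is order isomorphic to a subset of `ℝ` and all the ribs of `Γ` are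
equal to `ℝ` (every real number occurs as leading coefficient of an element of `Γ` at every
`φ ∈ Φ`), then `k((Γ))` carries a series derivation of Hardy type whose logarithmic
derivatives `d(t_φ)/t_φ` are monomials `c_φ t^{θ_φ}`. -/
theorem subset_of_reals_hardy_derivation {Φ : Type*} [LinearOrder Φ]
    {Γ : Type*} [AddCommGroup Γ] [LinearOrder Γ] [IsOrderedAddMonoid Γ] {k : Type*} [Field k]
    (H : HahnEmbeddingData Φ Γ) (ι : ℝ →+* k)
    (hΦ : ∃ f : Φ → ℝ, StrictMono f)
    (hribs : ∀ (φ : Φ) (x : ℝ), x ≠ 0 →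
      ∃ γ : Γ, (H.e γ).coeff φ = x ∧ ∀ ψ, ψ < φ → (H.e γ).coeff ψ = 0) :
    ∃ D : HahnSeries Γ k → HahnSeries Γ k,
      IsHardySeriesDerivation H ι D ∧
      ∀ φ : Φ, ∃ (c : k) (θ : Γ), c ≠ 0 ∧ logDer H D φ = HahnSeries.single θ c := by
  obtain ⟨T⟩ := HardyProof.exists_thetaPack H hΦ hribs
  exact ⟨HardyProof.D H ι T, HardyProof.isHardy ι T,
    fun φ => ⟨1, T.θ φ, one_ne_zero, HardyProof.logDer_eq ι T φ⟩⟩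
end HardyProofSection9
end HardyProofSection8
end HardyProofSection7
end HardyProofSection6
end HardyProofSection5
end HardyProofSection4
end HardyProofSection3
end HardyProofSection2
end HardyProofSection
end

section
/- Let k((Γ)) be endowed with a series derivation of Hardy type d, with Γ a subgroup of the Hahn group Σ_{φ∈Φ} ℝ, and set θ_φ := v(d(t_φ)/t_φ). Then for every b ∈ k((Γ))∖{0} with v(b) ≠ 0 one has v(d(b)/b) = v(d(t^β)/t^β) = θ_φ, where β = v(b) and φ = v_Γ(β); consequently {v(d(b)/b) : b ≠ 0, v(b) ≠ 0} = {θ_φ : φ ∈ Φ}. -/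
/- Common setting: a generalized series field `k((Γ))`, where the totally ordered abelian
group `Γ` is regarded, via Hahn's embedding theorem, as a subgroup of the Hahn group
`Σ_{φ ∈ Φ} ℝ = HahnSeries Φ ℝ`, and the coefficient field `k` contains the real exponents
(via a ring homomorphism `ι : ℝ →+* k`). -/

open HahnSeries

section Aux
open HahnSeries
variable {Γ : Type*} [AddCommGroup Γ] [LinearOrder Γ] [IsOrderedAddMonoid Γ] {k : Type*} [Field k]

lemma aux_orderTop_eq_of {x : HahnSeries Γ k} {γ : Γ} (h1 : x.coeff γ ≠ 0)
    (h2 : ∀ δ, δ < γ → x.coeff δ = 0) : x.orderTop = γ := by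
  have hx : x ≠ 0 := ne_zero_of_coeff_ne_zero h1
  rw [← HahnSeries.order_eq_orderTop_of_ne_zero hx, WithTop.coe_eq_coe]
  have h3 : x.order ≤ γ := HahnSeries.order_le_of_coeff_ne_zero h1
  rcases h3.lt_or_eq with h | h
  · exact absurd (h2 _ h) (mt HahnSeries.coeff_order_eq_zero.mp hx)
  · exact h

lemma aux_order_inv {b : HahnSeries Γ k} (hb : b ≠ 0) : b⁻¹.order = -b.order := by
  have h2 : b.order + b⁻¹.order = 0 := by
    rw [← HahnSeries.order_mul hb (inv_ne_zero hb), mul_inv_cancel₀ hb, HahnSeries.order_one]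
  exact (neg_eq_of_add_eq_zero_right h2).symm

lemma aux_mulInv_orderTop {x b : HahnSeries Γ k} (hx : x ≠ 0) (hb : b ≠ 0) :
    (x * b⁻¹).orderTop = ((x.order - b.order : Γ) : WithTop Γ) := by
  have h : x * b⁻¹ ≠ 0 := mul_ne_zero hx (inv_ne_zero hb)
  rw [← HahnSeries.order_eq_orderTop_of_ne_zero h, WithTop.coe_eq_coe,
    HahnSeries.order_mul hx (inv_ne_zero hb), aux_order_inv hb, sub_eq_add_neg]

variable {Φ : Type*} [LinearOrder Φ]

lemma aux_b_pos (H : HahnEmbeddingData Φ Γ) (φ : Φ) : 0 < H.b φ := by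
  rw [H.ord]
  exact ⟨φ, by rw [H.hb]; simp, fun ψ hψ => by rw [H.hb, HahnSeries.coeff_single_of_ne hψ.ne]⟩

lemma aux_b_lt (H : HahnEmbeddingData Φ Γ) {φ₁ φ₂ : Φ} (h : φ₁ < φ₂) : H.b φ₂ < H.b φ₁ := by
  rw [← sub_pos, H.ord]
  refine ⟨φ₁, ?_, fun ψ hψ => ?_⟩
  · rw [map_sub, HahnSeries.coeff_sub, H.hb, H.hb, HahnSeries.coeff_single_same,
      HahnSeries.coeff_single_of_ne h.ne]
    norm_num
  · rw [map_sub, HahnSeries.coeff_sub, H.hb, H.hb, HahnSeries.coeff_single_of_ne hψ.ne,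
      HahnSeries.coeff_single_of_ne (hψ.trans h).ne, sub_zero]

lemma aux_not_arch (H : HahnEmbeddingData Φ Γ) {φ₁ φ₂ : Φ} (h : φ₁ < φ₂) :
    ¬ ArchEquiv (H.b φ₁) (H.b φ₂) := by
  rintro ⟨n, h1, _⟩
  rw [abs_of_pos (aux_b_pos H φ₁), abs_of_pos (aux_b_pos H φ₂)] at h1
  have hgt : 0 < H.b φ₁ - n • H.b φ₂ := by
    rw [H.ord]
    refine ⟨φ₁, ?_, fun ψ hψ => ?_⟩
    · rw [map_sub, map_nsmul, HahnSeries.coeff_sub, H.hb, H.hb,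
        HahnSeries.coeff_single_same]
      have : ((n • HahnSeries.single φ₂ (1:ℝ)).coeff) φ₁ = n • ((HahnSeries.single φ₂ (1:ℝ)).coeff φ₁) := by
        rw [HahnSeries.coeff_nsmul]; rfl
      rw [this, HahnSeries.coeff_single_of_ne h.ne]
      norm_num
    · rw [map_sub, map_nsmul, HahnSeries.coeff_sub, H.hb, H.hb,
        HahnSeries.coeff_single_of_ne hψ.ne]
      have : ((n • HahnSeries.single φ₂ (1:ℝ)).coeff) ψ = n • ((HahnSeries.single φ₂ (1:ℝ)).coeff ψ) := by
        rw [HahnSeries.coeff_nsmul]; rfl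
      rw [this, HahnSeries.coeff_single_of_ne (hψ.trans h).ne]
      norm_num
  rw [sub_pos] at hgt
  exact absurd h1 (not_le.mpr hgt)

lemma aux_theta_mono {H : HahnEmbeddingData Φ Γ} {ι : ℝ →+* k}
    {D : HahnSeries Γ k → HahnSeries Γ k} (hD : IsHardySeriesDerivation H ι D)
    {θ : Φ → Γ} (hθ : ∀ φ, (logDer H D φ).orderTop = ((θ φ : Γ) : WithTop Γ))
    {φ₁ φ₂ : Φ} (h : φ₁ < φ₂) : θ φ₁ < θ φ₂ := by
  have hm1 : tmon H k φ₁ ≠ 0 := HahnSeries.single_ne_zero one_ne_zero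
  have hm2 : tmon H k φ₂ ≠ 0 := HahnSeries.single_ne_zero one_ne_zero
  have ho1 : (tmon H k φ₁).order = H.b φ₁ := HahnSeries.order_single one_ne_zero
  have ho2 : (tmon H k φ₂).order = H.b φ₂ := HahnSeries.order_single one_ne_zero
  have habs : |(tmon H k φ₂).order| < |(tmon H k φ₁).order| := by
    rw [ho1, ho2, abs_of_pos (aux_b_pos H φ₁), abs_of_pos (aux_b_pos H φ₂)]
    exact aux_b_lt H h
  have hpos : 0 < |(tmon H k φ₂).order| := by
    rw [ho2, abs_of_pos (aux_b_pos H φ₂)]; exact aux_b_pos H φ₂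
  obtain ⟨hle, hiff⟩ := hD.2.2.2 (tmon H k φ₁) (tmon H k φ₂) hm1 hm2 habs hpos
  have hne : (D (tmon H k φ₁) * (tmon H k φ₁)⁻¹).orderTop ≠
      (D (tmon H k φ₂) * (tmon H k φ₂)⁻¹).orderTop := by
    rw [Ne, hiff, ho1, ho2]
    exact aux_not_arch H h
  have hlt := lt_of_le_of_ne hle hne
  rw [show D (tmon H k φ₁) * (tmon H k φ₁)⁻¹ = logDer H D φ₁ from rfl,
    show D (tmon H k φ₂) * (tmon H k φ₂)⁻¹ = logDer H D φ₂ from rfl, hθ, hθ,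
    WithTop.coe_lt_coe] at hlt
  exact hlt

lemma aux_D_single_orderTop {H : HahnEmbeddingData Φ Γ} {ι : ℝ →+* k}
    {D : HahnSeries Γ k → HahnSeries Γ k} (hD : IsHardySeriesDerivation H ι D)
    {θ : Φ → Γ} (hθ : ∀ φ, (logDer H D φ).orderTop = ((θ φ : Γ) : WithTop Γ))
    {β : Γ} {φ : Φ} (hβφ : (H.e β).orderTop = ((φ : Φ) : WithTop Φ)) :
    (D (HahnSeries.single β (1 : k))).orderTop = ((θ φ + β : Γ) : WithTop Γ) := by
  obtain ⟨s, hs, hDs⟩ := hD.1.strong_leibniz β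
  have hι : Function.Injective ι := ι.injective
  have hcφ : (H.e β).coeff φ ≠ 0 := HahnSeries.coeff_orderTop_ne hβφ
  have key : ∀ (φ' : Φ) (δ : Γ),
      (s φ').coeff (δ + β) = ι ((H.e β).coeff φ') * (logDer H D φ').coeff δ := by
    intro φ' δ
    rw [hs φ', HahnSeries.coeff_smul, HahnSeries.coeff_single_mul_add, one_mul, smul_eq_mul]
  have hmono : ∀ φ' : Φ, (H.e β).coeff φ' ≠ 0 → θ φ ≤ θ φ' := by
    intro φ' hc'
    have hle : ((φ : Φ) : WithTop Φ) ≤ φ' := hβφ ▸ HahnSeries.orderTop_le_of_coeff_ne_zero hc'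
    rcases (WithTop.coe_le_coe.mp hle).lt_or_eq with hlt | heq
    · exact (aux_theta_mono hD hθ hlt).le
    · rw [heq]
  rw [hDs]
  apply aux_orderTop_eq_of
  · rw [HahnSeries.SummableFamily.coeff_hsum]
    rw [finsum_eq_single _ φ]
    · rw [key]
      exact mul_ne_zero (fun hz => hcφ (hι (by rw [hz, map_zero])))
        (HahnSeries.coeff_orderTop_ne (hθ φ))
    · intro φ' hφ'
      rw [key]
      by_cases hc' : (H.e β).coeff φ' = 0
      · rw [hc', map_zero, zero_mul]
      · have hle : ((φ : Φ) : WithTop Φ) ≤ φ' := hβφ ▸ HahnSeries.orderTop_le_of_coeff_ne_zero hc'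
        have hlt : φ < φ' := lt_of_le_of_ne (WithTop.coe_le_coe.mp hle) (Ne.symm hφ')
        have : (logDer H D φ').coeff (θ φ) = 0 := by
          apply HahnSeries.coeff_eq_zero_of_lt_orderTop
          rw [hθ φ']
          exact WithTop.coe_lt_coe.mpr (aux_theta_mono hD hθ hlt)
        rw [this, mul_zero]
  · intro δ hδ
    rw [HahnSeries.SummableFamily.coeff_hsum]
    apply finsum_eq_zero_of_forall_eq_zero
    intro φ'
    have hδ' : δ - β + β = δ := sub_add_cancel δ β
    rw [← hδ', key]
    by_cases hc' : (H.e β).coeff φ' = 0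
    · rw [hc', map_zero, zero_mul]
    · have : (logDer H D φ').coeff (δ - β) = 0 := by
        apply HahnSeries.coeff_eq_zero_of_lt_orderTop
        rw [hθ φ']
        refine lt_of_lt_of_le (WithTop.coe_lt_coe.mpr ?_) (WithTop.coe_le_coe.mpr (hmono φ' hc'))
        rw [sub_lt_iff_lt_add]
        exact hδ
      rw [this, mul_zero]

end Aux

/-- for a series derivation of Hardy type on `k((Γ))`, the value of the
logarithmic derivative `v(d(b)/b)` of any `b ≠ 0` with `v(b) ≠ 0` equals
`v(d(t^β)/t^β) = θ_φ`, where `β = v(b)` and `φ = v_Γ(β)`; consequently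
`{v(d(b)/b) : b ≠ 0, v(b) ≠ 0} = {θ_φ : φ ∈ Φ}`. -/
theorem logder_values {Φ : Type*} [LinearOrder Φ]
    {Γ : Type*} [AddCommGroup Γ] [LinearOrder Γ] [IsOrderedAddMonoid Γ] {k : Type*} [Field k]
    (H : HahnEmbeddingData Φ Γ) (ι : ℝ →+* k)
    (D : HahnSeries Γ k → HahnSeries Γ k) (hD : IsHardySeriesDerivation H ι D)
    (θ : Φ → Γ) (hθ : ∀ φ, (logDer H D φ).orderTop = ((θ φ : Γ) : WithTop Γ)) :
    (∀ b : HahnSeries Γ k, b ≠ 0 → b.order ≠ 0 → ∀ φ : Φ,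
      (H.e b.order).orderTop = ((φ : Φ) : WithTop Φ) →
      (D b * b⁻¹).orderTop =
          (D (HahnSeries.single b.order (1 : k)) *
            (HahnSeries.single b.order (1 : k))⁻¹).orderTop ∧
      (D b * b⁻¹).orderTop = ((θ φ : Γ) : WithTop Γ)) ∧
    {g : WithTop Γ | ∃ b : HahnSeries Γ k, b ≠ 0 ∧ b.order ≠ 0 ∧ g = (D b * b⁻¹).orderTop} =
      {g : WithTop Γ | ∃ φ : Φ, g = ((θ φ : Γ) : WithTop Γ)} := by
  have hd2 := hD.2.2.1
  have main : ∀ b : HahnSeries Γ k, b ≠ 0 → b.order ≠ 0 → ∀ φ : Φ,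
      (H.e b.order).orderTop = ((φ : Φ) : WithTop Φ) →
      (D b * b⁻¹).orderTop =
          (D (HahnSeries.single b.order (1 : k)) *
            (HahnSeries.single b.order (1 : k))⁻¹).orderTop ∧
      (D b * b⁻¹).orderTop = ((θ φ : Γ) : WithTop Γ) := by
    intro b hb hbo φ hφ
    have hm : (HahnSeries.single b.order (1 : k)) ≠ 0 := HahnSeries.single_ne_zero one_ne_zero
    have hmo : (HahnSeries.single b.order (1 : k)).order = b.order :=
      HahnSeries.order_single one_ne_zero
    have hDm : (D (HahnSeries.single b.order (1 : k))).orderTop =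
        ((θ φ + b.order : Γ) : WithTop Γ) := aux_D_single_orderTop hD hθ hφ
    have hDmne : D (HahnSeries.single b.order (1 : k)) ≠ 0 := by
      intro h
      rw [h, HahnSeries.orderTop_zero] at hDm
      exact WithTop.top_ne_coe hDm
    have hbtop : b.orderTop = ((b.order : Γ) : WithTop Γ) :=
      (HahnSeries.order_eq_orderTop_of_ne_zero hb).symm
    have hmtop : (HahnSeries.single b.order (1 : k)).orderTop = ((b.order : Γ) : WithTop Γ) := by
      rw [← HahnSeries.order_eq_orderTop_of_ne_zero hm, hmo]
    have h1 := (hd2 b _ hb hm hbo (hmo.symm ▸ hbo)).mp (le_of_eq (hbtop.trans hmtop.symm))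
    have h2 := (hd2 _ b hm hb (hmo.symm ▸ hbo) hbo).mp (le_of_eq (hmtop.trans hbtop.symm))
    have heq : (D b).orderTop = (D (HahnSeries.single b.order (1 : k))).orderTop :=
      le_antisymm h1 h2
    have hDbne : D b ≠ 0 := by
      intro h
      rw [h, HahnSeries.orderTop_zero] at heq
      rw [← heq] at hDm
      exact WithTop.top_ne_coe hDm
    have hordeq : (D b).order = (D (HahnSeries.single b.order (1 : k))).order := by
      rw [← HahnSeries.order_eq_orderTop_of_ne_zero hDbne,
        ← HahnSeries.order_eq_orderTop_of_ne_zero hDmne, WithTop.coe_eq_coe] at heq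
      exact heq
    have hDmord : (D (HahnSeries.single b.order (1 : k))).order = θ φ + b.order := by
      rw [← HahnSeries.order_eq_orderTop_of_ne_zero hDmne, WithTop.coe_eq_coe] at hDm
      exact hDm
    constructor
    · rw [aux_mulInv_orderTop hDbne hb, aux_mulInv_orderTop hDmne hm, hordeq, hmo]
    · rw [aux_mulInv_orderTop hDbne hb, hordeq, hDmord, add_sub_cancel_right]
  refine ⟨main, ?_⟩
  ext g
  simp only [Set.mem_setOf_eq]
  constructor
  · rintro ⟨b, hb, hbo, rfl⟩
    have heβ : H.e b.order ≠ 0 := fun h => hbo (H.inj (h.trans (map_zero H.e).symm))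
    have hne : (H.e b.order).orderTop ≠ ⊤ := fun h => heβ (HahnSeries.orderTop_eq_top.mp h)
    obtain ⟨φ, hφ⟩ := WithTop.ne_top_iff_exists.mp hne
    exact ⟨φ, (main b hb hbo φ hφ.symm).2⟩
  · rintro ⟨φ, rfl⟩
    have hbne : (HahnSeries.single (H.b φ) (1 : k)) ≠ 0 := HahnSeries.single_ne_zero one_ne_zero
    have horder : (HahnSeries.single (H.b φ) (1 : k)).order = H.b φ :=
      HahnSeries.order_single one_ne_zero
    have hbo : (HahnSeries.single (H.b φ) (1 : k)).order ≠ 0 := by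
      rw [horder]; exact (aux_b_pos H φ).ne'
    have hφ : (H.e (HahnSeries.single (H.b φ) (1 : k)).order).orderTop = ((φ : Φ) : WithTop Φ) := by
      rw [horder, H.hb]
      exact HahnSeries.orderTop_single one_ne_zero
    exact ⟨_, hbne, hbo, ((main _ hbne hbo φ hφ).2).symm⟩
end
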